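/- arXiv:2103.00340 — 7 statements merged into one kernel-verified Lean document; each statement's English description precedes it below -/
import Mathlib

section
/- Let θ be a maximal monotone graph in ℝ×ℝ with 0 ∈ θ(0), and suppose r_θ := sup D(θ) < +∞ (the domain of θ is bounded above). Then for every λ > 0 and every r > r_θ + (1/λ)·θ⁰(r_θ), the Yosida approximation satisfies θ_λ(r) = λ(r − r_θ). -/
/-- A monotone graph in ℝ × ℝ, viewed as a set-valued map. -/
def MonotoneGraph (θ : ℝ → Set ℝ) : Prop :=
  ∀ ⦃x y u v : ℝ⦄, u ∈ θ x → v ∈ θ y → 0 ≤ (u - v) * (x - y)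

/-- A maximal monotone graph in ℝ × ℝ. -/
def MaximalMonotoneGraph (θ : ℝ → Set ℝ) : Prop :=
  MonotoneGraph θ ∧
    ∀ θ' : ℝ → Set ℝ, MonotoneGraph θ' → (∀ x, θ x ⊆ θ' x) → ∀ x, θ' x = θ x

/-- If `θ` is a maximal monotone graph with `0 ∈ θ 0` whose domain is bounded above with
supremum `rθ`, and `θ0` is the minimal-absolute-value element of `θ rθ`, then for `λ > 0`
and `r > rθ + (1/λ) θ0`, the Yosida approximation `θ_λ(r) = λ (r - J_λ r)` equals
`λ (r - rθ)` (here `J_λ r = s` means `r ∈ s + (1/λ) θ(s)`). -/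
theorem stmt0 (θ : ℝ → Set ℝ) (hθ : MaximalMonotoneGraph θ)
    (h0 : (0 : ℝ) ∈ θ 0)
    (hbdd : BddAbove {s : ℝ | (θ s).Nonempty})
    (rθ : ℝ) (hrθ : rθ = sSup {s : ℝ | (θ s).Nonempty})
    (θ0 : ℝ) (hθ0mem : θ0 ∈ θ rθ) (hθ0min : ∀ v ∈ θ rθ, |θ0| ≤ |v|)
    (lam : ℝ) (hlam : 0 < lam) (r : ℝ) (hr : rθ + (1 / lam) * θ0 < r) :
    (∃ s v : ℝ, v ∈ θ s ∧ r = s + (1 / lam) * v) ∧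
      ∀ s v : ℝ, v ∈ θ s → r = s + (1 / lam) * v →
        lam * (r - s) = lam * (r - rθ) := by
  -- every point of the domain is ≤ rθ
  have hdom : ∀ x : ℝ, (θ x).Nonempty → x ≤ rθ := by
    intro x hx
    rw [hrθ]
    exact le_csSup hbdd hx
  -- values at points strictly below rθ are ≤ θ0
  have hle : ∀ x u : ℝ, u ∈ θ x → x < rθ → u ≤ θ0 := by
    intro x u hu hx
    have := hθ.1 hθ0mem hu
    nlinarith
  set v : ℝ := lam * (r - rθ) with hv
  have hvθ0 : θ0 < v := by
    have h1 : θ0 < lam * (r - rθ) := by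
      have := (mul_lt_mul_iff_right₀ hlam).2 hr
      field_simp at this ⊢
      nlinarith
    simpa [hv] using h1
  -- maximality : v ∈ θ rθ
  have hvmem : v ∈ θ rθ := by
    set θ' : ℝ → Set ℝ := fun x => if x = rθ then insert v (θ x) else θ x with hθ'
    have hmono : MonotoneGraph θ' := by
      intro x y a b ha hb
      have hxd : x = rθ ∨ a ∈ θ x := by
        by_cases hx : x = rθ
        · exact Or.inl hx
        · right; simpa [hθ', hx] using ha
      have hyd : y = rθ ∨ b ∈ θ y := by
        by_cases hy : y = rθ
        · exact Or.inl hy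
        · right; simpa [hθ', hy] using hb
      -- helper: if a ∈ θ' x then a ∈ θ x or (x = rθ ∧ a = v)
      have hcase : ∀ x a : ℝ, a ∈ θ' x → a ∈ θ x ∨ (x = rθ ∧ a = v) := by
        intro x a ha
        by_cases hx : x = rθ
        · subst hx
          simp only [hθ', if_pos rfl, Set.mem_insert_iff] at ha
          rcases ha with h | h
          · exact Or.inr ⟨rfl, h⟩
          · exact Or.inl h
        · left; simpa [hθ', hx] using ha
      rcases hcase x a ha with ha' | ⟨hx, hav⟩
      · rcases hcase y b hb with hb' | ⟨hy, hbv⟩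
        · exact hθ.1 ha' hb'
        · subst hy; subst hbv
          rcases lt_or_eq_of_le (hdom x ⟨a, ha'⟩) with hlt | heq
          · have := hle x a ha' hlt
            nlinarith
          · rw [heq]; ring_nf; nlinarith [sq_nonneg (a - v)]
      · subst hx; subst hav
        rcases hcase y b hb with hb' | ⟨hy, hbv⟩
        · rcases lt_or_eq_of_le (hdom y ⟨b, hb'⟩) with hlt | heq
          · have := hle y b hb' hlt
            nlinarith
          · rw [heq]; ring_nf; nlinarith
        · subst hy; subst hbv; ring_nf; nlinarith
    have hsub : ∀ x, θ x ⊆ θ' x := by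
      intro x a ha
      by_cases hx : x = rθ
      · subst hx; simp only [hθ', if_pos rfl]; exact Set.mem_insert_of_mem _ ha
      · simpa [hθ', hx] using ha
    have := hθ.2 θ' hmono hsub rθ
    rw [← this]
    simp [hθ']
  constructor
  · refine ⟨rθ, v, hvmem, ?_⟩
    field_simp [hv]
    rw [hv]; ring
  · intro s u hu hrsu
    rcases lt_or_eq_of_le (hdom s ⟨u, hu⟩) with hlt | heq
    · exfalso
      have h1 : u ≤ θ0 := hle s u hu hlt
      -- u = lam * (r - s) > lam * (r - rθ) = v > θ0, contradiction
      have h2 : u = lam * (r - s) := by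
        field_simp at hrsu
        nlinarith
      nlinarith
    · rw [heq]
end

section
/- Integration by parts formula: Let [X,d,m] be a metric random walk space with reversible measure ν, let Ω ⊂ X, and let a_p satisfy the antisymmetry a_p(x,y,r) = −a_p(y,x,−r). If u is ν-measurable with (x,y) ↦ a_p(x,y,u(y)−u(x)) ∈ L^q(Ω×Ω, ν⊗m_x) and w ∈ L^{q'}(Ω,ν), then −∫_Ω ∫_Ω a_p(x,y,u(y)−u(x)) dm_x(y) w(x) dν(x) = (1/2) ∫_{Ω×Ω} a_p(x,y,u(y)−u(x))(w(y)−w(x)) d(ν⊗m_x)(x,y). -/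
open MeasureTheory
open scoped ENNReal

section Aux

open ProbabilityTheory Function

variable {X : Type*} [MeasurableSpace X]

private lemma aux_double_int_eq (m : X → Measure X)
    (hprob : ∀ x, IsProbabilityMeasure (m x)) (hmeas : Measurable m)
    (ν : Measure X)
    (g : X → X → ℝ) (hg : Measurable (Function.uncurry g))
    (hfin : ∫⁻ x, ∫⁻ y, (‖g x y‖₊ : ℝ≥0∞) ∂(m x) ∂ν ≠ ⊤) :
    ∫ x, ∫ y, g x y ∂(m x) ∂ν
      = (∫⁻ x, ∫⁻ y, ENNReal.ofReal (g x y) ∂(m x) ∂ν).toReal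
        - (∫⁻ x, ∫⁻ y, ENNReal.ofReal (-(g x y)) ∂(m x) ∂ν).toReal := by
  set κ : Kernel X X := ⟨m, hmeas⟩ with hκ
  haveI : IsMarkovKernel κ := ⟨hprob⟩
  have hκa : ∀ x, κ x = m x := fun _ => rfl
  have hgn : Measurable (Function.uncurry fun x y => (‖g x y‖₊ : ℝ≥0∞)) := hg.enorm
  have hMn : Measurable fun x => ∫⁻ y, (‖g x y‖₊ : ℝ≥0∞) ∂(m x) := by
    simp_rw [← hκa]; exact Measurable.lintegral_kernel_prod_right hgn
  have hP : Measurable fun x => ∫⁻ y, ENNReal.ofReal (g x y) ∂(m x) := by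
    simp_rw [← hκa]
    exact Measurable.lintegral_kernel_prod_right (ENNReal.measurable_ofReal.comp hg)
  have hN : Measurable fun x => ∫⁻ y, ENNReal.ofReal (-(g x y)) ∂(m x) := by
    simp_rw [← hκa]
    exact Measurable.lintegral_kernel_prod_right (ENNReal.measurable_ofReal.comp hg.neg)
  have hPle : ∀ x, (∫⁻ y, ENNReal.ofReal (g x y) ∂(m x)) ≤ ∫⁻ y, (‖g x y‖₊ : ℝ≥0∞) ∂(m x) := by
    intro x; exact lintegral_mono fun y => Real.ofReal_le_enorm _
  have hNle : ∀ x, (∫⁻ y, ENNReal.ofReal (-(g x y)) ∂(m x)) ≤ ∫⁻ y, (‖g x y‖₊ : ℝ≥0∞) ∂(m x) := by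
    intro x; refine lintegral_mono fun y => ?_
    rw [← nnnorm_neg]
    exact Real.ofReal_le_enorm _
  have hPfin : (∫⁻ x, ∫⁻ y, ENNReal.ofReal (g x y) ∂(m x) ∂ν) ≠ ⊤ :=
    ne_top_of_le_ne_top hfin (lintegral_mono hPle)
  have hNfin : (∫⁻ x, ∫⁻ y, ENNReal.ofReal (-(g x y)) ∂(m x) ∂ν) ≠ ⊤ :=
    ne_top_of_le_ne_top hfin (lintegral_mono hNle)
  have hae : ∀ᵐ x ∂ν, (∫⁻ y, (‖g x y‖₊ : ℝ≥0∞) ∂(m x)) < ⊤ := ae_lt_top hMn hfin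
  have hinner : ∀ᵐ x ∂ν, ∫ y, g x y ∂(m x)
      = (∫⁻ y, ENNReal.ofReal (g x y) ∂(m x)).toReal
        - (∫⁻ y, ENNReal.ofReal (-(g x y)) ∂(m x)).toReal := by
    refine hae.mono fun x hx => ?_
    have hint : Integrable (g x) (m x) :=
      ⟨(hg.of_uncurry_left).aestronglyMeasurable, hx⟩
    exact integral_eq_lintegral_pos_part_sub_lintegral_neg_part hint
  rw [integral_congr_ae hinner,
    integral_sub (integrable_toReal_of_lintegral_ne_top hP.aemeasurable hPfin)
      (integrable_toReal_of_lintegral_ne_top hN.aemeasurable hNfin),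
    integral_toReal hP.aemeasurable (ae_lt_top hP hPfin),
    integral_toReal hN.aemeasurable (ae_lt_top hN hNfin)]

private lemma aux_rev_real (m : X → Measure X)
    (hprob : ∀ x, IsProbabilityMeasure (m x)) (hmeas : Measurable m)
    (ν : Measure X)
    (hrev : ∀ f : X → X → ℝ≥0∞, Measurable (Function.uncurry f) →
      ∫⁻ x, ∫⁻ y, f x y ∂(m x) ∂ν = ∫⁻ x, ∫⁻ y, f y x ∂(m x) ∂ν)
    (g : X → X → ℝ) (hg : Measurable (Function.uncurry g))
    (hfin : ∫⁻ x, ∫⁻ y, (‖g x y‖₊ : ℝ≥0∞) ∂(m x) ∂ν ≠ ⊤) :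
    ∫ x, ∫ y, g x y ∂(m x) ∂ν = ∫ x, ∫ y, g y x ∂(m x) ∂ν := by
  have hg' : Measurable (Function.uncurry fun x y => g y x) := hg.comp measurable_swap
  have hfin' : ∫⁻ x, ∫⁻ y, (‖g y x‖₊ : ℝ≥0∞) ∂(m x) ∂ν ≠ ⊤ := by
    rw [← hrev (fun x y => (‖g x y‖₊ : ℝ≥0∞)) hg.enorm]; exact hfin
  rw [aux_double_int_eq m hprob hmeas ν g hg hfin,
    aux_double_int_eq m hprob hmeas ν (fun x y => g y x) hg' hfin',
    hrev (fun x y => ENNReal.ofReal (g x y)) (ENNReal.measurable_ofReal.comp hg),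
    hrev (fun x y => ENNReal.ofReal (-(g x y))) (ENNReal.measurable_ofReal.comp hg.neg)]

private lemma aux_null (m : X → Measure X)
    (hprob : ∀ x, IsProbabilityMeasure (m x)) (hmeas : Measurable m)
    (ν : Measure X)
    (hrev : ∀ f : X → X → ℝ≥0∞, Measurable (Function.uncurry f) →
      ∫⁻ x, ∫⁻ y, f x y ∂(m x) ∂ν = ∫⁻ x, ∫⁻ y, f y x ∂(m x) ∂ν)
    {N : Set X} (hN : MeasurableSet N) (h0 : ν N = 0) :
    ∀ᵐ x ∂ν, m x N = 0 := by
  have h := hrev (fun x _ => N.indicator (fun _ => (1 : ℝ≥0∞)) x)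
    ((measurable_one.indicator hN).comp measurable_fst)
  have hL : ∫⁻ x, ∫⁻ _, N.indicator (fun _ => (1 : ℝ≥0∞)) x ∂(m x) ∂ν = 0 := by
    have h1 : ∀ x, ∫⁻ _, N.indicator (fun _ => (1 : ℝ≥0∞)) x ∂(m x)
        = N.indicator (fun _ => 1) x := by
      intro x; haveI := hprob x; simp
    rw [lintegral_congr h1, lintegral_indicator hN]
    simp [h0]
  have hR : ∫⁻ x, ∫⁻ y, N.indicator (fun _ => (1 : ℝ≥0∞)) y ∂(m x) ∂ν = 0 := by
    rw [← h]; exact hL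
  have h2 : ∀ x, ∫⁻ y, N.indicator (fun _ => (1 : ℝ≥0∞)) y ∂(m x) = m x N := by
    intro x; rw [lintegral_indicator hN]; simp
  rw [lintegral_congr h2] at hR
  have hm : Measurable fun x => m x N := (Measure.measurable_coe hN).comp hmeas
  exact (lintegral_eq_zero_iff hm).mp hR

end Aux


private lemma stmt9_core {X : Type*} [MeasurableSpace X] (m : X → Measure X)
    (hprob : ∀ x, IsProbabilityMeasure (m x)) (hmeas : Measurable m)
    (ν : Measure X)
    (hrev : ∀ f : X → X → ℝ≥0∞, Measurable (Function.uncurry f) →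
      ∫⁻ x, ∫⁻ y, f x y ∂(m x) ∂ν = ∫⁻ x, ∫⁻ y, f y x ∂(m x) ∂ν)
    (Ω : Set X) (hΩ : MeasurableSet Ω)
    (q q' : ℝ) (hq : 1 < q) (hq' : 1 / q + 1 / q' = 1)
    (a : X → X → ℝ → ℝ)
    (hameas : Measurable (fun z : X × X × ℝ => a z.1 z.2.1 z.2.2))
    (hasym : ∀ᵐ x ∂ν, ∀ᵐ y ∂(m x), ∀ r : ℝ, a x y r = - a y x (-r))
    (u : X → ℝ) (humeas : Measurable u)
    (hF : ∫⁻ x in Ω, ∫⁻ y in Ω,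
        ENNReal.ofReal (|a x y (u y - u x)| ^ q) ∂(m x) ∂ν < ⊤)
    (w : X → ℝ) (hwmeas : Measurable w)
    (hw : ∫⁻ x in Ω, (‖w x‖₊ : ℝ≥0∞) ^ q' ∂ν ≠ ⊤) :
    -∫ x in Ω, (∫ y in Ω, a x y (u y - u x) ∂(m x)) * w x ∂ν
      = (1 / 2) * ∫ x in Ω, ∫ y in Ω, a x y (u y - u x) * (w y - w x) ∂(m x) ∂ν := by
  classical
  open ProbabilityTheory Function in
  -- conjugate exponents
  have hpq : q.HolderConjugate q' := Real.holderConjugate_iff.mpr ⟨hq, by simpa [one_div] using hq'⟩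
  have hq0 : 0 < q := hpq.pos
  have hq'0 : 0 < q' := hpq.symm.pos
  -- kernel
  set κ : ProbabilityTheory.Kernel X X := ⟨m, hmeas⟩ with hκdef
  haveI : ProbabilityTheory.IsMarkovKernel κ := ⟨hprob⟩
  have hκa : ∀ x, κ x = m x := fun _ => rfl
  -- main functions
  set F : X → X → ℝ := fun x y => a x y (u y - u x) with hFdef
  have hFm : Measurable (Function.uncurry F) := by
    have heq : Function.uncurry F = (fun z : X × X × ℝ => a z.1 z.2.1 z.2.2) ∘
        (fun p : X × X => (p.1, p.2, u p.2 - u p.1)) := rfl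
    rw [heq]
    exact hameas.comp (measurable_fst.prodMk (measurable_snd.prodMk
      ((humeas.comp measurable_snd).sub (humeas.comp measurable_fst))))
  set ind : X → ℝ := fun x => if x ∈ Ω then 1 else 0 with hinddef
  set indE : X → ℝ≥0∞ := fun x => if x ∈ Ω then 1 else 0 with hindEdef
  have hindm : Measurable ind := measurable_const.ite hΩ measurable_const
  have hindEm : Measurable indE := measurable_const.ite hΩ measurable_const
  set g1 : X → X → ℝ := fun x y => ind x * ind y * (F x y * w x) with hg1def
  set g2 : X → X → ℝ := fun x y => ind x * ind y * (F x y * w y) with hg2def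
  have hg1m : Measurable (Function.uncurry g1) :=
    ((hindm.comp measurable_fst).mul (hindm.comp measurable_snd)).mul
      (hFm.mul (hwmeas.comp measurable_fst))
  have hg2m : Measurable (Function.uncurry g2) :=
    ((hindm.comp measurable_fst).mul (hindm.comp measurable_snd)).mul
      (hFm.mul (hwmeas.comp measurable_snd))
  -- conversion between set integrals and indicator integrals
  have convR : ∀ h : X → X → ℝ, (∫ x in Ω, ∫ y in Ω, h x y ∂(m x) ∂ν)
      = ∫ x, ∫ y, ind x * ind y * h x y ∂(m x) ∂ν := by
    intro h
    rw [← integral_indicator hΩ]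
    refine integral_congr_ae (Filter.Eventually.of_forall fun x => ?_)
    by_cases hx : x ∈ Ω
    · rw [Set.indicator_of_mem hx, ← integral_indicator hΩ]
      refine integral_congr_ae (Filter.Eventually.of_forall fun y => ?_)
      by_cases hy : y ∈ Ω
      · simp [Set.indicator_of_mem hy, hinddef, hx, hy]
      · simp [Set.indicator_of_notMem hy, hinddef, hx, hy]
    · simp [Set.indicator_of_notMem hx, hinddef, hx]
  have convL : ∀ h : X → X → ℝ≥0∞, (∫⁻ x in Ω, ∫⁻ y in Ω, h x y ∂(m x) ∂ν)
      = ∫⁻ x, ∫⁻ y, indE x * indE y * h x y ∂(m x) ∂ν := by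
    intro h
    rw [← lintegral_indicator hΩ]
    refine lintegral_congr fun x => ?_
    by_cases hx : x ∈ Ω
    · rw [Set.indicator_of_mem hx, ← lintegral_indicator hΩ]
      refine lintegral_congr fun y => ?_
      by_cases hy : y ∈ Ω
      · simp [Set.indicator_of_mem hy, hindEdef, hx, hy]
      · simp [Set.indicator_of_notMem hy, hindEdef, hx, hy]
    · simp [Set.indicator_of_notMem hx, hindEdef, hx]
  -- norms of g1
  have hnorm1 : ∀ x y, (‖g1 x y‖₊ : ℝ≥0∞)
      = indE x * indE y * ((‖F x y‖₊ : ℝ≥0∞) * (‖w x‖₊ : ℝ≥0∞)) := by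
    intro x y
    by_cases hx : x ∈ Ω <;> by_cases hy : y ∈ Ω <;>
      simp [hg1def, hinddef, hindEdef, hx, hy, nnnorm_mul, ENNReal.coe_mul]
  -- B and A
  set B : X → ℝ≥0∞ := fun x => ∫⁻ y in Ω, (‖F x y‖₊ : ℝ≥0∞) ^ q ∂(m x) with hBdef
  set A : X → ℝ≥0∞ := fun x => ∫⁻ y in Ω, (‖F x y‖₊ : ℝ≥0∞) ∂(m x) with hAdef
  have hFxm : ∀ x, Measurable fun y => ((‖F x y‖₊ : ℝ≥0∞)) :=
    fun x => (hFm.of_uncurry_left).enorm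
  have hFq : Measurable (Function.uncurry fun x y => (‖F x y‖₊ : ℝ≥0∞) ^ q) :=
    hFm.enorm.pow measurable_const
  have hBmeas : Measurable B := by
    simp_rw [hBdef, ← hκa]
    exact Measurable.setLIntegral_kernel_prod_right hFq hΩ
  have hAmeas : Measurable A := by
    simp_rw [hAdef, ← hκa]
    exact Measurable.setLIntegral_kernel_prod_right
      (f := fun x y => ((‖F x y‖₊ : ℝ≥0∞))) hFm.enorm hΩ
  have hBfin : ∫⁻ x in Ω, B x ∂ν ≠ ⊤ := by
    refine ne_of_lt (lt_of_le_of_lt (le_of_eq ?_) hF)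
    refine setLIntegral_congr_fun hΩ (fun x _ => ?_)
    refine setLIntegral_congr_fun hΩ (fun y _ => ?_)
    rw [← ENNReal.ofReal_rpow_of_nonneg (abs_nonneg _) hq0.le,
      ← Real.enorm_eq_ofReal_abs]
    rfl
  have hAB : ∀ x, A x ≤ B x ^ (1 / q) := by
    intro x
    haveI := hprob x
    have hh := ENNReal.lintegral_mul_le_Lp_mul_Lq ((m x).restrict Ω) hpq
      (hFxm x).aemeasurable (aemeasurable_const (b := (1 : ℝ≥0∞)))
    simp only [Pi.mul_apply, mul_one, ENNReal.one_rpow, lintegral_one,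
      Measure.restrict_apply_univ] at hh
    refine le_trans hh ?_
    calc B x ^ (1/q) * (m x Ω) ^ (1/q')
        ≤ B x ^ (1/q) * 1 := by
          gcongr
          exact ENNReal.rpow_le_one prob_le_one (by positivity)
      _ = B x ^ (1/q) := mul_one _
  -- E1 : the key finiteness
  have hwae : AEMeasurable (fun x => (‖w x‖₊ : ℝ≥0∞)) (ν.restrict Ω) :=
    hwmeas.enorm.aemeasurable
  have hE1' : ∫⁻ x in Ω, (‖w x‖₊ : ℝ≥0∞) * A x ∂ν ≠ ⊤ := by
    have h1 : ∫⁻ x in Ω, (‖w x‖₊ : ℝ≥0∞) * A x ∂ν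
        ≤ ∫⁻ x in Ω, (‖w x‖₊ : ℝ≥0∞) * B x ^ (1/q) ∂ν := by
      refine lintegral_mono fun x => ?_
      exact mul_le_mul_right (hAB x) _
    have hBq : Measurable fun x => B x ^ (1/q) := hBmeas.pow measurable_const
    have h2 := ENNReal.lintegral_mul_le_Lp_mul_Lq (ν.restrict Ω) hpq.symm hwae
      hBq.aemeasurable
    simp only [Pi.mul_apply] at h2
    have h3 : ∫⁻ x in Ω, (B x ^ (1/q)) ^ q ∂ν = ∫⁻ x in Ω, B x ∂ν := by
      refine lintegral_congr fun x => ?_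
      rw [← ENNReal.rpow_mul, one_div_mul_cancel hq0.ne', ENNReal.rpow_one]
    rw [h3] at h2
    refine ne_of_lt (lt_of_le_of_lt (le_trans h1 h2) ?_)
    exact ENNReal.mul_lt_top
      (ENNReal.rpow_lt_top_of_nonneg (by positivity) hw)
      (ENNReal.rpow_lt_top_of_nonneg (by positivity) hBfin)
  have hE1 : ∫⁻ x, ∫⁻ y, (‖g1 x y‖₊ : ℝ≥0∞) ∂(m x) ∂ν ≠ ⊤ := by
    have he : ∫⁻ x, ∫⁻ y, (‖g1 x y‖₊ : ℝ≥0∞) ∂(m x) ∂ν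
        = ∫⁻ x in Ω, ∫⁻ y in Ω, (‖F x y‖₊ : ℝ≥0∞) * (‖w x‖₊ : ℝ≥0∞) ∂(m x) ∂ν := by
      rw [convL (fun x y => (‖F x y‖₊ : ℝ≥0∞) * (‖w x‖₊ : ℝ≥0∞))]
      refine lintegral_congr fun x => lintegral_congr fun y => (hnorm1 x y)
    rw [he]
    have he2 : ∫⁻ x in Ω, ∫⁻ y in Ω, (‖F x y‖₊ : ℝ≥0∞) * (‖w x‖₊ : ℝ≥0∞) ∂(m x) ∂ν
        = ∫⁻ x in Ω, (‖w x‖₊ : ℝ≥0∞) * A x ∂ν := by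
      refine lintegral_congr fun x => ?_
      have hmc : ∫⁻ y in Ω, (‖F x y‖₊ : ℝ≥0∞) * (‖w x‖₊ : ℝ≥0∞) ∂(m x)
          = (∫⁻ y in Ω, (‖F x y‖₊ : ℝ≥0∞) ∂(m x)) * (‖w x‖₊ : ℝ≥0∞) :=
        lintegral_mul_const'' _ (hFxm x).aemeasurable.restrict
      rw [hmc, mul_comm]
    rw [he2]
    exact hE1'
  -- E2 via reversibility and antisymmetry
  have hFswap : ∀ᵐ x ∂ν, ∀ᵐ y ∂(m x), F y x = - F x y := by
    refine hasym.mono fun x hx => hx.mono fun y hy => ?_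
    have h := hy (u y - u x)
    simp only [hFdef, neg_sub] at h ⊢
    linarith
  have hE2 : ∫⁻ x, ∫⁻ y, (‖g2 x y‖₊ : ℝ≥0∞) ∂(m x) ∂ν ≠ ⊤ := by
    rw [hrev (fun x y => (‖g2 x y‖₊ : ℝ≥0∞)) hg2m.enorm]
    have hcong : ∫⁻ x, ∫⁻ y, (‖g2 y x‖₊ : ℝ≥0∞) ∂(m x) ∂ν
        = ∫⁻ x, ∫⁻ y, (‖g1 x y‖₊ : ℝ≥0∞) ∂(m x) ∂ν := by
      refine lintegral_congr_ae (hFswap.mono fun x hx => lintegral_congr_ae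
        (hx.mono fun y hy => ?_))
      show ((‖g2 y x‖₊ : ℝ≥0∞)) = ((‖g1 x y‖₊ : ℝ≥0∞))
      have hgg : g2 y x = -(g1 x y) := by
        simp only [hg2def, hg1def, hy]; ring
      rw [hgg, nnnorm_neg]
    rw [hcong]
    exact hE1
  -- inner integral finiteness a.e.
  have hM1 : Measurable fun x => ∫⁻ y, (‖g1 x y‖₊ : ℝ≥0∞) ∂(m x) := by
    simp_rw [← hκa]; exact Measurable.lintegral_kernel_prod_right hg1m.enorm
  have hM2 : Measurable fun x => ∫⁻ y, (‖g2 x y‖₊ : ℝ≥0∞) ∂(m x) := by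
    simp_rw [← hκa]; exact Measurable.lintegral_kernel_prod_right hg2m.enorm
  have ha1 : ∀ᵐ x ∂ν, (∫⁻ y, (‖g1 x y‖₊ : ℝ≥0∞) ∂(m x)) < ⊤ := ae_lt_top hM1 hE1
  have ha2 : ∀ᵐ x ∂ν, (∫⁻ y, (‖g2 x y‖₊ : ℝ≥0∞) ∂(m x)) < ⊤ := ae_lt_top hM2 hE2
  -- step C : ∫∫ g2 = - ∫∫ g1
  have hC : ∫ x, ∫ y, g2 x y ∂(m x) ∂ν = - ∫ x, ∫ y, g1 x y ∂(m x) ∂ν := by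
    rw [aux_rev_real m hprob hmeas ν hrev g2 hg2m hE2]
    have h1 : ∫ x, ∫ y, g2 y x ∂(m x) ∂ν = ∫ x, ∫ y, -(g1 x y) ∂(m x) ∂ν := by
      refine integral_congr_ae (hFswap.mono fun x hx =>
        integral_congr_ae (hx.mono fun y hy => ?_))
      simp only [hg2def, hg1def, hy]; ring
    rw [h1]
    simp [integral_neg]
  -- integrability of the inner integrals
  have hint1 : Integrable (fun x => ∫ y, g1 x y ∂(m x)) ν := by
    constructor
    · have hsm : StronglyMeasurable fun x => ∫ y, g1 x y ∂(κ x) :=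
        hg1m.stronglyMeasurable.integral_kernel_prod_right
      refine StronglyMeasurable.aestronglyMeasurable ?_
      simp_rw [← hκa]; exact hsm
    · refine lt_of_le_of_lt (lintegral_mono fun x =>
        enorm_integral_le_lintegral_enorm _) ?_
      exact lt_top_iff_ne_top.mpr hE1
  have hint2 : Integrable (fun x => ∫ y, g2 x y ∂(m x)) ν := by
    constructor
    · have hsm : StronglyMeasurable fun x => ∫ y, g2 x y ∂(κ x) :=
        hg2m.stronglyMeasurable.integral_kernel_prod_right
      refine StronglyMeasurable.aestronglyMeasurable ?_
      simp_rw [← hκa]; exact hsm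
    · refine lt_of_le_of_lt (lintegral_mono fun x =>
        enorm_integral_le_lintegral_enorm _) ?_
      exact lt_top_iff_ne_top.mpr hE2
  -- splitting
  have hsplit : ∫ x, ∫ y, (g2 x y - g1 x y) ∂(m x) ∂ν
      = (∫ x, ∫ y, g2 x y ∂(m x) ∂ν) - ∫ x, ∫ y, g1 x y ∂(m x) ∂ν := by
    have hinner : ∀ᵐ x ∂ν, ∫ y, (g2 x y - g1 x y) ∂(m x)
        = (∫ y, g2 x y ∂(m x)) - ∫ y, g1 x y ∂(m x) := by
      refine (ha1.and ha2).mono fun x hx => ?_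
      exact integral_sub ⟨(hg2m.of_uncurry_left).aestronglyMeasurable, hx.2⟩
        ⟨(hg1m.of_uncurry_left).aestronglyMeasurable, hx.1⟩
    rw [integral_congr_ae hinner]
    exact integral_sub hint2 hint1
  -- LHS
  have hL : ∫ x in Ω, (∫ y in Ω, F x y ∂(m x)) * w x ∂ν
      = ∫ x, ∫ y, g1 x y ∂(m x) ∂ν := by
    have h1 : ∀ x, (∫ y in Ω, F x y ∂(m x)) * w x = ∫ y in Ω, F x y * w x ∂(m x) :=
      fun x => (integral_mul_const _ _).symm
    rw [integral_congr_ae (Filter.Eventually.of_forall fun x => h1 x)]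
    exact convR (fun x y => F x y * w x)
  -- RHS
  have hR : ∫ x in Ω, ∫ y in Ω, F x y * (w y - w x) ∂(m x) ∂ν
      = ∫ x, ∫ y, (g2 x y - g1 x y) ∂(m x) ∂ν := by
    rw [convR (fun x y => F x y * (w y - w x))]
    refine integral_congr_ae (Filter.Eventually.of_forall fun x =>
      integral_congr_ae (Filter.Eventually.of_forall fun y => ?_))
    simp only [hg1def, hg2def]; ring
  show -∫ x in Ω, (∫ y in Ω, F x y ∂(m x)) * w x ∂ν
      = (1 / 2) * ∫ x in Ω, ∫ y in Ω, F x y * (w y - w x) ∂(m x) ∂ν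
  rw [hL, hR, hsplit, hC]
  ring

/-- Integration by parts formula: if `ν` is reversible with respect to `m`, `a_p` is
antisymmetric (`a_p(x,y,r) = -a_p(y,x,-r)`), `(x,y) ↦ a_p(x,y,u(y)-u(x)) ∈ L^q(Ω×Ω, ν⊗m_x)`
and `w ∈ L^{q'}(Ω,ν)`, then
`-∫_Ω ∫_Ω a_p(x,y,u(y)-u(x)) dm_x(y) w(x) dν(x)
  = (1/2) ∫_Ω ∫_Ω a_p(x,y,u(y)-u(x)) (w(y)-w(x)) dm_x(y) dν(x)`. -/
theorem stmt9 {X : Type*} [MeasurableSpace X] (m : X → Measure X)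
    (hprob : ∀ x, IsProbabilityMeasure (m x)) (hmeas : Measurable m)
    (ν : Measure X)
    (hrev : ∀ f : X → X → ℝ≥0∞, Measurable (Function.uncurry f) →
      ∫⁻ x, ∫⁻ y, f x y ∂(m x) ∂ν = ∫⁻ x, ∫⁻ y, f y x ∂(m x) ∂ν)
    (Ω : Set X) (hΩ : MeasurableSet Ω)
    (q q' : ℝ) (hq : 1 < q) (hq' : 1 / q + 1 / q' = 1)
    (a : X → X → ℝ → ℝ)
    (hameas : Measurable (fun z : X × X × ℝ => a z.1 z.2.1 z.2.2))
    (hasym : ∀ᵐ x ∂ν, ∀ᵐ y ∂(m x), ∀ r : ℝ, a x y r = - a y x (-r))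
    (u : X → ℝ) (humeas : Measurable u)
    (hF : ∫⁻ x in Ω, ∫⁻ y in Ω,
        ENNReal.ofReal (|a x y (u y - u x)| ^ q) ∂(m x) ∂ν < ⊤)
    (w : X → ℝ) (hw : MemLp w (ENNReal.ofReal q') (ν.restrict Ω)) :
    -∫ x in Ω, (∫ y in Ω, a x y (u y - u x) ∂(m x)) * w x ∂ν
      = (1 / 2) * ∫ x in Ω, ∫ y in Ω, a x y (u y - u x) * (w y - w x) ∂(m x) ∂ν := by
  classical
  have hpq : q.HolderConjugate q' := Real.holderConjugate_iff.mpr ⟨hq, by simpa [one_div] using hq'⟩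
  have hq'0 : 0 < q' := hpq.symm.pos
  -- measurable representative of w
  set w' : X → ℝ := (hw.aestronglyMeasurable.mk w) with hw'def
  have hw'sm : StronglyMeasurable w' := hw.aestronglyMeasurable.stronglyMeasurable_mk
  have hww' : w =ᵐ[ν.restrict Ω] w' := hw.aestronglyMeasurable.ae_eq_mk
  have hw'meas : Measurable w' := hw'sm.measurable
  have hw'mem : MemLp w' (ENNReal.ofReal q') (ν.restrict Ω) := hw.ae_eq hww'
  -- lintegral form of the L^{q'} condition
  have hwint : ∫⁻ x in Ω, (‖w' x‖₊ : ℝ≥0∞) ^ q' ∂ν ≠ ⊤ := by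
    have h2 := hw'mem.2
    rw [eLpNorm_eq_lintegral_rpow_enorm_toReal (by simpa [ENNReal.ofReal_eq_zero, not_le] using hq'0)
      ENNReal.ofReal_ne_top, ENNReal.toReal_ofReal hq'0.le] at h2
    intro htop
    rw [show (∫⁻ x in Ω, ‖w' x‖ₑ ^ q' ∂ν) = ⊤ from htop, ENNReal.top_rpow_of_pos (by positivity)] at h2
    exact (lt_irrefl _ h2).elim
  -- null set transfer
  have hs0 : (ν.restrict Ω) {x | ¬ w x = w' x} = 0 := by
    have := hww'
    rw [Filter.EventuallyEq, ae_iff] at this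
    exact this
  set N : Set X := toMeasurable (ν.restrict Ω) {x | ¬ w x = w' x} with hNdef
  have hNm : MeasurableSet N := measurableSet_toMeasurable _ _
  have hsub : {x | ¬ w x = w' x} ⊆ N := subset_toMeasurable _ _
  have hN0 : (ν.restrict Ω) N = 0 := by rw [hNdef, measure_toMeasurable]; exact hs0
  have hN'0 : ν (N ∩ Ω) = 0 := by
    rw [← Measure.restrict_apply hNm]; exact hN0
  have hml : ∀ᵐ x ∂ν, m x (N ∩ Ω) = 0 :=
    aux_null m hprob hmeas ν hrev (hNm.inter hΩ) hN'0
  -- rewrite the goal using w'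
  have e1 : ∫ x in Ω, (∫ y in Ω, a x y (u y - u x) ∂(m x)) * w x ∂ν
      = ∫ x in Ω, (∫ y in Ω, a x y (u y - u x) ∂(m x)) * w' x ∂ν :=
    integral_congr_ae (hww'.mono fun x hx => by simp only [hx])
  have e2 : ∫ x in Ω, ∫ y in Ω, a x y (u y - u x) * (w y - w x) ∂(m x) ∂ν
      = ∫ x in Ω, ∫ y in Ω, a x y (u y - u x) * (w' y - w' x) ∂(m x) ∂ν := by
    refine integral_congr_ae ?_
    have hml' : ∀ᵐ x ∂ν.restrict Ω, m x (N ∩ Ω) = 0 := ae_restrict_of_ae hml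
    refine (hml'.and hww').mono fun x hx => ?_
    refine integral_congr_ae ?_
    have hwy : ∀ᵐ y ∂(m x).restrict Ω, w y = w' y := by
      refine ae_iff.mpr (measure_mono_null hsub ?_)
      rw [Measure.restrict_apply hNm]
      exact hx.1
    exact hwy.mono fun y hy => by simp only [hy, hx.2]
  rw [e1, e2]
  exact stmt9_core m hprob hmeas ν hrev Ω hΩ q q' hq hq' a hameas hasym u humeas hF
    w' hw'meas hwint
end

section
/- Monotonicity under the integration by parts formula: with Ω, m, ν and a_p as above (a_p antisymmetric, a_p(x,y,·) strictly increasing), if u₁, u₂ are ν-measurable functions with a_p(x,y,u_i(y)−u_i(x)) ∈ L^{p'}(Ω×Ω,ν⊗m_x) and T: ℝ → ℝ is nondecreasing and bounded, then (1/2)∫_{Ω×Ω} (a_p(x,y,u₁(y)−u₁(x)) − a_p(x,y,u₂(y)−u₂(x)))·(T(u₁(y)−u₂(y)) − T(u₁(x)−u₂(x))) d(ν⊗m_x)(x,y) ≥ 0. -/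
open MeasureTheory
open scoped ENNReal

/-- Monotonicity: if `a_p` is antisymmetric and strictly monotone in its last variable,
`u₁, u₂` have nonlocal Leray–Lions integrands in `L^{p'}(Ω×Ω, ν⊗m_x)`, and `T : ℝ → ℝ` is
nondecreasing and bounded, then
`(1/2)∫_Ω∫_Ω (a_p(x,y,u₁(y)-u₁(x)) - a_p(x,y,u₂(y)-u₂(x)))
    (T(u₁(y)-u₂(y)) - T(u₁(x)-u₂(x))) dm_x(y) dν(x) ≥ 0`. -/
theorem stmt10 {X : Type*} [MeasurableSpace X] (m : X → Measure X)
    (hprob : ∀ x, IsProbabilityMeasure (m x)) (hmeas : Measurable m)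
    (ν : Measure X)
    (hrev : ∀ f : X → X → ℝ≥0∞, Measurable (Function.uncurry f) →
      ∫⁻ x, ∫⁻ y, f x y ∂(m x) ∂ν = ∫⁻ x, ∫⁻ y, f y x ∂(m x) ∂ν)
    (Ω : Set X) (hΩ : MeasurableSet Ω)
    (p p' : ℝ) (hp : 1 < p) (hp' : 1 / p + 1 / p' = 1)
    (a : X → X → ℝ → ℝ)
    (hameas : Measurable (fun z : X × X × ℝ => a z.1 z.2.1 z.2.2))
    (hasym : ∀ᵐ x ∂ν, ∀ᵐ y ∂(m x), ∀ r : ℝ, a x y r = - a y x (-r))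
    (hmono : ∀ᵐ x ∂ν, ∀ᵐ y ∂(m x), ∀ r s : ℝ, r ≠ s → 0 < (a x y r - a x y s) * (r - s))
    (u₁ u₂ : X → ℝ) (hu₁ : Measurable u₁) (hu₂ : Measurable u₂)
    (hF₁ : ∫⁻ x in Ω, ∫⁻ y in Ω,
        ENNReal.ofReal (|a x y (u₁ y - u₁ x)| ^ p') ∂(m x) ∂ν < ⊤)
    (hF₂ : ∫⁻ x in Ω, ∫⁻ y in Ω,
        ENNReal.ofReal (|a x y (u₂ y - u₂ x)| ^ p') ∂(m x) ∂ν < ⊤)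
    (T : ℝ → ℝ) (hT : Monotone T) (hTbd : ∃ M : ℝ, ∀ r, |T r| ≤ M) :
    0 ≤ (1 / 2) * ∫ x in Ω, ∫ y in Ω,
        (a x y (u₁ y - u₁ x) - a x y (u₂ y - u₂ x)) *
          (T (u₁ y - u₂ y) - T (u₁ x - u₂ x)) ∂(m x) ∂ν := by
  have h : 0 ≤ ∫ x in Ω, ∫ y in Ω,
      (a x y (u₁ y - u₁ x) - a x y (u₂ y - u₂ x)) *
        (T (u₁ y - u₂ y) - T (u₁ x - u₂ x)) ∂(m x) ∂ν := by
    apply integral_nonneg_of_ae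
    filter_upwards [ae_restrict_of_ae hmono] with x hx
    apply integral_nonneg_of_ae
    filter_upwards [ae_restrict_of_ae hx] with y hy
    show (0:ℝ) ≤ _
    set r₁ := u₁ y - u₁ x
    set r₂ := u₂ y - u₂ x
    have hdiff : (u₁ y - u₂ y) - (u₁ x - u₂ x) = r₁ - r₂ := by ring
    rcases lt_trichotomy r₁ r₂ with hlt | heq | hgt
    · have h1 : a x y r₁ - a x y r₂ < 0 := by
        have := hy r₁ r₂ hlt.ne
        nlinarith
      have h2 : T (u₁ y - u₂ y) - T (u₁ x - u₂ x) ≤ 0 := by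
        have : T (u₁ y - u₂ y) ≤ T (u₁ x - u₂ x) := hT (by linarith [hdiff])
        linarith
      nlinarith
    · simp [heq]
    · have h1 : 0 < a x y r₁ - a x y r₂ := by
        have := hy r₁ r₂ hgt.ne'
        nlinarith
      have h2 : 0 ≤ T (u₁ y - u₂ y) - T (u₁ x - u₂ x) := by
        have : T (u₁ x - u₂ x) ≤ T (u₁ y - u₂ y) := hT (by linarith [hdiff])
        linarith
      exact mul_nonneg h1.le h2
  linarith
end

section
/- Contraction principle for the nonlocal stationary problem: Let φ₁, φ₂ ∈ L¹(Ω,ν), let [u₁,v₁] be a subsolution of (GP_{φ₁}) and [u₂,v₂] a supersolution of (GP_{φ₂}). Then ∫_Ω (v₁ − v₂)⁺ dν ≤ ∫_Ω (φ₁ − φ₂)⁺ dν. -/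
open MeasureTheory
open scoped ENNReal

set_option maxHeartbeats 2000000 in
/-- Contraction principle for the nonlocal stationary problem `(GP_φ)`: if `[u₁,v₁]` is a
subsolution for data `φ₁` and `[u₂,v₂]` a supersolution for data `φ₂`, then
`∫_Ω (v₁ - v₂)⁺ dν ≤ ∫_Ω (φ₁ - φ₂)⁺ dν`, where `Ω = Ω₁ ∪ Ω₂`. -/
theorem stmt12 {X : Type*} [MeasurableSpace X] (m : X → Measure X)
    (hprob : ∀ x, IsProbabilityMeasure (m x)) (hmeas : Measurable m)
    (ν : Measure X)
    (hrev : ∀ f : X → X → ℝ≥0∞, Measurable (Function.uncurry f) →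
      ∫⁻ x, ∫⁻ y, f x y ∂(m x) ∂ν = ∫⁻ x, ∫⁻ y, f y x ∂(m x) ∂ν)
    (Ω₁ Ω₂ : Set X) (h1 : MeasurableSet Ω₁) (h2 : MeasurableSet Ω₂)
    (hdisj : Disjoint Ω₁ Ω₂) (hfin : ν (Ω₁ ∪ Ω₂) < ⊤)
    (hconn : ∀ A B : Set X, MeasurableSet A → MeasurableSet B →
      A ⊆ Ω₁ ∪ Ω₂ → B ⊆ Ω₁ ∪ Ω₂ → ν A ≠ 0 → ν B ≠ 0 → A ∪ B = Ω₁ ∪ Ω₂ →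
      0 < ∫⁻ x in A, m x B ∂ν)
    (p p' cp Cp : ℝ) (hp : 1 < p) (hp' : 1 / p + 1 / p' = 1)
    (hcp : 0 < cp) (hCp : 0 < Cp)
    (a : X → X → ℝ → ℝ)
    (hameas : Measurable (fun z : X × X × ℝ => a z.1 z.2.1 z.2.2))
    (hcont : ∀ᵐ x ∂ν, ∀ᵐ y ∂(m x), Continuous (a x y))
    (hasym : ∀ᵐ x ∂ν, ∀ᵐ y ∂(m x), ∀ r : ℝ, a x y r = - a y x (-r))
    (hmono : ∀ᵐ x ∂ν, ∀ᵐ y ∂(m x), ∀ r s : ℝ, r ≠ s → 0 < (a x y r - a x y s) * (r - s))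
    (hgrowth : ∀ᵐ x ∂ν, ∀ᵐ y ∂(m x), ∀ r : ℝ, |a x y r| ≤ Cp * (1 + |r| ^ (p - 1)))
    (hcoer : ∀ᵐ x ∂ν, ∀ᵐ y ∂(m x), ∀ r : ℝ, cp * |r| ^ p ≤ a x y r * r)
    (γ β : ℝ → Set ℝ) (hγ : MaximalMonotoneGraph γ) (hβ : MaximalMonotoneGraph β)
    (hγ0 : (0 : ℝ) ∈ γ 0) (hβ0 : (0 : ℝ) ∈ β 0)
    (φ₁ φ₂ : X → ℝ)
    (hφ₁ : Integrable φ₁ (ν.restrict (Ω₁ ∪ Ω₂)))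
    (hφ₂ : Integrable φ₂ (ν.restrict (Ω₁ ∪ Ω₂)))
    (u₁ v₁ u₂ v₂ : X → ℝ)
    (hu₁ : MemLp u₁ (ENNReal.ofReal p) (ν.restrict (Ω₁ ∪ Ω₂)))
    (hv₁ : Integrable v₁ (ν.restrict (Ω₁ ∪ Ω₂)))
    (hu₂ : MemLp u₂ (ENNReal.ofReal p) (ν.restrict (Ω₁ ∪ Ω₂)))
    (hv₂ : Integrable v₂ (ν.restrict (Ω₁ ∪ Ω₂)))
    (hγ₁ : ∀ᵐ x ∂ν, x ∈ Ω₁ → v₁ x ∈ γ (u₁ x))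
    (hβ₁ : ∀ᵐ x ∂ν, x ∈ Ω₂ → v₁ x ∈ β (u₁ x))
    (hγ₂ : ∀ᵐ x ∂ν, x ∈ Ω₁ → v₂ x ∈ γ (u₂ x))
    (hβ₂ : ∀ᵐ x ∂ν, x ∈ Ω₂ → v₂ x ∈ β (u₂ x))
    (hF₁ : ∫⁻ x in Ω₁ ∪ Ω₂, ∫⁻ y in Ω₁ ∪ Ω₂,
        ENNReal.ofReal (|a x y (u₁ y - u₁ x)| ^ p') ∂(m x) ∂ν < ⊤)
    (hF₂ : ∫⁻ x in Ω₁ ∪ Ω₂, ∫⁻ y in Ω₁ ∪ Ω₂,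
        ENNReal.ofReal (|a x y (u₂ y - u₂ x)| ^ p') ∂(m x) ∂ν < ⊤)
    (hsub : ∀ᵐ x ∂ν, x ∈ Ω₁ ∪ Ω₂ →
        v₁ x - ∫ y in Ω₁ ∪ Ω₂, a x y (u₁ y - u₁ x) ∂(m x) ≤ φ₁ x)
    (hsup : ∀ᵐ x ∂ν, x ∈ Ω₁ ∪ Ω₂ →
        φ₂ x ≤ v₂ x - ∫ y in Ω₁ ∪ Ω₂, a x y (u₂ y - u₂ x) ∂(m x)) :
    ∫ x in Ω₁ ∪ Ω₂, max (v₁ x - v₂ x) 0 ∂ν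
      ≤ ∫ x in Ω₁ ∪ Ω₂, max (φ₁ x - φ₂ x) 0 ∂ν := by
  classical
  -- notation
  set Ω : Set X := Ω₁ ∪ Ω₂ with hΩdef
  have hΩm : MeasurableSet Ω := h1.union h2
  set ν' : Measure X := ν.restrict Ω with hν'def
  haveI : IsFiniteMeasure ν' := ⟨by rwa [Measure.restrict_apply_univ]⟩
  let κ : ProbabilityTheory.Kernel X X := ⟨m, hmeas⟩
  haveI hκMarkov : ProbabilityTheory.IsMarkovKernel κ := ⟨hprob⟩
  have hκ : ∀ x, κ x = m x := fun _ => rfl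
  set μ : Measure (X × X) := ν'.compProd κ with hμdef
  -- p' > 1
  have hp0 : (0:ℝ) < p := lt_trans zero_lt_one hp
  have hp'pos : (0:ℝ) < p' := by
    have h01 : 0 < 1/p' := by
      have : 1/p < 1 := by rw [div_lt_one hp0]; exact hp
      linarith
    exact (one_div_pos).mp h01
  have hp'1 : (1:ℝ) < p' := by
    have : 1/p' < 1 := by
      have : 0 < 1/p := one_div_pos.mpr hp0
      linarith
    rw [div_lt_iff₀ hp'pos, one_mul] at this
    exact this
  have habs : ∀ t : ℝ, |t| ≤ 1 + |t| ^ p' := by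
    intro t
    rcases le_or_gt (|t|) 1 with h | h
    · have : (0:ℝ) ≤ |t| ^ p' := Real.rpow_nonneg (abs_nonneg t) p'
      linarith
    · have h2 : |t| ^ (1:ℝ) ≤ |t| ^ p' :=
        Real.rpow_le_rpow_of_exponent_le h.le hp'1.le
      rw [Real.rpow_one] at h2
      linarith
  -- measurable representatives
  obtain ⟨u₁', hu₁'m, hu₁'e⟩ : ∃ g, StronglyMeasurable g ∧ u₁ =ᵐ[ν'] g :=
    ⟨hu₁.1.mk _, hu₁.1.stronglyMeasurable_mk, hu₁.1.ae_eq_mk⟩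
  obtain ⟨u₂', hu₂'m, hu₂'e⟩ : ∃ g, StronglyMeasurable g ∧ u₂ =ᵐ[ν'] g :=
    ⟨hu₂.1.mk _, hu₂.1.stronglyMeasurable_mk, hu₂.1.ae_eq_mk⟩
  obtain ⟨v₁', hv₁'m, hv₁'e⟩ : ∃ g, StronglyMeasurable g ∧ v₁ =ᵐ[ν'] g :=
    ⟨hv₁.1.mk _, hv₁.1.stronglyMeasurable_mk, hv₁.1.ae_eq_mk⟩
  obtain ⟨v₂', hv₂'m, hv₂'e⟩ : ∃ g, StronglyMeasurable g ∧ v₂ =ᵐ[ν'] g :=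
    ⟨hv₂.1.mk _, hv₂.1.stronglyMeasurable_mk, hv₂.1.ae_eq_mk⟩
  obtain ⟨φ₁', hφ₁'m, hφ₁'e⟩ : ∃ g, StronglyMeasurable g ∧ φ₁ =ᵐ[ν'] g :=
    ⟨hφ₁.1.mk _, hφ₁.1.stronglyMeasurable_mk, hφ₁.1.ae_eq_mk⟩
  obtain ⟨φ₂', hφ₂'m, hφ₂'e⟩ : ∃ g, StronglyMeasurable g ∧ φ₂ =ᵐ[ν'] g :=
    ⟨hφ₂.1.mk _, hφ₂.1.stronglyMeasurable_mk, hφ₂.1.ae_eq_mk⟩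
  have hv₁'int : Integrable v₁' ν' := hv₁.congr hv₁'e
  have hv₂'int : Integrable v₂' ν' := hv₂.congr hv₂'e
  have hφ₁'int : Integrable φ₁' ν' := hφ₁.congr hφ₁'e
  have hφ₂'int : Integrable φ₂' ν' := hφ₂.congr hφ₂'e
  -- the test set and function
  set w : X → ℝ := fun x => u₁' x - u₂' x with hwdef
  have hwm : Measurable w := (hu₁'m.measurable).sub (hu₂'m.measurable)
  set S : Set X := {x | 0 < w x ∨ (w x = 0 ∧ v₂' x < v₁' x)} with hSdef
  have hSm : MeasurableSet S := by
    refine (measurableSet_lt measurable_const hwm).union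
      ((hwm (measurableSet_singleton 0)).inter
        (measurableSet_lt hv₂'m.measurable hv₁'m.measurable))
  set ρ : X → ℝ := S.indicator (fun _ => (1:ℝ)) with hρdef
  have hρm : Measurable ρ := measurable_const.indicator hSm
  have hρ0 : ∀ x, 0 ≤ ρ x := fun x => Set.indicator_nonneg (fun _ _ => zero_le_one) x
  have hρ1 : ∀ x, ρ x ≤ 1 := by
    intro x
    by_cases h : x ∈ S <;> simp [hρdef, Set.indicator_apply, h]
  have hρS : ∀ x, x ∈ S → ρ x = 1 := fun x h => by simp [hρdef, Set.indicator_apply, h]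
  have hρnS : ∀ x, x ∉ S → ρ x = 0 := fun x h => by simp [hρdef, Set.indicator_apply, h]
  -- indicator functions
  set e : X → ℝ := Ω.indicator (fun _ => (1:ℝ)) with hedef
  have hem : Measurable e := measurable_const.indicator hΩm
  have heΩ : ∀ x, x ∈ Ω → e x = 1 := fun x h => by simp [hedef, Set.indicator_apply, h]
  have henΩ : ∀ x, x ∉ Ω → e x = 0 := fun x h => by simp [hedef, Set.indicator_apply, h]
  set eE : X → ℝ≥0∞ := Ω.indicator (fun _ => (1:ℝ≥0∞)) with heEdef
  have heEm : Measurable eE := measurable_const.indicator hΩm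
  -- the integrands
  set b₁ : X → X → ℝ := fun x y => a x y (u₁' y - u₁' x) with hb₁def
  set b₂ : X → X → ℝ := fun x y => a x y (u₂' y - u₂' x) with hb₂def
  have hb₁m : Measurable (Function.uncurry b₁) := by
    exact hameas.comp (measurable_fst.prodMk (measurable_snd.prodMk
      ((hu₁'m.measurable.comp measurable_snd).sub (hu₁'m.measurable.comp measurable_fst))))
  have hb₂m : Measurable (Function.uncurry b₂) := by
    exact hameas.comp (measurable_fst.prodMk (measurable_snd.prodMk
      ((hu₂'m.measurable.comp measurable_snd).sub (hu₂'m.measurable.comp measurable_fst))))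
  set F : X × X → ℝ :=
    fun z => (e z.1 * ρ z.1) * (e z.2 * (b₁ z.1 z.2 - b₂ z.1 z.2)) with hFdef
  have hFm : Measurable F := by
    exact ((hem.comp measurable_fst).mul (hρm.comp measurable_fst)).mul
      ((hem.comp measurable_snd).mul (hb₁m.sub hb₂m))
  have hFsm : StronglyMeasurable F := hFm.stronglyMeasurable
  -- support of F
  have hFsupp : ∀ z : X × X, z.1 ∉ Ω ∨ z.2 ∉ Ω → F z = 0 := by
    intro z hz
    rcases hz with hz | hz
    · simp [hFdef, henΩ _ hz]
    · simp [hFdef, henΩ _ hz]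
  -- Step 1: null sets of ν are null for m x, for a.e. x in Ω
  have hnull : ∀ N : Set X, MeasurableSet N → ν N = 0 → ∀ᵐ x ∂ν', m x N = 0 := by
    intro N hN hN0
    have hmN : Measurable fun x => m x N := (Measure.measurable_coe hN).comp hmeas
    have hf : Measurable (Function.uncurry fun x y =>
        Ω.indicator (fun _ => (1:ℝ≥0∞)) x * N.indicator (fun _ => (1:ℝ≥0∞)) y) :=
      ((measurable_const.indicator hΩm).comp measurable_fst).mul
        ((measurable_const.indicator hN).comp measurable_snd)
    have h := hrev _ hf
    have hL : ∫⁻ x, ∫⁻ y, Ω.indicator (fun _ => (1:ℝ≥0∞)) x *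
        N.indicator (fun _ => (1:ℝ≥0∞)) y ∂(m x) ∂ν
        = ∫⁻ x, Ω.indicator (fun _ => (1:ℝ≥0∞)) x * m x N ∂ν := by
      refine lintegral_congr fun x => ?_
      rw [lintegral_const_mul' _ _ (by by_cases hx : x ∈ Ω <;> simp [hx]),
        lintegral_indicator hN, setLIntegral_one]
    have hR : ∫⁻ x, ∫⁻ y, Ω.indicator (fun _ => (1:ℝ≥0∞)) y *
        N.indicator (fun _ => (1:ℝ≥0∞)) x ∂(m x) ∂ν
        = ∫⁻ x, N.indicator (fun _ => (1:ℝ≥0∞)) x * m x Ω ∂ν := by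
      refine lintegral_congr fun x => ?_
      rw [lintegral_mul_const' _ _ (by by_cases hx : x ∈ N <;> simp [hx]),
        lintegral_indicator hΩm, setLIntegral_one, mul_comm]
    rw [hL, hR] at h
    have hR0 : ∫⁻ x, N.indicator (fun _ => (1:ℝ≥0∞)) x * m x Ω ∂ν = 0 := by
      have hle : ∫⁻ x, N.indicator (fun _ => (1:ℝ≥0∞)) x * m x Ω ∂ν
          ≤ ∫⁻ x, N.indicator (fun _ => (1:ℝ≥0∞)) x ∂ν := by
        refine lintegral_mono fun x => ?_
        calc N.indicator (fun _ => (1:ℝ≥0∞)) x * m x Ω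
            ≤ N.indicator (fun _ => (1:ℝ≥0∞)) x * 1 :=
              mul_le_mul_right prob_le_one _
          _ = N.indicator (fun _ => (1:ℝ≥0∞)) x := mul_one _
      rw [lintegral_indicator hN, setLIntegral_one, hN0] at hle
      exact le_antisymm hle (zero_le)
    rw [hR0] at h
    have h0 : ∫⁻ x, m x N ∂ν' = 0 := by
      rw [hν'def, ← lintegral_indicator hΩm, ← h]
      refine lintegral_congr fun x => ?_
      by_cases hx : x ∈ Ω <;> simp [Set.indicator_apply, hx]
    have := (lintegral_eq_zero_iff hmN).1 h0
    filter_upwards [this] with x hx using hx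
  -- Step 2: transfer of a.e.-equality into the inner variable
  have htrans : ∀ g g' : X → ℝ, g =ᵐ[ν'] g' →
      ∀ᵐ x ∂ν', ∀ᵐ y ∂(m x), y ∈ Ω → g y = g' y := by
    intro g g' hgg'
    have h0 : ν' {x | ¬ g x = g' x} = 0 := ae_iff.mp hgg'
    obtain ⟨t, hst, htm, ht0⟩ := exists_measurable_superset_of_null h0
    have hνt : ν (t ∩ Ω) = 0 := by
      rw [hν'def, Measure.restrict_apply htm] at ht0
      exact ht0
    filter_upwards [hnull (t ∩ Ω) (htm.inter hΩm) hνt] with x hx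
    filter_upwards [measure_eq_zero_iff_ae_notMem.mp hx] with y hy hyΩ
    by_contra hne
    exact hy ⟨hst hne, hyΩ⟩
  -- Step 3: primed versions of the finiteness hypotheses
  have heEmul : ∀ (x : X) (q : X → ℝ≥0∞), ∫⁻ y, eE y * q y ∂(m x) = ∫⁻ y in Ω, q y ∂(m x) := by
    intro x q
    rw [← lintegral_indicator hΩm]
    refine lintegral_congr fun y => ?_
    by_cases hy : y ∈ Ω <;> simp [heEdef, Set.indicator_apply, hy]
  have hQ₁ : ∫⁻ x, ∫⁻ y, eE y * ENNReal.ofReal (|b₁ x y| ^ p') ∂(m x) ∂ν' < ⊤ := by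
    have e2 : ∫⁻ x, ∫⁻ y, eE y * ENNReal.ofReal (|b₁ x y| ^ p') ∂(m x) ∂ν'
        = ∫⁻ x, ∫⁻ y in Ω, ENNReal.ofReal (|a x y (u₁ y - u₁ x)| ^ p') ∂(m x) ∂ν' := by
      refine lintegral_congr_ae ?_
      filter_upwards [htrans u₁ u₁' hu₁'e, hu₁'e] with x hx hxx
      rw [heEmul]
      refine lintegral_congr_ae ((ae_restrict_iff' hΩm).2 ?_)
      filter_upwards [hx] with y hy hyΩ
      simp only [hb₁def]
      rw [hy hyΩ, hxx]
    rw [e2]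
    exact hF₁
  have hQ₂ : ∫⁻ x, ∫⁻ y, eE y * ENNReal.ofReal (|b₂ x y| ^ p') ∂(m x) ∂ν' < ⊤ := by
    have e2 : ∫⁻ x, ∫⁻ y, eE y * ENNReal.ofReal (|b₂ x y| ^ p') ∂(m x) ∂ν'
        = ∫⁻ x, ∫⁻ y in Ω, ENNReal.ofReal (|a x y (u₂ y - u₂ x)| ^ p') ∂(m x) ∂ν' := by
      refine lintegral_congr_ae ?_
      filter_upwards [htrans u₂ u₂' hu₂'e, hu₂'e] with x hx hxx
      rw [heEmul]
      refine lintegral_congr_ae ((ae_restrict_iff' hΩm).2 ?_)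
      filter_upwards [hx] with y hy hyΩ
      simp only [hb₂def]
      rw [hy hyΩ, hxx]
    rw [e2]
    exact hF₂
  -- Step 4: primed sub/supersolution inequalities
  have hsub' : ∀ᵐ x ∂ν', v₁' x - ∫ y in Ω, b₁ x y ∂(m x) ≤ φ₁' x := by
    filter_upwards [ae_restrict_of_ae hsub, ae_restrict_mem hΩm, hu₁'e, hv₁'e, hφ₁'e,
      htrans u₁ u₁' hu₁'e] with x hx hxΩ he1 he2 he3 he4
    have hint : ∫ y in Ω, a x y (u₁ y - u₁ x) ∂(m x) = ∫ y in Ω, b₁ x y ∂(m x) := by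
      refine integral_congr_ae ((ae_restrict_iff' hΩm).2 ?_)
      filter_upwards [he4] with y hy hyΩ
      simp only [hb₁def]
      rw [hy hyΩ, he1]
    rw [← he2, ← he3, ← hint]
    exact hx hxΩ
  have hsup' : ∀ᵐ x ∂ν', φ₂' x ≤ v₂' x - ∫ y in Ω, b₂ x y ∂(m x) := by
    filter_upwards [ae_restrict_of_ae hsup, ae_restrict_mem hΩm, hu₂'e, hv₂'e, hφ₂'e,
      htrans u₂ u₂' hu₂'e] with x hx hxΩ he1 he2 he3 he4
    have hint : ∫ y in Ω, a x y (u₂ y - u₂ x) ∂(m x) = ∫ y in Ω, b₂ x y ∂(m x) := by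
      refine integral_congr_ae ((ae_restrict_iff' hΩm).2 ?_)
      filter_upwards [he4] with y hy hyΩ
      simp only [hb₂def]
      rw [hy hyΩ, he1]
    rw [← he2, ← he3, ← hint]
    exact hx hxΩ
  -- Step 5: F is integrable on the product
  have hq₁m : Measurable fun z : X × X => ENNReal.ofReal (|b₁ z.1 z.2| ^ p') := by
    exact ENNReal.measurable_ofReal.comp ((hb₁m.abs).pow_const p')
  have hq₂m : Measurable fun z : X × X => ENNReal.ofReal (|b₂ z.1 z.2| ^ p') := by
    exact ENNReal.measurable_ofReal.comp ((hb₂m.abs).pow_const p')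
  have hμfin : μ Set.univ < ⊤ := by
    rw [hμdef, Measure.compProd_apply_univ]
    exact measure_lt_top ν' _
  have hQbound : ∫⁻ z, eE z.1 * eE z.2 *
      (2 + ENNReal.ofReal (|b₁ z.1 z.2| ^ p') + ENNReal.ofReal (|b₂ z.1 z.2| ^ p')) ∂μ < ⊤ := by
    have hle : ∀ z : X × X, eE z.1 * eE z.2 *
        (2 + ENNReal.ofReal (|b₁ z.1 z.2| ^ p') + ENNReal.ofReal (|b₂ z.1 z.2| ^ p'))
        ≤ 2 + (eE z.2 * ENNReal.ofReal (|b₁ z.1 z.2| ^ p')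
          + eE z.2 * ENNReal.ofReal (|b₂ z.1 z.2| ^ p')) := by
      intro z
      by_cases hx : z.1 ∈ Ω <;> by_cases hy : z.2 ∈ Ω <;>
        simp [heEdef, Set.indicator_apply, hx, hy, mul_add, add_assoc] <;>
        exact le_add_right (le_refl _)
    refine lt_of_le_of_lt (lintegral_mono hle) ?_
    rw [lintegral_add_left measurable_const]
    have h2 : ∫⁻ _, (2:ℝ≥0∞) ∂μ < ⊤ := by
      rw [lintegral_const]
      exact ENNReal.mul_lt_top (by norm_num) hμfin
    refine ENNReal.add_lt_top.mpr ⟨h2, ?_⟩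
    have hBm1 : Measurable fun z : X × X => eE z.2 * ENNReal.ofReal (|b₁ z.1 z.2| ^ p') :=
      (heEm.comp measurable_snd).mul hq₁m
    have hBm2 : Measurable fun z : X × X => eE z.2 * ENNReal.ofReal (|b₂ z.1 z.2| ^ p') :=
      (heEm.comp measurable_snd).mul hq₂m
    rw [lintegral_add_left hBm1]
    refine ENNReal.add_lt_top.mpr ⟨?_, ?_⟩
    · rw [hμdef, Measure.lintegral_compProd hBm1]
      exact hQ₁
    · rw [hμdef, Measure.lintegral_compProd hBm2]
      exact hQ₂
  have hFptbound : ∀ z : X × X, ENNReal.ofReal ‖F z‖ ≤ eE z.1 * eE z.2 *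
      (2 + ENNReal.ofReal (|b₁ z.1 z.2| ^ p') + ENNReal.ofReal (|b₂ z.1 z.2| ^ p')) := by
    intro z
    by_cases hx : z.1 ∈ Ω
    · by_cases hy : z.2 ∈ Ω
      · have hF1 : |F z| ≤ 2 + (|b₁ z.1 z.2| ^ p' + |b₂ z.1 z.2| ^ p') := by
          have h1 : |F z| ≤ |b₁ z.1 z.2 - b₂ z.1 z.2| := by
            rw [hFdef]
            simp only [heΩ _ hx, heΩ _ hy, one_mul]
            rw [abs_mul]
            calc |ρ z.1| * |b₁ z.1 z.2 - b₂ z.1 z.2|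
                ≤ 1 * |b₁ z.1 z.2 - b₂ z.1 z.2| := by
                  refine mul_le_mul_of_nonneg_right ?_ (abs_nonneg _)
                  rw [abs_of_nonneg (hρ0 _)]
                  exact hρ1 _
              _ = |b₁ z.1 z.2 - b₂ z.1 z.2| := one_mul _
          have h2 : |b₁ z.1 z.2 - b₂ z.1 z.2| ≤ |b₁ z.1 z.2| + |b₂ z.1 z.2| := abs_sub _ _
          have h3 := habs (b₁ z.1 z.2)
          have h4 := habs (b₂ z.1 z.2)
          linarith
        calc ENNReal.ofReal ‖F z‖ = ENNReal.ofReal |F z| := by rw [Real.norm_eq_abs]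
          _ ≤ ENNReal.ofReal (2 + (|b₁ z.1 z.2| ^ p' + |b₂ z.1 z.2| ^ p')) :=
              ENNReal.ofReal_le_ofReal hF1
          _ ≤ eE z.1 * eE z.2 * (2 + ENNReal.ofReal (|b₁ z.1 z.2| ^ p')
              + ENNReal.ofReal (|b₂ z.1 z.2| ^ p')) := by
            simp only [heEdef, Set.indicator_apply, hx, hy, if_true, one_mul]
            rw [ENNReal.ofReal_add (by norm_num)
              (by positivity), ENNReal.ofReal_add (Real.rpow_nonneg (abs_nonneg _) _)
                (Real.rpow_nonneg (abs_nonneg _) _)]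
            simp [ENNReal.ofReal_ofNat]
            rw [add_assoc]
      · rw [hFsupp z (Or.inr hy)]
        simp
    · rw [hFsupp z (Or.inl hx)]
      simp
  have hFint : Integrable F μ := by
    refine ⟨hFsm.aestronglyMeasurable, ?_⟩
    rw [hasFiniteIntegral_iff_norm]
    exact lt_of_le_of_lt (lintegral_mono hFptbound) hQbound
  -- Step 6: swap invariance of lintegrals on μ
  have lswap : ∀ g : X × X → ℝ≥0∞, Measurable g →
      (∀ z : X × X, z.1 ∉ Ω ∨ z.2 ∉ Ω → g z = 0) →
      ∫⁻ z, g z ∂μ = ∫⁻ z, g z.swap ∂μ := by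
    intro g hg hgsupp
    have hswap_meas : Measurable fun z : X × X => g z.swap := hg.comp measurable_swap
    have hGm : Measurable fun x => ∫⁻ y, g (x, y) ∂(m x) :=
      hg.lintegral_kernel_prod_right' (κ := κ)
    have hG'm : Measurable fun x => ∫⁻ y, g (y, x) ∂(m x) :=
      hswap_meas.lintegral_kernel_prod_right' (κ := κ)
    have key := hrev (fun x y => eE x * g (x, y))
      ((heEm.comp measurable_fst).mul hg)
    have eL : ∫⁻ x, ∫⁻ y, eE x * g (x, y) ∂(m x) ∂ν = ∫⁻ z, g z ∂μ := by
      rw [hμdef, Measure.lintegral_compProd hg]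
      have s1 : ∫⁻ x, ∫⁻ y, eE x * g (x, y) ∂(m x) ∂ν
          = ∫⁻ x, Ω.indicator (fun x => ∫⁻ y, g (x, y) ∂(m x)) x ∂ν := by
        refine lintegral_congr fun x => ?_
        rw [lintegral_const_mul' _ _ (by by_cases hx : x ∈ Ω <;> simp [heEdef, hx])]
        by_cases hx : x ∈ Ω <;> simp [heEdef, Set.indicator_apply, hx]
      rw [s1, lintegral_indicator hΩm]
      rfl
    have eR : ∫⁻ x, ∫⁻ y, eE y * g (y, x) ∂(m x) ∂ν = ∫⁻ z, g z.swap ∂μ := by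
      rw [hμdef, Measure.lintegral_compProd hswap_meas]
      have s0 : ∫⁻ x, ∫⁻ y, eE y * g (y, x) ∂(m x) ∂ν
          = ∫⁻ x, ∫⁻ y, eE x * g (y, x) ∂(m x) ∂ν := by
        refine lintegral_congr fun x => lintegral_congr fun y => ?_
        by_cases hgz : g (y, x) = 0
        · simp [hgz]
        · have hy : y ∈ Ω := by
            by_contra hy
            exact hgz (hgsupp (y, x) (Or.inl hy))
          have hx : x ∈ Ω := by
            by_contra hx
            exact hgz (hgsupp (y, x) (Or.inr hx))
          simp [heEdef, Set.indicator_apply, hx, hy]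
      have s1 : ∫⁻ x, ∫⁻ y, eE x * g (y, x) ∂(m x) ∂ν
          = ∫⁻ x, Ω.indicator (fun x => ∫⁻ y, g (y, x) ∂(m x)) x ∂ν := by
        refine lintegral_congr fun x => ?_
        rw [lintegral_const_mul' _ _ (by by_cases hx : x ∈ Ω <;> simp [heEdef, hx])]
        by_cases hx : x ∈ Ω <;> simp [heEdef, Set.indicator_apply, hx]
      rw [s0, s1, lintegral_indicator hΩm]
      rfl
    rw [← eL, ← eR]
    exact key
  -- Step 7: the symmetrized integrand is nonpositive a.e.
  have hGle : ∀ᵐ z ∂μ, F z + F z.swap ≤ 0 := by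
    refine Measure.ae_compProd_of_ae_ae (p := fun z => F z + F z.swap ≤ 0)
      (measurableSet_le (hFm.add (hFm.comp measurable_swap)) measurable_const) ?_
    have hasym' : ∀ᵐ x ∂ν', ∀ᵐ y ∂(m x), ∀ r : ℝ, a x y r = - a y x (-r) :=
      ae_restrict_of_ae hasym
    have hmono' : ∀ᵐ x ∂ν', ∀ᵐ y ∂(m x), ∀ r s : ℝ, r ≠ s →
        0 < (a x y r - a x y s) * (r - s) := ae_restrict_of_ae hmono
    filter_upwards [hasym', hmono'] with x hax hmx
    filter_upwards [hax, hmx] with y hay hmy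
    show F (x, y) + F ((x, y) : X × X).swap ≤ 0
    rw [Prod.swap_prod_mk]
    by_cases hxΩ : x ∈ Ω
    · by_cases hyΩ : y ∈ Ω
      · -- main case
        have hb1 : b₁ y x = - b₁ x y := by
          have h := hay (u₁' y - u₁' x)
          simp only [hb₁def]
          have : u₁' x - u₁' y = -(u₁' y - u₁' x) := by ring
          rw [this]
          linarith
        have hb2 : b₂ y x = - b₂ x y := by
          have h := hay (u₂' y - u₂' x)
          simp only [hb₂def]
          have : u₂' x - u₂' y = -(u₂' y - u₂' x) := by ring
          rw [this]
          linarith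
        have hFxy : F (x, y) = ρ x * (b₁ x y - b₂ x y) := by
          simp [hFdef, heΩ _ hxΩ, heΩ _ hyΩ]
        have hFyx : F (y, x) = - (ρ y * (b₁ x y - b₂ x y)) := by
          simp only [hFdef, heΩ _ hxΩ, heΩ _ hyΩ, one_mul]
          rw [hb1, hb2]
          ring
        rw [hFxy, hFyx]
        set A : ℝ := b₁ x y - b₂ x y with hAdef
        have hgoal : (ρ x - ρ y) * A ≤ 0 := by
          by_cases hw : w y = w x
          · have hr : u₁' y - u₁' x = u₂' y - u₂' x := by
              simp only [hwdef] at hw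
              linarith
            have : A = 0 := by
              simp only [hAdef, hb₁def, hb₂def, hr, sub_self]
            rw [this, mul_zero]
          · have hne : u₁' y - u₁' x ≠ u₂' y - u₂' x := by
              intro h
              apply hw
              simp only [hwdef]
              linarith
            have hpos := hmy (u₁' y - u₁' x) (u₂' y - u₂' x) hne
            have hAw : 0 < A * (w y - w x) := by
              have heq : (a x y (u₁' y - u₁' x) - a x y (u₂' y - u₂' x)) *
                  ((u₁' y - u₁' x) - (u₂' y - u₂' x)) = A * (w y - w x) := by
                simp only [hAdef, hb₁def, hb₂def, hwdef]
                ring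
              rw [← heq]
              exact hpos
            rcases lt_or_gt_of_ne hw with hlt | hgt
            · -- w y < w x
              have hA : A < 0 := by nlinarith
              have hρ : ρ y ≤ ρ x := by
                by_cases hyS : y ∈ S
                · have hwy : 0 ≤ w y := by
                    rcases hyS with h | h
                    · exact le_of_lt h
                    · exact le_of_eq h.1.symm
                  have hxS : x ∈ S := Or.inl (lt_of_le_of_lt hwy hlt)
                  rw [hρS _ hyS, hρS _ hxS]
                · rw [hρnS _ hyS]
                  exact hρ0 _
              nlinarith
            · -- w x < w y
              have hA : 0 < A := by nlinarith
              have hρ : ρ x ≤ ρ y := by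
                by_cases hxS : x ∈ S
                · have hwx : 0 ≤ w x := by
                    rcases hxS with h | h
                    · exact le_of_lt h
                    · exact le_of_eq h.1.symm
                  have hyS : y ∈ S := Or.inl (lt_of_le_of_lt hwx hgt)
                  rw [hρS _ hxS, hρS _ hyS]
                · rw [hρnS _ hxS]
                  exact hρ0 _
              nlinarith
        nlinarith
      · rw [hFsupp (x, y) (Or.inr hyΩ), hFsupp (y, x) (Or.inl hyΩ)]
        norm_num
    · rw [hFsupp (x, y) (Or.inl hxΩ), hFsupp (y, x) (Or.inr hxΩ)]
      norm_num
  -- Step 8: I ≤ 0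
  have hFswapint : Integrable (fun z : X × X => F z.swap) μ := by
    refine ⟨(hFsm.comp_measurable measurable_swap).aestronglyMeasurable, ?_⟩
    rw [hasFiniteIntegral_iff_norm]
    have hsw := lswap (fun z => ENNReal.ofReal ‖F z‖)
      (ENNReal.measurable_ofReal.comp hFm.norm)
      (fun z hz => by show ENNReal.ofReal ‖F z‖ = 0; rw [hFsupp z hz]; simp)
    have : (∫⁻ z, ENNReal.ofReal ‖F z.swap‖ ∂μ) = ∫⁻ z, ENNReal.ofReal ‖F z‖ ∂μ := hsw.symm
    rw [this]
    rw [← hasFiniteIntegral_iff_norm]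
    exact hFint.2
  have hswap_eq : ∫ z, F z ∂μ = ∫ z, F z.swap ∂μ := by
    rw [integral_eq_lintegral_pos_part_sub_lintegral_neg_part hFint,
      integral_eq_lintegral_pos_part_sub_lintegral_neg_part hFswapint]
    have h1 : ∫⁻ z, ENNReal.ofReal (F z) ∂μ = ∫⁻ z, ENNReal.ofReal (F z.swap) ∂μ :=
      lswap (fun z => ENNReal.ofReal (F z)) (ENNReal.measurable_ofReal.comp hFm)
        (fun z hz => by show ENNReal.ofReal (F z) = 0; rw [hFsupp z hz]; simp)
    have h2 : ∫⁻ z, ENNReal.ofReal (-F z) ∂μ = ∫⁻ z, ENNReal.ofReal (-F z.swap) ∂μ :=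
      lswap (fun z => ENNReal.ofReal (-F z)) (ENNReal.measurable_ofReal.comp hFm.neg)
        (fun z hz => by show ENNReal.ofReal (-F z) = 0; rw [hFsupp z hz]; simp)
    rw [h1, h2]
  have hI : ∫ z, F z ∂μ ≤ 0 := by
    have hsum : ∫ z, (F z + F z.swap) ∂μ ≤ 0 := integral_nonpos_of_ae hGle
    rw [integral_add hFint hFswapint] at hsum
    linarith [hswap_eq]
  -- Step 9: a.e. integrability in the inner variable, and the pointwise inequality
  have hBg₁ : Measurable fun z : X × X => eE z.2 * ENNReal.ofReal (|b₁ z.1 z.2| ^ p') :=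
    (heEm.comp measurable_snd).mul hq₁m
  have hBg₂ : Measurable fun z : X × X => eE z.2 * ENNReal.ofReal (|b₂ z.1 z.2| ^ p') :=
    (heEm.comp measurable_snd).mul hq₂m
  have hH₁m : Measurable fun x => ∫⁻ y, eE y * ENNReal.ofReal (|b₁ x y| ^ p') ∂(m x) :=
    hBg₁.lintegral_kernel_prod_right' (κ := κ)
  have hH₂m : Measurable fun x => ∫⁻ y, eE y * ENNReal.ofReal (|b₂ x y| ^ p') ∂(m x) :=
    hBg₂.lintegral_kernel_prod_right' (κ := κ)
  have hH₁ae : ∀ᵐ x ∂ν', (∫⁻ y, eE y * ENNReal.ofReal (|b₁ x y| ^ p') ∂(m x)) < ⊤ :=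
    ae_lt_top hH₁m hQ₁.ne
  have hH₂ae : ∀ᵐ x ∂ν', (∫⁻ y, eE y * ENNReal.ofReal (|b₂ x y| ^ p') ∂(m x)) < ⊤ :=
    ae_lt_top hH₂m hQ₂.ne
  have heEone : ∀ x : X, ∫⁻ y, eE y ∂(m x) < ⊤ := by
    intro x
    rw [heEdef, lintegral_indicator hΩm, setLIntegral_one]
    exact lt_of_le_of_lt prob_le_one (by norm_num)
  have hkey : ∀ᵐ x ∂ν',
      (v₁' x - v₂' x) * ρ x ≤ (φ₁' x - φ₂' x) * ρ x + ∫ y, F (x, y) ∂(m x) := by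
    filter_upwards [hsub', hsup', ae_restrict_mem hΩm, hH₁ae, hH₂ae]
      with x hx1 hx2 hxΩ hfin1 hfin2
    have hbnd : ∀ (b : X → X → ℝ), Measurable (Function.uncurry b) →
        (∫⁻ y, eE y * ENNReal.ofReal (|b x y| ^ p') ∂(m x)) < ⊤ →
        Integrable (fun y => e y * b x y) (m x) := by
      intro b hbm hfinb
      refine ⟨(hem.mul hbm.of_uncurry_left).aestronglyMeasurable, ?_⟩
      rw [hasFiniteIntegral_iff_norm]
      have hb : ∀ y, ENNReal.ofReal ‖e y * b x y‖
          ≤ eE y + eE y * ENNReal.ofReal (|b x y| ^ p') := by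
        intro y
        by_cases hy : y ∈ Ω
        · simp only [heΩ _ hy, heEdef, Set.indicator_apply, hy, if_true, one_mul]
          rw [Real.norm_eq_abs]
          calc ENNReal.ofReal |b x y| ≤ ENNReal.ofReal (1 + |b x y| ^ p') :=
                ENNReal.ofReal_le_ofReal (habs _)
            _ = 1 + ENNReal.ofReal (|b x y| ^ p') := by
                rw [ENNReal.ofReal_add (by norm_num) (Real.rpow_nonneg (abs_nonneg _) _)]
                simp
        · simp [henΩ _ hy, heEdef, Set.indicator_apply, hy]
      refine lt_of_le_of_lt (lintegral_mono hb) ?_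
      rw [lintegral_add_left heEm]
      exact ENNReal.add_lt_top.mpr ⟨heEone x, hfinb⟩
    have hint₁ : Integrable (fun y => e y * b₁ x y) (m x) := hbnd b₁ hb₁m hfin1
    have hint₂ : Integrable (fun y => e y * b₂ x y) (m x) := hbnd b₂ hb₂m hfin2
    have heind : ∀ (b : X → X → ℝ), (∫ y, e y * b x y ∂(m x)) = ∫ y in Ω, b x y ∂(m x) := by
      intro b
      rw [← integral_indicator hΩm]
      refine integral_congr_ae (Filter.Eventually.of_forall fun y => ?_)
      by_cases hy : y ∈ Ω <;> simp [hedef, Set.indicator_apply, hy]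
    have hFinner : ∫ y, F (x, y) ∂(m x)
        = ρ x * ((∫ y in Ω, b₁ x y ∂(m x)) - ∫ y in Ω, b₂ x y ∂(m x)) := by
      have hptF : ∀ y, F (x, y) = (e x * ρ x) * (e y * b₁ x y - e y * b₂ x y) := by
        intro y
        simp only [hFdef]
        ring
      calc ∫ y, F (x, y) ∂(m x)
          = ∫ y, (e x * ρ x) * (e y * b₁ x y - e y * b₂ x y) ∂(m x) :=
            integral_congr_ae (Filter.Eventually.of_forall hptF)
        _ = (e x * ρ x) * ∫ y, (e y * b₁ x y - e y * b₂ x y) ∂(m x) :=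
            integral_const_mul _ _
        _ = (e x * ρ x) * ((∫ y, e y * b₁ x y ∂(m x)) - ∫ y, e y * b₂ x y ∂(m x)) := by
            rw [integral_sub hint₁ hint₂]
        _ = ρ x * ((∫ y in Ω, b₁ x y ∂(m x)) - ∫ y in Ω, b₂ x y ∂(m x)) := by
            rw [heΩ _ hxΩ, one_mul, heind b₁, heind b₂]
    rw [hFinner]
    have hmul := mul_le_mul_of_nonneg_right
      (show v₁' x - v₂' x ≤ (φ₁' x - φ₂' x)
          + ((∫ y in Ω, b₁ x y ∂(m x)) - ∫ y in Ω, b₂ x y ∂(m x)) by linarith)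
      (hρ0 x)
    nlinarith [hmul]
  -- Step 10: integrability of the pieces
  have hinner_int : Integrable (fun x => ∫ y, F (x, y) ∂(m x)) ν' := by
    have h := (Measure.integrable_compProd_iff hFint.aestronglyMeasurable).mp hFint
    refine Integrable.mono h.2
      ((hFsm.integral_kernel_prod_right' (κ := κ)).aestronglyMeasurable) ?_
    refine Filter.Eventually.of_forall fun x => ?_
    calc ‖∫ y, F (x, y) ∂(m x)‖ ≤ ∫ y, ‖F (x, y)‖ ∂(m x) := norm_integral_le_integral_norm _
      _ ≤ ‖∫ y, ‖F (x, y)‖ ∂(m x)‖ := le_abs_self _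
  -- Step 11: conclusion
  have hmax_eq : ∀ᵐ x ∂ν', max (v₁' x - v₂' x) 0 = (v₁' x - v₂' x) * ρ x := by
    filter_upwards [ae_restrict_of_ae hγ₁, ae_restrict_of_ae hβ₁, ae_restrict_of_ae hγ₂,
      ae_restrict_of_ae hβ₂, hu₁'e, hu₂'e, hv₁'e, hv₂'e, ae_restrict_mem hΩm]
      with x hg1 hb1 hg2 hb2 e1 e2 e3 e4 hxΩ
    have hwx : w x = u₁' x - u₂' x := rfl
    have hmono0 : 0 ≤ (v₁' x - v₂' x) * (u₁' x - u₂' x) := by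
      rw [← e1, ← e2, ← e3, ← e4]
      rcases hxΩ with hx1 | hx2
      · exact hγ.1 (hg1 hx1) (hg2 hx1)
      · exact hβ.1 (hb1 hx2) (hb2 hx2)
    by_cases hxS : x ∈ S
    · rw [hρS _ hxS, mul_one]
      have hv : 0 ≤ v₁' x - v₂' x := by
        simp only [hSdef, Set.mem_setOf_eq] at hxS
        rcases hxS with h | h
        · nlinarith [hmono0, h, hwx]
        · linarith [h.2]
      exact max_eq_left hv
    · rw [hρnS _ hxS, mul_zero]
      have hv : v₁' x - v₂' x ≤ 0 := by
        simp only [hSdef, Set.mem_setOf_eq] at hxS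
        push_neg at hxS
        rcases lt_or_eq_of_le hxS.1 with hlt | heq
        · nlinarith [hmono0, hlt, hwx]
        · linarith [hxS.2 heq]
      exact max_eq_right hv
  have hL1 : ∫ x in Ω, max (v₁ x - v₂ x) 0 ∂ν = ∫ x, max (v₁' x - v₂' x) 0 ∂ν' := by
    refine integral_congr_ae ?_
    filter_upwards [hv₁'e, hv₂'e] with x hh1 hh2
    rw [hh1, hh2]
  have hInt_lhs : Integrable (fun x => (v₁' x - v₂' x) * ρ x) ν' := by
    refine Integrable.mono' ((hv₁'int.sub hv₂'int).abs)
      (((hv₁'m.measurable.sub hv₂'m.measurable).mul hρm).aestronglyMeasurable)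
      (Filter.Eventually.of_forall fun x => ?_)
    rw [Real.norm_eq_abs, abs_mul]
    calc |v₁' x - v₂' x| * |ρ x| ≤ |v₁' x - v₂' x| * 1 := by
          refine mul_le_mul_of_nonneg_left ?_ (abs_nonneg _)
          rw [abs_of_nonneg (hρ0 x)]
          exact hρ1 x
      _ = |v₁' x - v₂' x| := mul_one _
  have hInt_φρ : Integrable (fun x => (φ₁' x - φ₂' x) * ρ x) ν' := by
    refine Integrable.mono' ((hφ₁'int.sub hφ₂'int).abs)
      (((hφ₁'m.measurable.sub hφ₂'m.measurable).mul hρm).aestronglyMeasurable)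
      (Filter.Eventually.of_forall fun x => ?_)
    rw [Real.norm_eq_abs, abs_mul]
    calc |φ₁' x - φ₂' x| * |ρ x| ≤ |φ₁' x - φ₂' x| * 1 := by
          refine mul_le_mul_of_nonneg_left ?_ (abs_nonneg _)
          rw [abs_of_nonneg (hρ0 x)]
          exact hρ1 x
      _ = |φ₁' x - φ₂' x| := mul_one _
  have hmono_int : ∫ x, (v₁' x - v₂' x) * ρ x ∂ν'
      ≤ ∫ x, ((φ₁' x - φ₂' x) * ρ x + ∫ y, F (x, y) ∂(m x)) ∂ν' :=
    integral_mono_ae hInt_lhs (hInt_φρ.add hinner_int) hkey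
  have hsplit : ∫ x, ((φ₁' x - φ₂' x) * ρ x + ∫ y, F (x, y) ∂(m x)) ∂ν'
      = (∫ x, (φ₁' x - φ₂' x) * ρ x ∂ν') + ∫ x, ∫ y, F (x, y) ∂(m x) ∂ν' :=
    integral_add hInt_φρ hinner_int
  have hIeq : ∫ x, ∫ y, F (x, y) ∂(m x) ∂ν' = ∫ z, F z ∂μ :=
    (Measure.integral_compProd hFint).symm
  have hmaxφint : Integrable (fun x => max (φ₁' x - φ₂' x) 0) ν' :=
    (hφ₁'int.sub hφ₂'int).pos_part
  have hφρ_le : ∫ x, (φ₁' x - φ₂' x) * ρ x ∂ν' ≤ ∫ x, max (φ₁' x - φ₂' x) 0 ∂ν' := by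
    refine integral_mono_ae hInt_φρ hmaxφint (Filter.Eventually.of_forall fun x => ?_)
    show (φ₁' x - φ₂' x) * ρ x ≤ max (φ₁' x - φ₂' x) 0
    by_cases hxS : x ∈ S
    · rw [hρS _ hxS, mul_one]
      exact le_max_left _ _
    · rw [hρnS _ hxS, mul_zero]
      exact le_max_right _ _
  have hR : ∫ x, max (φ₁' x - φ₂' x) 0 ∂ν' = ∫ x in Ω, max (φ₁ x - φ₂ x) 0 ∂ν := by
    refine integral_congr_ae ?_
    filter_upwards [hφ₁'e, hφ₂'e] with x hh1 hh2
    rw [hh1, hh2]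
  calc ∫ x in Ω, max (v₁ x - v₂ x) 0 ∂ν
      = ∫ x, (v₁' x - v₂' x) * ρ x ∂ν' := by rw [hL1]; exact integral_congr_ae hmax_eq
    _ ≤ (∫ x, (φ₁' x - φ₂' x) * ρ x ∂ν') + ∫ z, F z ∂μ := by
        rw [← hIeq, ← hsplit]; exact hmono_int
    _ ≤ (∫ x, max (φ₁' x - φ₂' x) 0 ∂ν') + 0 := add_le_add hφρ_le hI
    _ = ∫ x in Ω, max (φ₁ x - φ₂ x) 0 ∂ν := by rw [add_zero, hR]
end

section
/- Mass balance necessary condition: If [u,v] is a solution of the nonlocal stationary problem (GP_φ), then ℛ⁻ ≤ ∫_Ω φ dν ≤ ℛ⁺, where ℛ⁻ := ν(Ω₁)·inf Ran(γ) + ν(Ω₂)·inf Ran(β) and ℛ⁺ := ν(Ω₁)·sup Ran(γ) + ν(Ω₂)·sup Ran(β). -/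
open MeasureTheory
open scoped ENNReal

/-- The range of a set-valued map, as a subset of `EReal`. -/
def graphRange (θ : ℝ → Set ℝ) : Set EReal :=
  (fun z : ℝ => (z : EReal)) '' {z : ℝ | ∃ s : ℝ, z ∈ θ s}

open ProbabilityTheory in
private lemma auxInf {X : Type*} [MeasurableSpace X] (ν : Measure X) (s : Set X)
    (hfin : ν s ≠ ⊤) (f : X → ℝ) (hf : Integrable f (ν.restrict s))
    (θ : ℝ → Set ℝ) (h0 : ∃ t, (0:ℝ) ∈ θ t)
    (hmem : ∀ᵐ x ∂ν.restrict s, ∃ t, f x ∈ θ t) :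
    ((ν s).toReal : EReal) * sInf (graphRange θ) ≤ ((∫ x in s, f x ∂ν : ℝ) : EReal) := by
  haveI : IsFiniteMeasure (ν.restrict s) :=
    ⟨by rw [Measure.restrict_apply_univ]; exact hfin.lt_top⟩
  have h0' : ((0:ℝ) : EReal) ∈ graphRange θ := ⟨0, ⟨h0.choose, h0.choose_spec⟩, rfl⟩
  have hItop : sInf (graphRange θ) ≠ ⊤ :=
    ((sInf_le h0').trans_lt (EReal.coe_lt_top 0)).ne
  rcases eq_or_ne ((ν s).toReal) 0 with hc | hc
  · have hν0 : ν s = 0 := by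
      rcases (ENNReal.toReal_eq_zero_iff _).mp hc with h | h
      · exact h
      · exact absurd h hfin
    have hint : (∫ x in s, f x ∂ν) = 0 := by
      rw [Measure.restrict_eq_zero.mpr hν0, integral_zero_measure]
    rw [hc, hint]
    simp
  · have hcpos : (0:ℝ) < (ν s).toReal := (ENNReal.toReal_nonneg).lt_of_ne (Ne.symm hc)
    rcases eq_or_ne (sInf (graphRange θ)) ⊥ with hI | hI
    · rw [hI, EReal.mul_bot_of_pos (by exact_mod_cast hcpos)]; exact bot_le
    · set r := (sInf (graphRange θ)).toReal with hr
      have hrI : (r : EReal) = sInf (graphRange θ) := EReal.coe_toReal hItop hI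
      have hub : ∀ᵐ x ∂ν.restrict s, r ≤ f x := by
        filter_upwards [hmem] with x hx
        obtain ⟨t, ht⟩ := hx
        have : (r : EReal) ≤ (f x : EReal) := hrI ▸ sInf_le ⟨f x, ⟨t, ht⟩, rfl⟩
        exact_mod_cast this
      have hle : (ν s).toReal * r ≤ ∫ x in s, f x ∂ν := by
        have hconst : ∫ _x in s, r ∂ν = (ν s).toReal * r := by
          rw [setIntegral_const, smul_eq_mul]; rfl
        rw [← hconst]
        exact integral_mono_ae (integrable_const r) hf hub
      calc ((ν s).toReal : EReal) * sInf (graphRange θ)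
          = (((ν s).toReal * r : ℝ) : EReal) := by rw [← hrI, ← EReal.coe_mul]
        _ ≤ _ := EReal.coe_le_coe_iff.mpr hle

private lemma auxSup {X : Type*} [MeasurableSpace X] (ν : Measure X) (s : Set X)
    (hfin : ν s ≠ ⊤) (f : X → ℝ) (hf : Integrable f (ν.restrict s))
    (θ : ℝ → Set ℝ) (h0 : ∃ t, (0:ℝ) ∈ θ t)
    (hmem : ∀ᵐ x ∂ν.restrict s, ∃ t, f x ∈ θ t) :
    ((∫ x in s, f x ∂ν : ℝ) : EReal) ≤ ((ν s).toReal : EReal) * sSup (graphRange θ) := by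
  haveI : IsFiniteMeasure (ν.restrict s) :=
    ⟨by rw [Measure.restrict_apply_univ]; exact hfin.lt_top⟩
  have h0' : ((0:ℝ) : EReal) ∈ graphRange θ := ⟨0, ⟨h0.choose, h0.choose_spec⟩, rfl⟩
  have hIbot : sSup (graphRange θ) ≠ ⊥ :=
    ((EReal.bot_lt_coe 0).trans_le (le_sSup h0')).ne'
  rcases eq_or_ne ((ν s).toReal) 0 with hc | hc
  · have hν0 : ν s = 0 := by
      rcases (ENNReal.toReal_eq_zero_iff _).mp hc with h | h
      · exact h
      · exact absurd h hfin
    have hint : (∫ x in s, f x ∂ν) = 0 := by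
      rw [Measure.restrict_eq_zero.mpr hν0, integral_zero_measure]
    rw [hc, hint]
    simp
  · have hcpos : (0:ℝ) < (ν s).toReal := (ENNReal.toReal_nonneg).lt_of_ne (Ne.symm hc)
    rcases eq_or_ne (sSup (graphRange θ)) ⊤ with hI | hI
    · rw [hI, EReal.mul_top_of_pos (by exact_mod_cast hcpos)]; exact le_top
    · set r := (sSup (graphRange θ)).toReal with hr
      have hrI : (r : EReal) = sSup (graphRange θ) := EReal.coe_toReal hI hIbot
      have hub : ∀ᵐ x ∂ν.restrict s, f x ≤ r := by
        filter_upwards [hmem] with x hx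
        obtain ⟨t, ht⟩ := hx
        have : (f x : EReal) ≤ (r : EReal) := hrI ▸ le_sSup ⟨f x, ⟨t, ht⟩, rfl⟩
        exact_mod_cast this
      have hle : ∫ x in s, f x ∂ν ≤ (ν s).toReal * r := by
        have hconst : ∫ _x in s, r ∂ν = (ν s).toReal * r := by
          rw [setIntegral_const, smul_eq_mul]; rfl
        rw [← hconst]
        exact integral_mono_ae hf (integrable_const r) hub
      calc ((∫ x in s, f x ∂ν : ℝ) : EReal)
          ≤ (((ν s).toReal * r : ℝ) : EReal) := EReal.coe_le_coe_iff.mpr hle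
        _ = _ := by rw [← hrI, ← EReal.coe_mul]

/-- Mass balance necessary condition: if `[u,v]` solves `(GP_φ)`, then
`ν(Ω₁)·inf Ran(γ) + ν(Ω₂)·inf Ran(β) ≤ ∫_Ω φ dν ≤ ν(Ω₁)·sup Ran(γ) + ν(Ω₂)·sup Ran(β)`
(inequalities in the extended reals). -/
theorem stmt13 {X : Type*} [MeasurableSpace X] (m : X → Measure X)
    (hprob : ∀ x, IsProbabilityMeasure (m x)) (hmeas : Measurable m)
    (ν : Measure X)
    (hrev : ∀ f : X → X → ℝ≥0∞, Measurable (Function.uncurry f) →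
      ∫⁻ x, ∫⁻ y, f x y ∂(m x) ∂ν = ∫⁻ x, ∫⁻ y, f y x ∂(m x) ∂ν)
    (Ω₁ Ω₂ : Set X) (h1 : MeasurableSet Ω₁) (h2 : MeasurableSet Ω₂)
    (hdisj : Disjoint Ω₁ Ω₂) (hfin : ν (Ω₁ ∪ Ω₂) < ⊤)
    (p p' : ℝ) (hp : 1 < p) (hp' : 1 / p + 1 / p' = 1)
    (a : X → X → ℝ → ℝ)
    (hameas : Measurable (fun z : X × X × ℝ => a z.1 z.2.1 z.2.2))
    (hasym : ∀ᵐ x ∂ν, ∀ᵐ y ∂(m x), ∀ r : ℝ, a x y r = - a y x (-r))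
    (γ β : ℝ → Set ℝ) (hγ : MaximalMonotoneGraph γ) (hβ : MaximalMonotoneGraph β)
    (hγ0 : (0 : ℝ) ∈ γ 0) (hβ0 : (0 : ℝ) ∈ β 0)
    (φ : X → ℝ) (hφ : Integrable φ (ν.restrict (Ω₁ ∪ Ω₂)))
    (u v : X → ℝ)
    (hu : MemLp u (ENNReal.ofReal p) (ν.restrict (Ω₁ ∪ Ω₂)))
    (hv : MemLp v (ENNReal.ofReal p') (ν.restrict (Ω₁ ∪ Ω₂)))
    (hγu : ∀ᵐ x ∂ν, x ∈ Ω₁ → v x ∈ γ (u x))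
    (hβu : ∀ᵐ x ∂ν, x ∈ Ω₂ → v x ∈ β (u x))
    (hF : ∫⁻ x in Ω₁ ∪ Ω₂, ∫⁻ y in Ω₁ ∪ Ω₂,
        ENNReal.ofReal (|a x y (u y - u x)| ^ p') ∂(m x) ∂ν < ⊤)
    (hsol : ∀ᵐ x ∂ν, x ∈ Ω₁ ∪ Ω₂ →
        v x - ∫ y in Ω₁ ∪ Ω₂, a x y (u y - u x) ∂(m x) = φ x) :
    ((ν Ω₁).toReal : EReal) * sInf (graphRange γ)
        + ((ν Ω₂).toReal : EReal) * sInf (graphRange β)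
      ≤ ((∫ x in Ω₁ ∪ Ω₂, φ x ∂ν : ℝ) : EReal) ∧
    ((∫ x in Ω₁ ∪ Ω₂, φ x ∂ν : ℝ) : EReal)
      ≤ ((ν Ω₁).toReal : EReal) * sSup (graphRange γ)
        + ((ν Ω₂).toReal : EReal) * sSup (graphRange β) := by
  open ProbabilityTheory in
  classical
  set Ω : Set X := Ω₁ ∪ Ω₂ with hΩdef
  have hΩ : MeasurableSet Ω := h1.union h2
  set μ : Measure X := ν.restrict Ω with hμdef
  haveI : IsFiniteMeasure μ := ⟨by rw [hμdef, Measure.restrict_apply_univ]; exact hfin⟩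
  set κ : Kernel X X := ⟨m, hmeas⟩ with hκdef
  haveI : IsMarkovKernel κ := ⟨fun x => hprob x⟩
  -- exponent facts
  have hp0 : 0 < p := lt_trans one_pos hp
  have hp'1 : 1 < p' := by
    have h1p : 1 / p < 1 := by rw [div_lt_one hp0]; exact hp
    have hip : 0 < 1 / p := by positivity
    have hip' : 0 < 1 / p' := by linarith
    have hp'pos : 0 < p' := one_div_pos.mp hip'
    have h2 : 1 / p' < 1 := by linarith
    rwa [div_lt_one hp'pos] at h2
  have hp'ne : p' ≠ 0 := by positivity
  -- measurable representative of u
  obtain ⟨u', hu'sm, huu'⟩ := hu.aestronglyMeasurable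
  have hu'meas : Measurable u' := hu'sm.measurable
  set g : X → X → ℝ := fun x y => a x y (u y - u x) with hgdef
  set g' : X → X → ℝ := fun x y => a x y (u' y - u' x) with hg'def
  have hg'meas : Measurable (fun z : X × X => g' z.1 z.2) :=
    hameas.comp (measurable_fst.prodMk (measurable_snd.prodMk
      ((hu'meas.comp measurable_snd).sub (hu'meas.comp measurable_fst))))
  set H : X × X → ℝ := fun z => if z.2 ∈ Ω then g' z.1 z.2 else 0 with hHdef
  have hH : Measurable H :=
    Measurable.ite (hΩ.preimage measurable_snd) hg'meas measurable_const
  -- invariance of ν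
  have hinv : ∀ S : Set X, MeasurableSet S → ∫⁻ x, m x S ∂ν = ν S := by
    intro S hS
    have hmb : Measurable (Function.uncurry (fun (_ : X) y => S.indicator (1 : X → ℝ≥0∞) y)) :=
      (measurable_const.indicator hS).comp measurable_snd
    have h := hrev (fun _ y => S.indicator 1 y) hmb
    have hL : ∫⁻ x, ∫⁻ y, S.indicator (1 : X → ℝ≥0∞) y ∂(m x) ∂ν = ∫⁻ x, m x S ∂ν := by
      refine lintegral_congr fun x => ?_
      exact lintegral_indicator_one hS
    have hR : ∫⁻ x, ∫⁻ _y, S.indicator (1 : X → ℝ≥0∞) x ∂(m x) ∂ν = ν S := by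
      have : ∀ x, ∫⁻ _y, S.indicator (1 : X → ℝ≥0∞) x ∂(m x) = S.indicator 1 x := by
        intro x
        rw [lintegral_const]
        simp [(hprob x).measure_univ]
      rw [lintegral_congr this, lintegral_indicator_one hS]
    rw [hL, hR] at h
    exact h
  -- null set where u ≠ u'
  set T : Set X := toMeasurable μ {x | u x ≠ u' x} with hTdef
  have hTm : MeasurableSet T := measurableSet_toMeasurable _ _
  have hμT : μ T = 0 := by
    rw [measure_toMeasurable]
    exact ae_iff.mp huu'
  set S : Set X := T ∩ Ω with hSdef
  have hSm : MeasurableSet S := hTm.inter hΩ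
  have hνS : ν S = 0 := by
    have := Measure.restrict_apply hTm (μ := ν) (s := Ω)
    rw [hμdef] at hμT
    rw [hSdef, ← this, hμT]
  have hmS : ∀ᵐ x ∂ν, m x S = 0 := by
    have h0 : ∫⁻ x, m x S ∂ν = 0 := (hinv S hSm).trans hνS
    have hm : Measurable fun x => m x S := κ.measurable_coe hSm
    exact (lintegral_eq_zero_iff hm).mp h0
  have E : ∀ᵐ x ∂μ, u x = u' x ∧ ∀ᵐ y ∂(m x), y ∈ Ω → u y = u' y := by
    filter_upwards [huu', ae_restrict_of_ae hmS] with x hx1 hx2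
    refine ⟨hx1, ?_⟩
    have hy : ∀ᵐ y ∂(m x), y ∉ S := (measure_eq_zero_iff_ae_notMem (μ := m x)).mp hx2
    filter_upwards [hy] with y hyS hyΩ
    by_contra hne
    exact hyS ⟨subset_toMeasurable _ _ hne, hyΩ⟩
  -- finiteness
  have hfinF : ∫⁻ x, ∫⁻ y, ENNReal.ofReal (|H (x, y)| ^ p') ∂(m x) ∂μ < ⊤ := by
    have hcongr : ∀ᵐ x ∂μ, ∫⁻ y, ENNReal.ofReal (|H (x, y)| ^ p') ∂(m x)
        = ∫⁻ y in Ω, ENNReal.ofReal (|g x y| ^ p') ∂(m x) := by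
      filter_upwards [E] with x hx
      obtain ⟨hx1, hx2⟩ := hx
      rw [← lintegral_indicator hΩ]
      refine lintegral_congr_ae ?_
      filter_upwards [hx2] with y hy
      by_cases hyΩ : y ∈ Ω
      · have hgg : g' x y = g x y := by simp only [hgdef, hg'def, hx1, hy hyΩ]
        simp [hHdef, hyΩ, Set.indicator_of_mem, hgg]
      · simp [hHdef, hyΩ, Real.zero_rpow hp'ne]
    rw [lintegral_congr_ae hcongr]
    exact hF
  have hHint : Integrable H (μ ⊗ₘ κ) := by
    refine ⟨hH.aestronglyMeasurable, ?_⟩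
    rw [hasFiniteIntegral_iff_norm]
    simp only [Real.norm_eq_abs]
    have hb : ∀ z : X × X, ENNReal.ofReal (|H z|) ≤ 1 + ENNReal.ofReal (|H z| ^ p') := by
      intro z
      rcases le_or_gt (|H z|) 1 with h | h
      · exact (ENNReal.ofReal_le_one.mpr h).trans le_self_add
      · have hle : |H z| ≤ |H z| ^ p' := by
          nth_rewrite 1 [← Real.rpow_one |H z|]
          exact Real.rpow_le_rpow_of_exponent_le h.le hp'1.le
        exact le_trans (ENNReal.ofReal_le_ofReal hle) le_add_self
    calc ∫⁻ z, ENNReal.ofReal (|H z|) ∂(μ ⊗ₘ κ)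
        ≤ ∫⁻ z, (1 + ENNReal.ofReal (|H z| ^ p')) ∂(μ ⊗ₘ κ) := lintegral_mono hb
      _ = (μ ⊗ₘ κ) Set.univ + ∫⁻ z, ENNReal.ofReal (|H z| ^ p') ∂(μ ⊗ₘ κ) := by
          rw [lintegral_add_left measurable_const, lintegral_one]
      _ < ⊤ := by
          have hmeas2 : Measurable fun z : X × X => ENNReal.ofReal (|H z| ^ p') :=
            ENNReal.measurable_ofReal.comp (hH.abs.pow measurable_const)
          rw [Measure.lintegral_compProd hmeas2]
          exact ENNReal.add_lt_top.mpr ⟨measure_lt_top _ _, hfinF⟩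
  -- antisymmetry cancellation
  set q : X × X → ℝ := fun z => if z.1 ∈ Ω ∧ z.2 ∈ Ω then g' z.1 z.2 else 0 with hqdef
  have hqmeas : Measurable q :=
    Measurable.ite ((hΩ.preimage measurable_fst).inter (hΩ.preimage measurable_snd))
      hg'meas measurable_const
  have hAB : (∫⁻ x, ∫⁻ y, ENNReal.ofReal (q (x, y)) ∂(m x) ∂ν)
      = ∫⁻ x, ∫⁻ y, ENNReal.ofReal (-q (x, y)) ∂(m x) ∂ν := by
    have hrw := hrev (fun x y => ENNReal.ofReal (q (x, y)))
      (ENNReal.measurable_ofReal.comp hqmeas)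
    rw [hrw]
    refine lintegral_congr_ae ?_
    filter_upwards [hasym] with x hx
    refine lintegral_congr_ae ?_
    filter_upwards [hx] with y hy
    have key : q (y, x) = - q (x, y) := by
      have hkey : a y x (u' x - u' y) = - a x y (u' y - u' x) := by
        have h := hy (u' y - u' x)
        rw [← neg_sub (u' y) (u' x)]
        linarith
      by_cases hx1 : x ∈ Ω <;> by_cases hy1 : y ∈ Ω <;>
        simp [hqdef, hx1, hy1, hkey, hg'def]
    rw [key]
  have hiterPos : (∫⁻ x, ∫⁻ y, ENNReal.ofReal (q (x, y)) ∂(m x) ∂ν)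
      = ∫⁻ x, ∫⁻ y, ENNReal.ofReal (H (x, y)) ∂(m x) ∂μ := by
    rw [hμdef, ← lintegral_indicator hΩ]
    refine lintegral_congr fun x => ?_
    by_cases hx : x ∈ Ω
    · rw [Set.indicator_of_mem hx]
      refine lintegral_congr fun y => ?_
      congr 1
      by_cases hy : y ∈ Ω <;> simp [hqdef, hHdef, hx, hy]
    · rw [Set.indicator_of_notMem hx]
      have hz : ∀ y, ENNReal.ofReal (q (x, y)) = 0 := fun y => by
        simp [hqdef, hx]
      simp [hz]
  have hiterNeg : (∫⁻ x, ∫⁻ y, ENNReal.ofReal (-q (x, y)) ∂(m x) ∂ν)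
      = ∫⁻ x, ∫⁻ y, ENNReal.ofReal (-H (x, y)) ∂(m x) ∂μ := by
    rw [hμdef, ← lintegral_indicator hΩ]
    refine lintegral_congr fun x => ?_
    by_cases hx : x ∈ Ω
    · rw [Set.indicator_of_mem hx]
      refine lintegral_congr fun y => ?_
      congr 2
      by_cases hy : y ∈ Ω <;> simp [hqdef, hHdef, hx, hy]
    · rw [Set.indicator_of_notMem hx]
      have hz : ∀ y, ENNReal.ofReal (-q (x, y)) = 0 := fun y => by
        simp [hqdef, hx]
      simp [hz]
  have hκm : ∀ x : X, (κ x : Measure X) = m x := fun _ => rfl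
  have hcompPos : ∫⁻ z, ENNReal.ofReal (H z) ∂(μ ⊗ₘ κ)
      = ∫⁻ x, ∫⁻ y, ENNReal.ofReal (H (x, y)) ∂(m x) ∂μ := by
    rw [Measure.lintegral_compProd hH.ennreal_ofReal]
    exact lintegral_congr fun x => by rw [hκm]
  have hcompNeg : ∫⁻ z, ENNReal.ofReal (-H z) ∂(μ ⊗ₘ κ)
      = ∫⁻ x, ∫⁻ y, ENNReal.ofReal (-H (x, y)) ∂(m x) ∂μ := by
    rw [Measure.lintegral_compProd (f := fun z => ENNReal.ofReal (-H z)) hH.neg.ennreal_ofReal]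
    exact lintegral_congr fun x => by rw [hκm]
  have hABP : ∫⁻ z, ENNReal.ofReal (H z) ∂(μ ⊗ₘ κ)
      = ∫⁻ z, ENNReal.ofReal (-H z) ∂(μ ⊗ₘ κ) := by
    rw [hcompPos, hcompNeg, ← hiterPos, ← hiterNeg, hAB]
  have hint0 : ∫ z, H z ∂(μ ⊗ₘ κ) = 0 := by
    rw [MeasureTheory.integral_eq_lintegral_pos_part_sub_lintegral_neg_part hHint, hABP,
      sub_self]
  have hW0 : ∫ x, (∫ y, H (x, y) ∂(m x)) ∂μ = 0 := by
    rw [← hint0, Measure.integral_compProd hHint]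
    rfl
  have hWint : Integrable (fun x => ∫ y, H (x, y) ∂(m x)) μ := by
    have hmi := (Measure.integrable_compProd_iff hHint.aestronglyMeasurable).mp hHint
    refine hmi.2.mono ?_ ?_
    · exact (hH.stronglyMeasurable.integral_kernel_prod_right' (κ := κ)).aestronglyMeasurable
    · refine Filter.Eventually.of_forall fun x => ?_
      rw [Real.norm_eq_abs (∫ y, ‖H (x, y)‖ ∂(κ x))]
      exact (norm_integral_le_integral_norm _).trans (le_abs_self _)
  set w : X → ℝ := fun x => ∫ y in Ω, g x y ∂(m x) with hwdef
  have hwW : w =ᵐ[μ] fun x => ∫ y, H (x, y) ∂(m x) := by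
    filter_upwards [E] with x hx
    obtain ⟨hx1, hx2⟩ := hx
    have hHind : (fun y => H (x, y)) = Ω.indicator (fun y => g' x y) := by
      funext y; simp [hHdef, Set.indicator_apply]
    have hrhs : ∫ y, H (x, y) ∂(m x) = ∫ y in Ω, g' x y ∂(m x) := by
      rw [hHind, integral_indicator hΩ]
    show w x = ∫ y, H (x, y) ∂(m x)
    rw [hrhs, hwdef]
    refine setIntegral_congr_ae hΩ ?_
    filter_upwards [hx2] with y hy hyΩ
    simp [hgdef, hg'def, hx1, hy hyΩ]
  have hp'ge1 : (1 : ℝ≥0∞) ≤ ENNReal.ofReal p' := by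
    rw [ENNReal.one_le_ofReal]; exact hp'1.le
  have hvint : Integrable v μ := hv.integrable hp'ge1
  have hwint : Integrable w μ := hWint.congr hwW.symm
  have hsol' : ∀ᵐ x ∂μ, φ x = v x - w x := by
    filter_upwards [ae_restrict_of_ae hsol, ae_restrict_mem hΩ] with x hx hxΩ
    rw [← hx hxΩ]
  have hw0 : ∫ x, w x ∂μ = 0 := by
    rw [integral_congr_ae hwW]; exact hW0
  have hsplit : ∫ x, v x ∂μ = ∫ x in Ω₁, v x ∂ν + ∫ x in Ω₂, v x ∂ν := by
    rw [hμdef, hΩdef]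
    exact setIntegral_union hdisj h2
      (hvint.mono_measure (Measure.restrict_mono Set.subset_union_left le_rfl))
      (hvint.mono_measure (Measure.restrict_mono Set.subset_union_right le_rfl))
  have hφeq : ∫ x, φ x ∂μ = ∫ x in Ω₁, v x ∂ν + ∫ x in Ω₂, v x ∂ν := by
    rw [integral_congr_ae hsol', integral_sub hvint hwint, hw0, sub_zero, hsplit]
  -- final assembly
  have hsub1 : Ω₁ ⊆ Ω := by rw [hΩdef]; exact Set.subset_union_left
  have hsub2 : Ω₂ ⊆ Ω := by rw [hΩdef]; exact Set.subset_union_right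
  have hν1 : ν Ω₁ ≠ ⊤ := ((measure_mono hsub1).trans_lt hfin).ne
  have hν2 : ν Ω₂ ≠ ⊤ := ((measure_mono hsub2).trans_lt hfin).ne
  have hv1 : Integrable v (ν.restrict Ω₁) :=
    hvint.mono_measure (Measure.restrict_mono hsub1 le_rfl)
  have hv2 : Integrable v (ν.restrict Ω₂) :=
    hvint.mono_measure (Measure.restrict_mono hsub2 le_rfl)
  have hmem1 : ∀ᵐ x ∂ν.restrict Ω₁, ∃ t, v x ∈ γ t := by
    filter_upwards [ae_restrict_of_ae hγu, ae_restrict_mem h1] with x hx hx1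
    exact ⟨u x, hx hx1⟩
  have hmem2 : ∀ᵐ x ∂ν.restrict Ω₂, ∃ t, v x ∈ β t := by
    filter_upwards [ae_restrict_of_ae hβu, ae_restrict_mem h2] with x hx hx2
    exact ⟨u x, hx hx2⟩
  have hb1 := auxInf ν Ω₁ hν1 v hv1 γ ⟨0, hγ0⟩ hmem1
  have hb2 := auxInf ν Ω₂ hν2 v hv2 β ⟨0, hβ0⟩ hmem2
  have hb3 := auxSup ν Ω₁ hν1 v hv1 γ ⟨0, hγ0⟩ hmem1
  have hb4 := auxSup ν Ω₂ hν2 v hv2 β ⟨0, hβ0⟩ hmem2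
  have hcoe : ((∫ x, φ x ∂μ : ℝ) : EReal)
      = ((∫ x in Ω₁, v x ∂ν : ℝ) : EReal) + ((∫ x in Ω₂, v x ∂ν : ℝ) : EReal) := by
    rw [← EReal.coe_add]
    exact_mod_cast hφeq
  constructor
  · rw [hcoe]; exact add_le_add hb1 hb2
  · rw [hcoe]; exact add_le_add hb3 hb4
end

section
/- Uniqueness up to constants: Let φ ∈ L¹(Ω,ν) and let [u₁,v₁] and [u₂,v₂] be two solutions of (GP_φ). Then v₁ = v₂ ν-a.e. in Ω and u₁ − u₂ is ν-a.e. equal to a constant. -/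
open MeasureTheory
open scoped ENNReal

open Function ProbabilityTheory

section Helpers

variable {X : Type*} [MeasurableSpace X] {m : X → Measure X} {ν : Measure X}

/-- Kernel built from `m`. -/
noncomputable def mker (hmeas : Measurable m) : Kernel X X := ⟨m, hmeas⟩

lemma mker_apply (hmeas : Measurable m) (x : X) : mker hmeas x = m x := rfl

lemma meas_klint (hprob : ∀ x, IsProbabilityMeasure (m x)) (hmeas : Measurable m)
    {F : X → X → ℝ≥0∞} (hF : Measurable (uncurry F)) :
    Measurable fun x => ∫⁻ y, F x y ∂ m x := by
  haveI : IsMarkovKernel (mker hmeas) := ⟨fun x => hprob x⟩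
  exact hF.lintegral_kernel_prod_right (κ := mker hmeas)

lemma meas_klint_set (hprob : ∀ x, IsProbabilityMeasure (m x)) (hmeas : Measurable m)
    {F : X → X → ℝ≥0∞} (hF : Measurable (uncurry F)) {s : Set X} (hs : MeasurableSet s) :
    Measurable fun x => ∫⁻ y in s, F x y ∂ m x := by
  haveI : IsMarkovKernel (mker hmeas) := ⟨fun x => hprob x⟩
  exact Measurable.setLIntegral_kernel_prod_right (κ := mker hmeas) hF hs

lemma smeas_kint (hprob : ∀ x, IsProbabilityMeasure (m x)) (hmeas : Measurable m)
    {g : X → X → ℝ} (hg : Measurable (uncurry g)) :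
    StronglyMeasurable fun x => ∫ y, g x y ∂ m x := by
  haveI : IsMarkovKernel (mker hmeas) := ⟨fun x => hprob x⟩
  exact hg.stronglyMeasurable.integral_kernel_prod_right (κ := mker hmeas)


lemma iter_integrable (hprob : ∀ x, IsProbabilityMeasure (m x)) (hmeas : Measurable m)
    {g : X → X → ℝ} (hg : Measurable (uncurry g))
    (hfin : ∫⁻ x, ∫⁻ y, (‖g x y‖₊ : ℝ≥0∞) ∂ m x ∂ν ≠ ∞) :
    Integrable (fun x => ∫ y, g x y ∂ m x) ν := by
  refine ⟨(smeas_kint hprob hmeas hg).aestronglyMeasurable, ?_⟩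
  rw [hasFiniteIntegral_def]
  calc ∫⁻ x, (‖∫ y, g x y ∂ m x‖₊ : ℝ≥0∞) ∂ν
      ≤ ∫⁻ x, ∫⁻ y, (‖g x y‖₊ : ℝ≥0∞) ∂ m x ∂ν :=
        lintegral_mono fun x => enorm_integral_le_lintegral_enorm _
    _ < ∞ := hfin.lt_top

lemma iter_formula (hprob : ∀ x, IsProbabilityMeasure (m x)) (hmeas : Measurable m)
    {g : X → X → ℝ} (hg : Measurable (uncurry g))
    (hfin : ∫⁻ x, ∫⁻ y, (‖g x y‖₊ : ℝ≥0∞) ∂ m x ∂ν ≠ ∞) :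
    ∫ x, ∫ y, g x y ∂ m x ∂ν =
      (∫⁻ x, ∫⁻ y, ENNReal.ofReal (g x y) ∂ m x ∂ν).toReal -
      (∫⁻ x, ∫⁻ y, ENNReal.ofReal (-g x y) ∂ m x ∂ν).toReal := by
  have hgn : Measurable (uncurry fun x y => (‖g x y‖₊ : ℝ≥0∞)) :=
    (measurable_coe_nnreal_ennreal.comp hg.nnnorm)
  have hgp : Measurable (uncurry fun x y => ENNReal.ofReal (g x y)) :=
    ENNReal.measurable_ofReal.comp hg
  have hgm : Measurable (uncurry fun x y => ENNReal.ofReal (-g x y)) :=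
    ENNReal.measurable_ofReal.comp hg.neg
  have hN : Measurable fun x => ∫⁻ y, (‖g x y‖₊ : ℝ≥0∞) ∂ m x := meas_klint hprob hmeas hgn
  have hP : Measurable fun x => ∫⁻ y, ENNReal.ofReal (g x y) ∂ m x := meas_klint hprob hmeas hgp
  have hM : Measurable fun x => ∫⁻ y, ENNReal.ofReal (-g x y) ∂ m x := meas_klint hprob hmeas hgm
  have hae : ∀ᵐ x ∂ν, ∫⁻ y, (‖g x y‖₊ : ℝ≥0∞) ∂ m x < ∞ := ae_lt_top hN hfin
  have hple : ∀ x, (∫⁻ y, ENNReal.ofReal (g x y) ∂ m x) ≤ ∫⁻ y, (‖g x y‖₊ : ℝ≥0∞) ∂ m x :=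
    fun x => lintegral_mono fun y => Real.ofReal_le_enorm _
  have hmle : ∀ x, (∫⁻ y, ENNReal.ofReal (-g x y) ∂ m x) ≤ ∫⁻ y, (‖g x y‖₊ : ℝ≥0∞) ∂ m x :=
    fun x => lintegral_mono fun y => by
      have := Real.ofReal_le_enorm (-g x y); rwa [enorm_eq_nnnorm, nnnorm_neg] at this
  have haep : ∀ᵐ x ∂ν, (∫⁻ y, ENNReal.ofReal (g x y) ∂ m x) < ∞ :=
    hae.mono fun x hx => lt_of_le_of_lt (hple x) hx
  have haem : ∀ᵐ x ∂ν, (∫⁻ y, ENNReal.ofReal (-g x y) ∂ m x) < ∞ :=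
    hae.mono fun x hx => lt_of_le_of_lt (hmle x) hx
  have key : ∀ᵐ x ∂ν, ∫ y, g x y ∂ m x =
      (∫⁻ y, ENNReal.ofReal (g x y) ∂ m x).toReal -
      (∫⁻ y, ENNReal.ofReal (-g x y) ∂ m x).toReal := by
    filter_upwards [hae] with x hx
    have hint : Integrable (g x) (m x) :=
      ⟨(hg.comp measurable_prodMk_left).aestronglyMeasurable, by rw [hasFiniteIntegral_def]; exact hx⟩
    exact integral_eq_lintegral_pos_part_sub_lintegral_neg_part hint
  rw [integral_congr_ae key]
  have hip : Integrable (fun x => (∫⁻ y, ENNReal.ofReal (g x y) ∂ m x).toReal) ν := by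
    refine ⟨(hP.ennreal_toReal).aestronglyMeasurable, ?_⟩
    rw [hasFiniteIntegral_def]
    calc ∫⁻ x, (‖(∫⁻ y, ENNReal.ofReal (g x y) ∂ m x).toReal‖₊ : ℝ≥0∞) ∂ν
        ≤ ∫⁻ x, ∫⁻ y, (‖g x y‖₊ : ℝ≥0∞) ∂ m x ∂ν := by
          refine lintegral_mono fun x => ?_
          calc (‖(∫⁻ y, ENNReal.ofReal (g x y) ∂ m x).toReal‖₊ : ℝ≥0∞)
              = ENNReal.ofReal ((∫⁻ y, ENNReal.ofReal (g x y) ∂ m x).toReal) := by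
                rw [← enorm_eq_nnnorm, ← ofReal_norm, Real.norm_of_nonneg ENNReal.toReal_nonneg]
            _ ≤ ∫⁻ y, ENNReal.ofReal (g x y) ∂ m x := ENNReal.ofReal_toReal_le
            _ ≤ _ := hple x
      _ < ∞ := hfin.lt_top
  have him : Integrable (fun x => (∫⁻ y, ENNReal.ofReal (-g x y) ∂ m x).toReal) ν := by
    refine ⟨(hM.ennreal_toReal).aestronglyMeasurable, ?_⟩
    rw [hasFiniteIntegral_def]
    calc ∫⁻ x, (‖(∫⁻ y, ENNReal.ofReal (-g x y) ∂ m x).toReal‖₊ : ℝ≥0∞) ∂ν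
        ≤ ∫⁻ x, ∫⁻ y, (‖g x y‖₊ : ℝ≥0∞) ∂ m x ∂ν := by
          refine lintegral_mono fun x => ?_
          calc (‖(∫⁻ y, ENNReal.ofReal (-g x y) ∂ m x).toReal‖₊ : ℝ≥0∞)
              = ENNReal.ofReal ((∫⁻ y, ENNReal.ofReal (-g x y) ∂ m x).toReal) := by
                rw [← enorm_eq_nnnorm, ← ofReal_norm, Real.norm_of_nonneg ENNReal.toReal_nonneg]
            _ ≤ ∫⁻ y, ENNReal.ofReal (-g x y) ∂ m x := ENNReal.ofReal_toReal_le
            _ ≤ _ := hmle x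
      _ < ∞ := hfin.lt_top
  rw [integral_sub hip him,
    integral_toReal hP.aemeasurable haep, integral_toReal hM.aemeasurable haem]

lemma rev_integral (hprob : ∀ x, IsProbabilityMeasure (m x)) (hmeas : Measurable m)
    (hrev : ∀ f : X → X → ℝ≥0∞, Measurable (Function.uncurry f) →
      ∫⁻ x, ∫⁻ y, f x y ∂(m x) ∂ν = ∫⁻ x, ∫⁻ y, f y x ∂(m x) ∂ν)
    {g : X → X → ℝ} (hg : Measurable (uncurry g))
    (hfin : ∫⁻ x, ∫⁻ y, (‖g x y‖₊ : ℝ≥0∞) ∂ m x ∂ν ≠ ∞) :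
    ∫ x, ∫ y, g x y ∂ m x ∂ν = ∫ x, ∫ y, g y x ∂ m x ∂ν := by
  have hg' : Measurable (uncurry fun x y => g y x) := hg.comp measurable_swap
  have hgn : Measurable (uncurry fun x y => (‖g x y‖₊ : ℝ≥0∞)) :=
    (measurable_coe_nnreal_ennreal.comp hg.nnnorm)
  have hfin' : ∫⁻ x, ∫⁻ y, (‖g y x‖₊ : ℝ≥0∞) ∂ m x ∂ν ≠ ∞ := by
    rw [← hrev _ hgn]; exact hfin
  have hgp : Measurable (uncurry fun x y => ENNReal.ofReal (g x y)) :=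
    ENNReal.measurable_ofReal.comp hg
  have hgm : Measurable (uncurry fun x y => ENNReal.ofReal (-g x y)) :=
    ENNReal.measurable_ofReal.comp hg.neg
  rw [iter_formula hprob hmeas hg hfin, iter_formula hprob hmeas hg' hfin',
    hrev _ hgp, hrev _ hgm]

lemma kernel_null (hprob : ∀ x, IsProbabilityMeasure (m x)) (hmeas : Measurable m)
    (hrev : ∀ f : X → X → ℝ≥0∞, Measurable (Function.uncurry f) →
      ∫⁻ x, ∫⁻ y, f x y ∂(m x) ∂ν = ∫⁻ x, ∫⁻ y, f y x ∂(m x) ∂ν)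
    {N : Set X} (hN : MeasurableSet N) (hν : ν N = 0) :
    ∀ᵐ x ∂ν, m x N = 0 := by
  have hf : Measurable (uncurry fun _ y => N.indicator (1 : X → ℝ≥0∞) y) :=
    Measurable.comp (measurable_one.indicator hN) (measurable_snd : Measurable (Prod.snd : X × X → X))
  have h := hrev _ hf
  have hL : ∫⁻ x, ∫⁻ y, N.indicator (1 : X → ℝ≥0∞) y ∂ m x ∂ν = ∫⁻ x, m x N ∂ν := by
    refine lintegral_congr fun x => ?_
    rw [lintegral_indicator_one hN]
  have hR : ∫⁻ x, ∫⁻ y, N.indicator (1 : X → ℝ≥0∞) x ∂ m x ∂ν = 0 := by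
    have : ∀ x, ∫⁻ y, N.indicator (1 : X → ℝ≥0∞) x ∂ m x = N.indicator 1 x := by
      intro x
      haveI := hprob x
      rw [lintegral_const, measure_univ, mul_one]
    rw [lintegral_congr this, lintegral_indicator_one hN, hν]
  rw [hL, hR] at h
  have hmN : Measurable fun x => m x N := (Measure.measurable_coe hN).comp hmeas
  exact (lintegral_eq_zero_iff hmN).mp h

lemma holder_double (hprob : ∀ x, IsProbabilityMeasure (m x)) (hmeas : Measurable m)
    {Ω : Set X} (hΩ : MeasurableSet Ω) {p q : ℝ} (hpq : p.HolderConjugate q)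
    {F G : X → X → ℝ≥0∞} (hF : Measurable (uncurry F)) (hG : Measurable (uncurry G)) :
    ∫⁻ x in Ω, ∫⁻ y in Ω, F x y * G x y ∂ m x ∂ν ≤
      (∫⁻ x in Ω, ∫⁻ y in Ω, F x y ^ p ∂ m x ∂ν) ^ (1/p) *
      (∫⁻ x in Ω, ∫⁻ y in Ω, G x y ^ q ∂ m x ∂ν) ^ (1/q) := by
  have hFp : Measurable (uncurry fun x y => F x y ^ p) := hF.pow_const p
  have hGq : Measurable (uncurry fun x y => G x y ^ q) := hG.pow_const q
  have hA : Measurable fun x => ∫⁻ y in Ω, F x y ^ p ∂ m x := meas_klint_set hprob hmeas hFp hΩ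
  have hB : Measurable fun x => ∫⁻ y in Ω, G x y ^ q ∂ m x := meas_klint_set hprob hmeas hGq hΩ
  calc ∫⁻ x in Ω, ∫⁻ y in Ω, F x y * G x y ∂ m x ∂ν
      ≤ ∫⁻ x in Ω, (∫⁻ y in Ω, F x y ^ p ∂ m x) ^ (1/p) *
          (∫⁻ y in Ω, G x y ^ q ∂ m x) ^ (1/q) ∂ν := by
        refine lintegral_mono fun x => ?_
        exact ENNReal.lintegral_mul_le_Lp_mul_Lq ((m x).restrict Ω) hpq
          (hF.comp measurable_prodMk_left).aemeasurable
          (hG.comp measurable_prodMk_left).aemeasurable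
    _ ≤ (∫⁻ x in Ω, ((∫⁻ y in Ω, F x y ^ p ∂ m x) ^ (1/p)) ^ p ∂ν) ^ (1/p) *
        (∫⁻ x in Ω, ((∫⁻ y in Ω, G x y ^ q ∂ m x) ^ (1/q)) ^ q ∂ν) ^ (1/q) :=
        ENNReal.lintegral_mul_le_Lp_mul_Lq (ν.restrict Ω) hpq
          (hA.pow_const _).aemeasurable (hB.pow_const _).aemeasurable
    _ = _ := by
        congr 1
        · congr 1
          refine lintegral_congr fun x => ?_
          rw [← ENNReal.rpow_mul, one_div, inv_mul_cancel₀ hpq.ne_zero, ENNReal.rpow_one]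
        · congr 1
          refine lintegral_congr fun x => ?_
          rw [← ENNReal.rpow_mul, one_div, inv_mul_cancel₀ hpq.symm.ne_zero, ENNReal.rpow_one]

lemma ae_const_of_dichotomy {w : X → ℝ} {Ω : Set X}
    (hdich : ∀ t : ℚ, ν {x | x ∈ Ω ∧ w x ≤ t} = 0 ∨ ν {x | x ∈ Ω ∧ (t : ℝ) < w x} = 0) :
    ∃ c : ℝ, ∀ᵐ x ∂ν, x ∈ Ω → w x = c := by
  classical
  set B : ℚ → Set X := fun t => {x | x ∈ Ω ∧ w x ≤ t} with hB
  set A : ℚ → Set X := fun t => {x | x ∈ Ω ∧ (t : ℝ) < w x} with hA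
  have haux : ∀ c : ℝ, ν {x | x ∈ Ω ∧ w x ≠ c} = 0 → ∀ᵐ x ∂ν, x ∈ Ω → w x = c := by
    intro c hc
    rw [ae_iff]
    refine measure_mono_null ?_ hc
    intro x hx
    simp only [Set.mem_setOf_eq, Classical.not_imp] at hx
    exact hx
  have hBmono : ∀ {s t : ℚ}, s ≤ t → B s ⊆ B t := fun {s t} hst x hx =>
    ⟨hx.1, hx.2.trans (by exact_mod_cast hst)⟩
  by_cases hT : ∃ t : ℚ, ν (B t) ≠ 0
  · obtain ⟨t₀, ht₀⟩ := hT
    by_cases hTall : ∀ t : ℚ, ν (B t) ≠ 0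
    · have hAnull : ∀ t : ℚ, ν (A t) = 0 := fun t => (hdich t).resolve_left (hTall t)
      have hΩnull : ν Ω = 0 := by
        have hsub : Ω ⊆ ⋃ t : ℚ, A t := by
          intro x hx
          obtain ⟨t, ht⟩ := exists_rat_lt (w x)
          exact Set.mem_iUnion.mpr ⟨t, hx, ht⟩
        exact measure_mono_null hsub (measure_iUnion_null hAnull)
      exact ⟨0, haux 0 (measure_mono_null (fun x hx => hx.1) hΩnull)⟩
    · push_neg at hTall
      obtain ⟨t₁, ht₁⟩ := hTall
      set S : Set ℝ := {r : ℝ | ∃ t : ℚ, (t : ℝ) = r ∧ ν (B t) ≠ 0} with hS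
      have hSne : S.Nonempty := ⟨(t₀ : ℝ), t₀, rfl, ht₀⟩
      have hSbdd : BddBelow S := by
        refine ⟨(t₁ : ℝ), fun r hr => ?_⟩
        obtain ⟨t, rfl, ht⟩ := hr
        by_contra hlt
        push_neg at hlt
        have htle : t ≤ t₁ := by exact_mod_cast hlt.le
        exact ht (measure_mono_null (hBmono htle) ht₁)
      set c : ℝ := sInf S with hc
      have hBnull : ∀ t : ℚ, (t : ℝ) < c → ν (B t) = 0 := by
        intro t ht
        by_contra hne
        exact absurd (csInf_le hSbdd ⟨t, rfl, hne⟩) (not_le.mpr ht)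
      have hAnull : ∀ t : ℚ, c < (t : ℝ) → ν (A t) = 0 := by
        intro t ht
        have : ∃ r ∈ S, r < (t : ℝ) := by
          by_contra hno
          push_neg at hno
          exact absurd (le_csInf hSne hno) (not_le.mpr ht)
        obtain ⟨r, ⟨t', rfl, ht'⟩, hrt⟩ := this
        have ht'le : t' ≤ t := by exact_mod_cast hrt.le
        have hBt : ν (B t) ≠ 0 := fun h0 => ht' (measure_mono_null (hBmono ht'le) h0)
        exact (hdich t).resolve_left hBt
      refine ⟨c, haux c ?_⟩
      have hsub : {x | x ∈ Ω ∧ w x ≠ c} ⊆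
          (⋃ t : {t : ℚ // (t : ℝ) < c}, B t.1) ∪ (⋃ t : {t : ℚ // c < (t : ℝ)}, A t.1) := by
        rintro x ⟨hxΩ, hxc⟩
        rcases lt_or_gt_of_ne hxc with hlt | hgt
        · obtain ⟨t, hwt, htc⟩ := exists_rat_btwn hlt
          exact Or.inl (Set.mem_iUnion.mpr ⟨⟨t, htc⟩, hxΩ, hwt.le⟩)
        · obtain ⟨t, hct, htw⟩ := exists_rat_btwn hgt
          exact Or.inr (Set.mem_iUnion.mpr ⟨⟨t, hct⟩, hxΩ, htw⟩)
      refine measure_mono_null hsub (measure_union_null ?_ ?_)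
      · exact measure_iUnion_null fun t => hBnull t.1 t.2
      · exact measure_iUnion_null fun t => hAnull t.1 t.2
  · push_neg at hT
    have hΩnull : ν Ω = 0 := by
      have hsub : Ω ⊆ ⋃ t : ℚ, B t := by
        intro x hx
        obtain ⟨t, ht⟩ := exists_rat_gt (w x)
        exact Set.mem_iUnion.mpr ⟨t, hx, ht.le⟩
      exact measure_mono_null hsub (measure_iUnion_null hT)
    exact ⟨0, haux 0 (measure_mono_null (fun x hx => hx.1) hΩnull)⟩
end Helpers

/-- Uniqueness up to constants: if `[u₁,v₁]` and `[u₂,v₂]` are two solutions of `(GP_φ)`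
on the `m`-connected set `Ω = Ω₁ ∪ Ω₂` (where for ν-a.e. `x ∈ Ω`, `m_x⌞Ω` and `ν⌞Ω` are
not mutually singular), then `v₁ = v₂` ν-a.e. in `Ω` and `u₁ - u₂` is ν-a.e. constant. -/
theorem stmt14 {X : Type*} [MeasurableSpace X] (m : X → Measure X)
    (hprob : ∀ x, IsProbabilityMeasure (m x)) (hmeas : Measurable m)
    (ν : Measure X)
    (hrev : ∀ f : X → X → ℝ≥0∞, Measurable (Function.uncurry f) →
      ∫⁻ x, ∫⁻ y, f x y ∂(m x) ∂ν = ∫⁻ x, ∫⁻ y, f y x ∂(m x) ∂ν)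
    (Ω₁ Ω₂ : Set X) (h1 : MeasurableSet Ω₁) (h2 : MeasurableSet Ω₂)
    (hdisj : Disjoint Ω₁ Ω₂) (hfin : ν (Ω₁ ∪ Ω₂) < ⊤)
    (hconn : ∀ A B : Set X, MeasurableSet A → MeasurableSet B →
      A ⊆ Ω₁ ∪ Ω₂ → B ⊆ Ω₁ ∪ Ω₂ → ν A ≠ 0 → ν B ≠ 0 → A ∪ B = Ω₁ ∪ Ω₂ →
      0 < ∫⁻ x in A, m x B ∂ν)
    (hsing : ν {x : X | x ∈ Ω₁ ∪ Ω₂ ∧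
      Measure.MutuallySingular ((m x).restrict (Ω₁ ∪ Ω₂)) (ν.restrict (Ω₁ ∪ Ω₂))} = 0)
    (p p' cp Cp : ℝ) (hp : 1 < p) (hp' : 1 / p + 1 / p' = 1)
    (hcp : 0 < cp) (hCp : 0 < Cp)
    (a : X → X → ℝ → ℝ)
    (hameas : Measurable (fun z : X × X × ℝ => a z.1 z.2.1 z.2.2))
    (hasym : ∀ᵐ x ∂ν, ∀ᵐ y ∂(m x), ∀ r : ℝ, a x y r = - a y x (-r))
    (hmono : ∀ᵐ x ∂ν, ∀ᵐ y ∂(m x), ∀ r s : ℝ, r ≠ s → 0 < (a x y r - a x y s) * (r - s))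
    (hgrowth : ∀ᵐ x ∂ν, ∀ᵐ y ∂(m x), ∀ r : ℝ, |a x y r| ≤ Cp * (1 + |r| ^ (p - 1)))
    (hcoer : ∀ᵐ x ∂ν, ∀ᵐ y ∂(m x), ∀ r : ℝ, cp * |r| ^ p ≤ a x y r * r)
    (γ β : ℝ → Set ℝ) (hγ : MaximalMonotoneGraph γ) (hβ : MaximalMonotoneGraph β)
    (hγ0 : (0 : ℝ) ∈ γ 0) (hβ0 : (0 : ℝ) ∈ β 0)
    (φ : X → ℝ) (hφ : Integrable φ (ν.restrict (Ω₁ ∪ Ω₂)))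
    (u₁ v₁ u₂ v₂ : X → ℝ)
    (hu₁ : MemLp u₁ (ENNReal.ofReal p) (ν.restrict (Ω₁ ∪ Ω₂)))
    (hv₁ : MemLp v₁ (ENNReal.ofReal p') (ν.restrict (Ω₁ ∪ Ω₂)))
    (hu₂ : MemLp u₂ (ENNReal.ofReal p) (ν.restrict (Ω₁ ∪ Ω₂)))
    (hv₂ : MemLp v₂ (ENNReal.ofReal p') (ν.restrict (Ω₁ ∪ Ω₂)))
    (hγ₁ : ∀ᵐ x ∂ν, x ∈ Ω₁ → v₁ x ∈ γ (u₁ x))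
    (hβ₁ : ∀ᵐ x ∂ν, x ∈ Ω₂ → v₁ x ∈ β (u₁ x))
    (hγ₂ : ∀ᵐ x ∂ν, x ∈ Ω₁ → v₂ x ∈ γ (u₂ x))
    (hβ₂ : ∀ᵐ x ∂ν, x ∈ Ω₂ → v₂ x ∈ β (u₂ x))
    (hF₁ : ∫⁻ x in Ω₁ ∪ Ω₂, ∫⁻ y in Ω₁ ∪ Ω₂,
        ENNReal.ofReal (|a x y (u₁ y - u₁ x)| ^ p') ∂(m x) ∂ν < ⊤)
    (hF₂ : ∫⁻ x in Ω₁ ∪ Ω₂, ∫⁻ y in Ω₁ ∪ Ω₂,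
        ENNReal.ofReal (|a x y (u₂ y - u₂ x)| ^ p') ∂(m x) ∂ν < ⊤)
    (hsol₁ : ∀ᵐ x ∂ν, x ∈ Ω₁ ∪ Ω₂ →
        v₁ x - ∫ y in Ω₁ ∪ Ω₂, a x y (u₁ y - u₁ x) ∂(m x) = φ x)
    (hsol₂ : ∀ᵐ x ∂ν, x ∈ Ω₁ ∪ Ω₂ →
        v₂ x - ∫ y in Ω₁ ∪ Ω₂, a x y (u₂ y - u₂ x) ∂(m x) = φ x) :
    (∀ᵐ x ∂ν, x ∈ Ω₁ ∪ Ω₂ → v₁ x = v₂ x) ∧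
      ∃ c : ℝ, ∀ᵐ x ∂ν, x ∈ Ω₁ ∪ Ω₂ → u₁ x - u₂ x = c := by
  classical
  set Ω : Set X := Ω₁ ∪ Ω₂ with hΩdef
  have hΩ : MeasurableSet Ω := h1.union h2
  -- conjugate exponent facts
  have hppos : 0 < p := lt_trans one_pos hp
  have hpq : p.HolderConjugate p' := Real.holderConjugate_iff.mpr ⟨hp, by rw [← one_div, ← one_div]; exact hp'⟩
  have hp'pos : 0 < p' := hpq.symm.pos
  -- measurable representatives
  obtain ⟨u₁', hu₁m, hu₁e⟩ := hu₁.1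
  obtain ⟨u₂', hu₂m, hu₂e⟩ := hu₂.1
  obtain ⟨v₁', hv₁m, hv₁e⟩ := hv₁.1
  obtain ⟨v₂', hv₂m, hv₂e⟩ := hv₂.1
  have hu₁meas : Measurable u₁' := hu₁m.measurable
  have hu₂meas : Measurable u₂' := hu₂m.measurable
  have hv₁meas : Measurable v₁' := hv₁m.measurable
  have hv₂meas : Measurable v₂' := hv₂m.measurable
  -- a common exceptional measurable null set
  set E : Set X := {x | u₁ x ≠ u₁' x} ∪ {x | u₂ x ≠ u₂' x} ∪ {x | v₁ x ≠ v₁' x} ∪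
      {x | v₂ x ≠ v₂' x} with hEdef
  have hEnull : ν.restrict Ω E = 0 := by
    refine measure_union_null (measure_union_null (measure_union_null ?_ ?_) ?_) ?_
    · exact hu₁e
    · exact hu₂e
    · exact hv₁e
    · exact hv₂e
  set N : Set X := toMeasurable (ν.restrict Ω) E ∩ Ω with hNdef
  have hNmeas : MeasurableSet N := (measurableSet_toMeasurable _ _).inter hΩ
  have hNnull : ν N = 0 := by
    have : ν.restrict Ω (toMeasurable (ν.restrict Ω) E) = 0 := by
      rw [measure_toMeasurable]; exact hEnull
    rwa [Measure.restrict_apply (measurableSet_toMeasurable _ _)] at this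
  have hNout : ∀ x, x ∈ Ω → x ∉ N →
      u₁ x = u₁' x ∧ u₂ x = u₂' x ∧ v₁ x = v₁' x ∧ v₂ x = v₂' x := by
    intro x hxΩ hxN
    have hxE : x ∉ E := fun hE => hxN ⟨subset_toMeasurable _ _ hE, hxΩ⟩
    simp only [hEdef, Set.mem_union, Set.mem_setOf_eq, not_or, not_not] at hxE
    exact ⟨hxE.1.1.1, hxE.1.1.2, hxE.1.2, hxE.2⟩
  have hNae : ∀ᵐ x ∂ν, x ∉ N := by
    rw [ae_iff]; simpa using hNnull
  have hker : ∀ᵐ x ∂ν, m x N = 0 := kernel_null hprob hmeas hrev hNmeas hNnull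
  -- the primed integrands
  set A₁ : X → X → ℝ := fun x y => a x y (u₁' y - u₁' x) with hA₁def
  set A₂ : X → X → ℝ := fun x y => a x y (u₂' y - u₂' x) with hA₂def
  set D : X → X → ℝ := fun x y => A₁ x y - A₂ x y with hDdef
  set w : X → ℝ := fun x => u₁' x - u₂' x with hwdef
  have hwmeas : Measurable w := hu₁meas.sub hu₂meas
  have hA₁meas : Measurable (Function.uncurry A₁) := by
    exact hameas.comp (measurable_fst.prodMk (measurable_snd.prodMk
      ((hu₁meas.comp measurable_snd).sub (hu₁meas.comp measurable_fst))))
  have hA₂meas : Measurable (Function.uncurry A₂) := by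
    exact hameas.comp (measurable_fst.prodMk (measurable_snd.prodMk
      ((hu₂meas.comp measurable_snd).sub (hu₂meas.comp measurable_fst))))
  have hDmeas : Measurable (Function.uncurry D) := hA₁meas.sub hA₂meas
  have hA1n : Measurable (Function.uncurry fun x y => (‖A₁ x y‖₊ : ℝ≥0∞) ^ p') := by
    exact hA₁meas.nnnorm.coe_nnreal_ennreal.pow_const p'
  have hA2n : Measurable (Function.uncurry fun x y => (‖A₂ x y‖₊ : ℝ≥0∞) ^ p') := by
    exact hA₂meas.nnnorm.coe_nnreal_ennreal.pow_const p'
  have hDn : Measurable (Function.uncurry fun x y => (‖D x y‖₊ : ℝ≥0∞)) := by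
    exact hDmeas.nnnorm.coe_nnreal_ennreal
  -- transfer the equations to the primed functions
  have hsol₁' : ∀ᵐ x ∂ν, x ∈ Ω → v₁' x - ∫ y in Ω, A₁ x y ∂(m x) = φ x := by
    filter_upwards [hsol₁, hker, hNae] with x hs hk hn hxΩ
    have hx := hNout x hxΩ hn
    have hint : ∫ y in Ω, a x y (u₁ y - u₁ x) ∂(m x) = ∫ y in Ω, A₁ x y ∂(m x) := by
      refine setIntegral_congr_ae hΩ ?_
      have hyN : ∀ᵐ y ∂(m x), y ∉ N := by rw [ae_iff]; simpa using hk
      filter_upwards [hyN] with y hy hyΩ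
      rw [hA₁def]
      simp only
      rw [(hNout y hyΩ hy).1, hx.1]
    rw [← hint, ← hx.2.2.1]
    exact hs hxΩ
  have hsol₂' : ∀ᵐ x ∂ν, x ∈ Ω → v₂' x - ∫ y in Ω, A₂ x y ∂(m x) = φ x := by
    filter_upwards [hsol₂, hker, hNae] with x hs hk hn hxΩ
    have hx := hNout x hxΩ hn
    have hint : ∫ y in Ω, a x y (u₂ y - u₂ x) ∂(m x) = ∫ y in Ω, A₂ x y ∂(m x) := by
      refine setIntegral_congr_ae hΩ ?_
      have hyN : ∀ᵐ y ∂(m x), y ∉ N := by rw [ae_iff]; simpa using hk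
      filter_upwards [hyN] with y hy hyΩ
      rw [hA₂def]
      simp only
      rw [(hNout y hyΩ hy).2.1, hx.2.1]
    rw [← hint, ← hx.2.2.2]
    exact hs hxΩ
  -- transfer the L^{p'} bounds to the primed functions
  have hFtrans : ∀ (u u' : X → ℝ), Measurable u' →
      (∀ x, x ∈ Ω → x ∉ N → u x = u' x) →
      (∫⁻ x in Ω, ∫⁻ y in Ω, ENNReal.ofReal (|a x y (u y - u x)| ^ p') ∂(m x) ∂ν < ⊤) →
      ∫⁻ x in Ω, ∫⁻ y in Ω,
        (‖a x y (u' y - u' x)‖₊ : ℝ≥0∞) ^ p' ∂(m x) ∂ν < ⊤ := by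
    intro u u' hu'm hout hF
    have : ∫⁻ x in Ω, ∫⁻ y in Ω,
        (‖a x y (u' y - u' x)‖₊ : ℝ≥0∞) ^ p' ∂(m x) ∂ν =
        ∫⁻ x in Ω, ∫⁻ y in Ω, ENNReal.ofReal (|a x y (u y - u x)| ^ p') ∂(m x) ∂ν := by
      refine lintegral_congr_ae ?_
      filter_upwards [ae_restrict_of_ae hker, ae_restrict_of_ae hNae, ae_restrict_mem hΩ]
        with x hk hn hxΩ
      refine lintegral_congr_ae ?_
      have hyN : ∀ᵐ y ∂(m x), y ∉ N := by rw [ae_iff]; simpa using hk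
      filter_upwards [ae_restrict_of_ae hyN, ae_restrict_mem hΩ] with y hy hyΩ
      rw [hout y hyΩ hy, hout x hxΩ hn, ← enorm_eq_nnnorm, Real.enorm_eq_ofReal_abs,
        ← ENNReal.ofReal_rpow_of_nonneg (abs_nonneg _) hp'pos.le]
    rw [this]
    exact hF
  have hFA₁ : ∫⁻ x in Ω, ∫⁻ y in Ω, (‖A₁ x y‖₊ : ℝ≥0∞) ^ p' ∂(m x) ∂ν < ⊤ :=
    hFtrans u₁ u₁' hu₁meas (fun x h h' => (hNout x h h').1) hF₁
  have hFA₂ : ∫⁻ x in Ω, ∫⁻ y in Ω, (‖A₂ x y‖₊ : ℝ≥0∞) ^ p' ∂(m x) ∂ν < ⊤ :=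
    hFtrans u₂ u₂' hu₂meas (fun x h h' => (hNout x h h').2.1) hF₂
  -- ℒᵖ bound for w
  have hwLp : ∫⁻ x in Ω, (‖w x‖₊ : ℝ≥0∞) ^ p ∂ν < ⊤ := by
    have hu₁' : MemLp u₁' (ENNReal.ofReal p) (ν.restrict Ω) := hu₁.ae_eq hu₁e
    have hu₂' : MemLp u₂' (ENNReal.ofReal p) (ν.restrict Ω) := hu₂.ae_eq hu₂e
    have hw : MemLp w (ENNReal.ofReal p) (ν.restrict Ω) := hu₁'.sub hu₂'
    have := lintegral_rpow_enorm_lt_top_of_eLpNorm_lt_top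
      (by simp [ENNReal.ofReal_eq_zero, not_le, hppos] : ENNReal.ofReal p ≠ 0)
      ENNReal.ofReal_ne_top hw.2
    rwa [ENNReal.toReal_ofReal hppos.le] at this
  -- transported bound for w in the second variable
  have hwy : ∫⁻ x in Ω, ∫⁻ y in Ω, (‖w y‖₊ : ℝ≥0∞) ^ p ∂(m x) ∂ν < ⊤ := by
    set f : X → X → ℝ≥0∞ := fun x y => Ω.indicator (fun _ => (1 : ℝ≥0∞)) x *
      Ω.indicator (fun z => (‖w z‖₊ : ℝ≥0∞) ^ p) y with hfdef
    have hfmeas : Measurable (Function.uncurry f) := by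
      exact ((measurable_const.indicator hΩ).comp measurable_fst).mul
        (((hwmeas.nnnorm.coe_nnreal_ennreal.pow_const p).indicator hΩ).comp measurable_snd)
    have hswap := hrev f hfmeas
    have hL : ∫⁻ x, ∫⁻ y, f x y ∂(m x) ∂ν =
        ∫⁻ x in Ω, ∫⁻ y in Ω, (‖w y‖₊ : ℝ≥0∞) ^ p ∂(m x) ∂ν := by
      rw [← lintegral_indicator hΩ]
      refine lintegral_congr fun x => ?_
      rw [hfdef]
      simp only
      rw [lintegral_const_mul _ ((hwmeas.nnnorm.coe_nnreal_ennreal.pow_const p).indicator hΩ),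
        lintegral_indicator hΩ]
      by_cases hx : x ∈ Ω <;> simp [hx, Set.indicator_apply]
    have hR : ∫⁻ x, ∫⁻ y, f y x ∂(m x) ∂ν ≤ ∫⁻ x in Ω, (‖w x‖₊ : ℝ≥0∞) ^ p ∂ν := by
      rw [← lintegral_indicator hΩ]
      refine lintegral_mono fun x => ?_
      calc ∫⁻ y, f y x ∂(m x)
          = (∫⁻ y, Ω.indicator (fun _ => (1:ℝ≥0∞)) y ∂(m x)) *
              Ω.indicator (fun z => (‖w z‖₊ : ℝ≥0∞) ^ p) x := by
            rw [← lintegral_mul_const _ (measurable_const.indicator hΩ)]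
        _ ≤ 1 * Ω.indicator (fun z => (‖w z‖₊ : ℝ≥0∞) ^ p) x := by
            refine mul_le_mul_left ?_ _
            haveI := hprob x
            calc ∫⁻ y, Ω.indicator (fun _ => (1:ℝ≥0∞)) y ∂(m x)
                ≤ ∫⁻ _, (1:ℝ≥0∞) ∂(m x) := lintegral_mono fun y => Set.indicator_le_self _ _ _
              _ = 1 := by simp
        _ = _ := one_mul _
    rw [hL] at hswap
    rw [hswap]
    exact lt_of_le_of_lt hR hwLp
  -- L^{p'} bound for D
  have hFD : ∫⁻ x in Ω, ∫⁻ y in Ω, (‖D x y‖₊ : ℝ≥0∞) ^ p' ∂(m x) ∂ν < ⊤ := by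
    have hbd : ∀ x y, (‖D x y‖₊ : ℝ≥0∞) ^ p' ≤
        (2:ℝ≥0∞) ^ p' * ((‖A₁ x y‖₊ : ℝ≥0∞) ^ p' + (‖A₂ x y‖₊ : ℝ≥0∞) ^ p') := by
      intro x y
      have h1 : (‖D x y‖₊ : ℝ≥0∞) ≤ (‖A₁ x y‖₊ : ℝ≥0∞) + (‖A₂ x y‖₊ : ℝ≥0∞) := by
        exact_mod_cast nnnorm_sub_le _ _
      have h2 : (‖A₁ x y‖₊ : ℝ≥0∞) + (‖A₂ x y‖₊ : ℝ≥0∞) ≤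
          2 * max (‖A₁ x y‖₊ : ℝ≥0∞) (‖A₂ x y‖₊ : ℝ≥0∞) := by
        rw [two_mul]
        exact add_le_add (le_max_left _ _) (le_max_right _ _)
      calc (‖D x y‖₊ : ℝ≥0∞) ^ p'
          ≤ (2 * max (‖A₁ x y‖₊ : ℝ≥0∞) (‖A₂ x y‖₊ : ℝ≥0∞)) ^ p' :=
            ENNReal.rpow_le_rpow (h1.trans h2) hp'pos.le
        _ = (2:ℝ≥0∞) ^ p' * (max (‖A₁ x y‖₊ : ℝ≥0∞) (‖A₂ x y‖₊ : ℝ≥0∞)) ^ p' :=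
            ENNReal.mul_rpow_of_nonneg _ _ hp'pos.le
        _ ≤ (2:ℝ≥0∞) ^ p' * ((‖A₁ x y‖₊ : ℝ≥0∞) ^ p' + (‖A₂ x y‖₊ : ℝ≥0∞) ^ p') := by
            refine mul_le_mul_right ?_ _
            rcases max_cases ((‖A₁ x y‖₊ : ℝ≥0∞)) ((‖A₂ x y‖₊ : ℝ≥0∞)) with ⟨hm, _⟩ | ⟨hm, _⟩ <;>
              rw [hm]
            · exact le_add_right le_rfl
            · exact le_add_left le_rfl
    calc ∫⁻ x in Ω, ∫⁻ y in Ω, (‖D x y‖₊ : ℝ≥0∞) ^ p' ∂(m x) ∂ν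
        ≤ ∫⁻ x in Ω, ∫⁻ y in Ω, (2:ℝ≥0∞) ^ p' *
            ((‖A₁ x y‖₊ : ℝ≥0∞) ^ p' + (‖A₂ x y‖₊ : ℝ≥0∞) ^ p') ∂(m x) ∂ν :=
          lintegral_mono fun x => lintegral_mono fun y => hbd x y
      _ = (2:ℝ≥0∞) ^ p' * (∫⁻ x in Ω, ∫⁻ y in Ω,
            ((‖A₁ x y‖₊ : ℝ≥0∞) ^ p' + (‖A₂ x y‖₊ : ℝ≥0∞) ^ p') ∂(m x) ∂ν) := by
          rw [← lintegral_const_mul']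
          · refine lintegral_congr fun x => ?_
            rw [← lintegral_const_mul']
            exact ENNReal.rpow_ne_top_of_nonneg hp'pos.le (by simp)
          · exact ENNReal.rpow_ne_top_of_nonneg hp'pos.le (by simp)
      _ < ⊤ := by
          refine ENNReal.mul_lt_top (ENNReal.rpow_lt_top_of_nonneg hp'pos.le (by simp)) ?_
          have hsplit : ∫⁻ x in Ω, ∫⁻ y in Ω,
              ((‖A₁ x y‖₊ : ℝ≥0∞) ^ p' + (‖A₂ x y‖₊ : ℝ≥0∞) ^ p') ∂(m x) ∂ν =
              (∫⁻ x in Ω, ∫⁻ y in Ω, (‖A₁ x y‖₊ : ℝ≥0∞) ^ p' ∂(m x) ∂ν) +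
              (∫⁻ x in Ω, ∫⁻ y in Ω, (‖A₂ x y‖₊ : ℝ≥0∞) ^ p' ∂(m x) ∂ν) := by
            rw [← lintegral_add_left (meas_klint_set hprob hmeas hA1n hΩ)]
            refine lintegral_congr fun x => ?_
            have hf1 : Measurable fun y => (‖A₁ x y‖₊ : ℝ≥0∞) ^ p' := by
              exact hA1n.comp measurable_prodMk_left
            rw [← lintegral_add_left hf1]
          rw [hsplit]
          exact ENNReal.add_lt_top.mpr ⟨hFA₁, hFA₂⟩
  have hDn' : Measurable (Function.uncurry fun x y => (‖D x y‖₊ : ℝ≥0∞) ^ p') := by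
    exact hDmeas.nnnorm.coe_nnreal_ennreal.pow_const p'
  have hwyn : Measurable (Function.uncurry fun x y : X => (‖w y‖₊ : ℝ≥0∞)) := by
    exact hwmeas.nnnorm.coe_nnreal_ennreal.comp measurable_snd
  have hwxn : Measurable (Function.uncurry fun x y : X => (‖w x‖₊ : ℝ≥0∞)) := by
    exact hwmeas.nnnorm.coe_nnreal_ennreal.comp measurable_fst
  -- finiteness of the mixed double integrals
  have hwxp : ∫⁻ x in Ω, ∫⁻ y in Ω, (‖w x‖₊ : ℝ≥0∞) ^ p ∂(m x) ∂ν < ⊤ := by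
    calc ∫⁻ x in Ω, ∫⁻ y in Ω, (‖w x‖₊ : ℝ≥0∞) ^ p ∂(m x) ∂ν
        ≤ ∫⁻ x in Ω, (‖w x‖₊ : ℝ≥0∞) ^ p ∂ν := by
          refine lintegral_mono fun x => ?_
          haveI := hprob x
          rw [setLIntegral_const]
          calc (‖w x‖₊ : ℝ≥0∞) ^ p * (m x) Ω ≤ (‖w x‖₊ : ℝ≥0∞) ^ p * 1 :=
              mul_le_mul_right prob_le_one _
            _ = _ := mul_one _
      _ < ⊤ := hwLp
  have hG1 : ∫⁻ x in Ω, ∫⁻ y in Ω, (‖D x y‖₊ : ℝ≥0∞) * (‖w x‖₊ : ℝ≥0∞) ∂(m x) ∂ν < ⊤ := by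
    refine lt_of_le_of_lt (holder_double hprob hmeas hΩ hpq.symm hDn hwxn) ?_
    exact ENNReal.mul_lt_top
      (ENNReal.rpow_lt_top_of_nonneg (by positivity) hFD.ne)
      (ENNReal.rpow_lt_top_of_nonneg (by positivity) hwxp.ne)
  have hG2 : ∫⁻ x in Ω, ∫⁻ y in Ω, (‖D x y‖₊ : ℝ≥0∞) * (‖w y‖₊ : ℝ≥0∞) ∂(m x) ∂ν < ⊤ := by
    refine lt_of_le_of_lt (holder_double hprob hmeas hΩ hpq.symm hDn hwyn) ?_
    exact ENNReal.mul_lt_top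
      (ENNReal.rpow_lt_top_of_nonneg (by positivity) hFD.ne)
      (ENNReal.rpow_lt_top_of_nonneg (by positivity) hwy.ne)
  -- a.e. finiteness of the inner integrals
  have haeA₁ : ∀ᵐ x ∂ν.restrict Ω, ∫⁻ y in Ω, (‖A₁ x y‖₊ : ℝ≥0∞) ^ p' ∂(m x) < ⊤ :=
    ae_lt_top (meas_klint_set hprob hmeas hA1n hΩ) hFA₁.ne
  have haeA₂ : ∀ᵐ x ∂ν.restrict Ω, ∫⁻ y in Ω, (‖A₂ x y‖₊ : ℝ≥0∞) ^ p' ∂(m x) < ⊤ :=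
    ae_lt_top (meas_klint_set hprob hmeas hA2n hΩ) hFA₂.ne
  have haeD : ∀ᵐ x ∂ν.restrict Ω, ∫⁻ y in Ω, (‖D x y‖₊ : ℝ≥0∞) ^ p' ∂(m x) < ⊤ :=
    ae_lt_top (meas_klint_set hprob hmeas hDn' hΩ) hFD.ne
  have hwyn' : Measurable (Function.uncurry fun x y : X => (‖w y‖₊ : ℝ≥0∞) ^ p) := by
    exact (hwmeas.nnnorm.coe_nnreal_ennreal.pow_const p).comp measurable_snd
  have haewy : ∀ᵐ x ∂ν.restrict Ω, ∫⁻ y in Ω, (‖w y‖₊ : ℝ≥0∞) ^ p ∂(m x) < ⊤ :=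
    ae_lt_top (meas_klint_set hprob hmeas hwyn' hΩ) hwy.ne
  -- a Hölder-type inner integrability criterion
  have hinner : ∀ (x : X) (f g : X → ℝ), Measurable f → Measurable g →
      (∫⁻ y in Ω, (‖f y‖₊ : ℝ≥0∞) ^ p' ∂(m x)) < ⊤ →
      (∫⁻ y in Ω, (‖g y‖₊ : ℝ≥0∞) ^ p ∂(m x)) < ⊤ →
      Integrable (fun y => f y * g y) ((m x).restrict Ω) := by
    intro x f g hf hg hff hgf
    refine ⟨(hf.mul hg).aestronglyMeasurable, ?_⟩
    rw [hasFiniteIntegral_def]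
    calc ∫⁻ y, (‖f y * g y‖₊ : ℝ≥0∞) ∂((m x).restrict Ω)
        = ∫⁻ y, ((fun z => (‖f z‖₊ : ℝ≥0∞)) * fun z => (‖g z‖₊ : ℝ≥0∞)) y
            ∂((m x).restrict Ω) := by
          refine lintegral_congr fun y => ?_
          simp [nnnorm_mul]
      _ ≤ (∫⁻ y, (‖f y‖₊ : ℝ≥0∞) ^ p' ∂((m x).restrict Ω)) ^ (1/p') *
          (∫⁻ y, (‖g y‖₊ : ℝ≥0∞) ^ p ∂((m x).restrict Ω)) ^ (1/p) :=
          ENNReal.lintegral_mul_le_Lp_mul_Lq _ hpq.symm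
            hf.nnnorm.coe_nnreal_ennreal.aemeasurable
            hg.nnnorm.coe_nnreal_ennreal.aemeasurable
      _ < ⊤ := ENNReal.mul_lt_top
          (ENNReal.rpow_lt_top_of_nonneg (by positivity) hff.ne)
          (ENNReal.rpow_lt_top_of_nonneg (by positivity) hgf.ne)
  have hone : ∀ x : X, ∫⁻ y in Ω, (‖(1:ℝ)‖₊ : ℝ≥0∞) ^ p ∂(m x) < ⊤ := by
    intro x
    haveI := hprob x
    have h1 : ∫⁻ y in Ω, (‖(1:ℝ)‖₊ : ℝ≥0∞) ^ p ∂(m x) = (m x) Ω := by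
      rw [setLIntegral_const]; simp
    rw [h1]
    exact lt_of_le_of_lt prob_le_one ENNReal.one_lt_top
  have hintA₁ : ∀ᵐ x ∂ν.restrict Ω, Integrable (fun y => A₁ x y) ((m x).restrict Ω) := by
    filter_upwards [haeA₁] with x hx
    have := hinner x (fun y => A₁ x y) (fun _ => (1:ℝ))
      (by exact hA₁meas.comp measurable_prodMk_left) measurable_const hx (hone x)
    simpa using this
  have hintA₂ : ∀ᵐ x ∂ν.restrict Ω, Integrable (fun y => A₂ x y) ((m x).restrict Ω) := by
    filter_upwards [haeA₂] with x hx
    have := hinner x (fun y => A₂ x y) (fun _ => (1:ℝ))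
      (by exact hA₂meas.comp measurable_prodMk_left) measurable_const hx (hone x)
    simpa using this
  have hintD : ∀ᵐ x ∂ν.restrict Ω, Integrable (fun y => D x y) ((m x).restrict Ω) := by
    filter_upwards [hintA₁, hintA₂] with x h1x h2x
    exact h1x.sub h2x
  have hintDwy : ∀ᵐ x ∂ν.restrict Ω,
      Integrable (fun y => D x y * w y) ((m x).restrict Ω) := by
    filter_upwards [haeD, haewy] with x hx hwx
    exact hinner x (fun y => D x y) w (by exact hDmeas.comp measurable_prodMk_left)
      hwmeas hx hwx
  have hintDwx : ∀ᵐ x ∂ν.restrict Ω,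
      Integrable (fun y => D x y * w x) ((m x).restrict Ω) := by
    filter_upwards [hintD] with x hx
    exact hx.mul_const (w x)
  -- primed graph conditions
  have hγ₁' : ∀ᵐ x ∂ν, x ∈ Ω₁ → v₁' x ∈ γ (u₁' x) := by
    filter_upwards [hγ₁, hNae] with x h hn hx1
    have hx := hNout x (Set.mem_union_left _ hx1) hn
    rw [← hx.1, ← hx.2.2.1]; exact h hx1
  have hγ₂' : ∀ᵐ x ∂ν, x ∈ Ω₁ → v₂' x ∈ γ (u₂' x) := by
    filter_upwards [hγ₂, hNae] with x h hn hx1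
    have hx := hNout x (Set.mem_union_left _ hx1) hn
    rw [← hx.2.1, ← hx.2.2.2]; exact h hx1
  have hβ₁' : ∀ᵐ x ∂ν, x ∈ Ω₂ → v₁' x ∈ β (u₁' x) := by
    filter_upwards [hβ₁, hNae] with x h hn hx2
    have hx := hNout x (Set.mem_union_right _ hx2) hn
    rw [← hx.1, ← hx.2.2.1]; exact h hx2
  have hβ₂' : ∀ᵐ x ∂ν, x ∈ Ω₂ → v₂' x ∈ β (u₂' x) := by
    filter_upwards [hβ₂, hNae] with x h hn hx2
    have hx := hNout x (Set.mem_union_right _ hx2) hn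
    rw [← hx.2.1, ← hx.2.2.2]; exact h hx2
  -- nonnegativity of the pairing
  set P : ℝ := ∫ x in Ω, (v₁' x - v₂' x) * w x ∂ν with hPdef
  have hP0 : 0 ≤ P := by
    refine setIntegral_nonneg_of_ae_restrict ?_
    filter_upwards [ae_restrict_of_ae hγ₁', ae_restrict_of_ae hγ₂',
      ae_restrict_of_ae hβ₁', ae_restrict_of_ae hβ₂', ae_restrict_mem hΩ]
      with x hg1 hg2 hb1 hb2 hxΩ
    rcases hxΩ with hx1 | hx2
    · exact hγ.1 (hg1 hx1) (hg2 hx1)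
    · exact hβ.1 (hb1 hx2) (hb2 hx2)
  -- P equals the double integral of D x y * w x
  have hPT : P = ∫ x in Ω, ∫ y in Ω, D x y * w x ∂(m x) ∂ν := by
    rw [hPdef]
    refine integral_congr_ae ?_
    filter_upwards [(ae_restrict_iff' hΩ).mpr hsol₁', (ae_restrict_iff' hΩ).mpr hsol₂',
      hintA₁, hintA₂, ae_restrict_mem hΩ] with x hs1 hs2 hi1 hi2 hxΩ
    have hv : v₁' x - v₂' x = ∫ y in Ω, D x y ∂(m x) := by
      have e1 : v₁' x = φ x + ∫ y in Ω, A₁ x y ∂(m x) := by linarith [hs1]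
      have e2 : v₂' x = φ x + ∫ y in Ω, A₂ x y ∂(m x) := by linarith [hs2]
      have h3 : ∫ y in Ω, D x y ∂(m x) =
          (∫ y in Ω, A₁ x y ∂(m x)) - ∫ y in Ω, A₂ x y ∂(m x) := integral_sub hi1 hi2
      rw [e1, e2, h3]
      ring
    rw [hv, ← integral_mul_const]
  -- the swapped double integral
  set g : X → X → ℝ := fun x y => (Ω ×ˢ Ω).indicator (fun z => D z.1 z.2 * w z.1) (x, y)
    with hgdef
  have hgmeas : Measurable (Function.uncurry g) := by
    exact ((hDmeas.mul (hwmeas.comp measurable_fst)).indicator (hΩ.prod hΩ))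
  have hgfin : ∫⁻ x, ∫⁻ y, (‖g x y‖₊ : ℝ≥0∞) ∂(m x) ∂ν ≠ ⊤ := by
    have key : ∀ x, ∫⁻ y, (‖g x y‖₊ : ℝ≥0∞) ∂(m x) =
        Ω.indicator (fun x => ∫⁻ y in Ω, (‖D x y‖₊ : ℝ≥0∞) * (‖w x‖₊ : ℝ≥0∞) ∂(m x)) x := by
      intro x
      by_cases hx : x ∈ Ω
      · rw [Set.indicator_of_mem hx, ← lintegral_indicator hΩ]
        refine lintegral_congr fun y => ?_
        by_cases hy : y ∈ Ω <;>
          simp [hgdef, Set.indicator_apply, Set.mem_prod, hx, hy, nnnorm_mul,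
            ENNReal.coe_mul]
      · rw [Set.indicator_of_notMem hx]
        have : ∀ y, (‖g x y‖₊ : ℝ≥0∞) = 0 := by
          intro y; simp [hgdef, Set.indicator_apply, Set.mem_prod, hx]
        rw [lintegral_congr this, lintegral_zero]
    rw [lintegral_congr key, lintegral_indicator hΩ]
    exact hG1.ne
  have hswap := rev_integral hprob hmeas hrev hgmeas hgfin
  have hgL : ∫ x, ∫ y, g x y ∂(m x) ∂ν = ∫ x in Ω, ∫ y in Ω, D x y * w x ∂(m x) ∂ν := by
    have key : ∀ x, ∫ y, g x y ∂(m x) =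
        Ω.indicator (fun x => ∫ y in Ω, D x y * w x ∂(m x)) x := by
      intro x
      by_cases hx : x ∈ Ω
      · rw [Set.indicator_of_mem hx, ← integral_indicator hΩ]
        refine integral_congr_ae (Filter.Eventually.of_forall fun y => ?_)
        by_cases hy : y ∈ Ω <;> simp [hgdef, Set.indicator_apply, Set.mem_prod, hx, hy]
      · rw [Set.indicator_of_notMem hx]
        have : ∀ y, g x y = 0 := by
          intro y; simp [hgdef, Set.indicator_apply, Set.mem_prod, hx]
        rw [integral_congr_ae (Filter.Eventually.of_forall this), integral_zero]
    rw [integral_congr_ae (Filter.Eventually.of_forall key), integral_indicator hΩ]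
  have hgR : ∫ x, ∫ y, g y x ∂(m x) ∂ν = ∫ x in Ω, ∫ y in Ω, D y x * w y ∂(m x) ∂ν := by
    have key : ∀ x, ∫ y, g y x ∂(m x) =
        Ω.indicator (fun x => ∫ y in Ω, D y x * w y ∂(m x)) x := by
      intro x
      by_cases hx : x ∈ Ω
      · rw [Set.indicator_of_mem hx, ← integral_indicator hΩ]
        refine integral_congr_ae (Filter.Eventually.of_forall fun y => ?_)
        by_cases hy : y ∈ Ω <;> simp [hgdef, Set.indicator_apply, Set.mem_prod, hx, hy]
      · rw [Set.indicator_of_notMem hx]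
        have : ∀ y, g y x = 0 := by
          intro y; simp [hgdef, Set.indicator_apply, Set.mem_prod, hx]
        rw [integral_congr_ae (Filter.Eventually.of_forall this), integral_zero]
    rw [integral_congr_ae (Filter.Eventually.of_forall key), integral_indicator hΩ]
  -- antisymmetry
  have hanti : ∫ x in Ω, ∫ y in Ω, D y x * w y ∂(m x) ∂ν =
      - ∫ x in Ω, ∫ y in Ω, D x y * w y ∂(m x) ∂ν := by
    rw [← integral_neg]
    refine integral_congr_ae ?_
    filter_upwards [ae_restrict_of_ae hasym] with x hx
    have hinner' : ∀ᵐ y ∂(m x), D y x * w y = -(D x y * w y) := by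
      filter_upwards [hx] with y hy
      have h₁ := hy (u₁' y - u₁' x)
      have h₂ := hy (u₂' y - u₂' x)
      have e1 : u₁' x - u₁' y = -(u₁' y - u₁' x) := by ring
      have e2 : u₂' x - u₂' y = -(u₂' y - u₂' x) := by ring
      have hD : D y x = -(D x y) := by
        show a y x (u₁' x - u₁' y) - a y x (u₂' x - u₂' y) = _
        rw [e1, e2]
        have h₁' : a y x (-(u₁' y - u₁' x)) = - a x y (u₁' y - u₁' x) := by linarith
        have h₂' : a y x (-(u₂' y - u₂' x)) = - a x y (u₂' y - u₂' x) := by linarith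
        rw [h₁', h₂']
        show _ = -(a x y (u₁' y - u₁' x) - a x y (u₂' y - u₂' x))
        ring
      rw [hD]; ring
    rw [← integral_neg]
    exact integral_congr_ae (ae_restrict_of_ae hinner')
  have hTW : ∫ x in Ω, ∫ y in Ω, D x y * w x ∂(m x) ∂ν =
      - ∫ x in Ω, ∫ y in Ω, D x y * w y ∂(m x) ∂ν := by
    rw [← hgL, hswap, hgR, hanti]
  -- outer integrability criterion
  have houter : ∀ h : X → X → ℝ, Measurable (Function.uncurry h) →
      (∫⁻ x in Ω, ∫⁻ y in Ω, (‖h x y‖₊ : ℝ≥0∞) ∂(m x) ∂ν) < ⊤ →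
      Integrable (fun x => ∫ y in Ω, h x y ∂(m x)) (ν.restrict Ω) := by
    intro h hmeas' hfin'
    have heq : (fun x => ∫ y in Ω, h x y ∂(m x)) =
        fun x => ∫ y, Ω.indicator (h x) y ∂(m x) := by
      funext x
      rw [integral_indicator hΩ]
    have hindm : Measurable (Function.uncurry fun x y => Ω.indicator (h x) y) := by
      have : (Function.uncurry fun x y => Ω.indicator (h x) y) =
          (Set.univ ×ˢ Ω).indicator (Function.uncurry h) := by
        funext z
        by_cases hz : z.2 ∈ Ω <;>
          simp [Function.uncurry, Set.indicator_apply, Set.mem_prod, hz]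
      rw [this]
      exact hmeas'.indicator (MeasurableSet.univ.prod hΩ)
    refine ⟨?_, ?_⟩
    · rw [heq]
      exact (smeas_kint hprob hmeas hindm).aestronglyMeasurable.restrict
    · rw [hasFiniteIntegral_def]
      calc ∫⁻ x, (‖∫ y in Ω, h x y ∂(m x)‖₊ : ℝ≥0∞) ∂(ν.restrict Ω)
          ≤ ∫⁻ x in Ω, ∫⁻ y in Ω, (‖h x y‖₊ : ℝ≥0∞) ∂(m x) ∂ν :=
            lintegral_mono fun x => enorm_integral_le_lintegral_enorm _
        _ < ⊤ := hfin'
  have hIy : Integrable (fun x => ∫ y in Ω, D x y * w y ∂(m x)) (ν.restrict Ω) := by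
    refine houter _ (by exact hDmeas.mul (hwmeas.comp measurable_snd)) ?_
    have : ∀ x, ∫⁻ y in Ω, (‖D x y * w y‖₊ : ℝ≥0∞) ∂(m x) =
        ∫⁻ y in Ω, (‖D x y‖₊ : ℝ≥0∞) * (‖w y‖₊ : ℝ≥0∞) ∂(m x) := by
      intro x
      refine lintegral_congr fun y => ?_
      simp [nnnorm_mul]
    rw [lintegral_congr fun x => this x]
    exact hG2
  have hIx : Integrable (fun x => ∫ y in Ω, D x y * w x ∂(m x)) (ν.restrict Ω) := by
    refine houter _ (by exact hDmeas.mul (hwmeas.comp measurable_fst)) ?_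
    have : ∀ x, ∫⁻ y in Ω, (‖D x y * w x‖₊ : ℝ≥0∞) ∂(m x) =
        ∫⁻ y in Ω, (‖D x y‖₊ : ℝ≥0∞) * (‖w x‖₊ : ℝ≥0∞) ∂(m x) := by
      intro x
      refine lintegral_congr fun y => ?_
      simp [nnnorm_mul]
    rw [lintegral_congr fun x => this x]
    exact hG1
  -- the symmetrized quantity S
  have hSsplit : ∀ᵐ x ∂ν.restrict Ω, ∫ y in Ω, D x y * (w y - w x) ∂(m x) =
      (∫ y in Ω, D x y * w y ∂(m x)) - ∫ y in Ω, D x y * w x ∂(m x) := by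
    filter_upwards [hintDwy, hintDwx] with x hy hx
    rw [← integral_sub hy hx]
    refine integral_congr_ae (Filter.Eventually.of_forall fun y => ?_)
    ring
  have hSval : ∫ x in Ω, ∫ y in Ω, D x y * (w y - w x) ∂(m x) ∂ν = -(2 * P) := by
    rw [integral_congr_ae hSsplit, integral_sub hIy hIx]
    have hW := hTW
    rw [hPT]
    linarith [hTW]
  have hSnn : 0 ≤ ∫ x in Ω, ∫ y in Ω, D x y * (w y - w x) ∂(m x) ∂ν := by
    refine setIntegral_nonneg_of_ae_restrict ?_
    filter_upwards [ae_restrict_of_ae hmono] with x hx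
    refine setIntegral_nonneg_of_ae_restrict ?_
    filter_upwards [ae_restrict_of_ae hx] with y hy
    by_cases hwxy : w y = w x
    · simp [hwxy]
    · have hne : u₁' y - u₁' x ≠ u₂' y - u₂' x := by
        intro hcontra
        apply hwxy
        show u₁' y - u₂' y = u₁' x - u₂' x
        linarith
      have := hy (u₁' y - u₁' x) (u₂' y - u₂' x) hne
      have harr : (a x y (u₁' y - u₁' x) - a x y (u₂' y - u₂' x)) *
          ((u₁' y - u₁' x) - (u₂' y - u₂' x)) = D x y * (w y - w x) := by
        show _ = (a x y (u₁' y - u₁' x) - a x y (u₂' y - u₂' x)) *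
          ((u₁' y - u₂' y) - (u₁' x - u₂' x))
        ring
      rw [harr] at this
      exact this.le
  have hS0 : ∫ x in Ω, ∫ y in Ω, D x y * (w y - w x) ∂(m x) ∂ν = 0 := by
    have := hSval
    nlinarith [hSnn, hP0]
  -- extraction: the inner function vanishes a.e.
  have houter0 : ∀ᵐ x ∂ν.restrict Ω, ∫ y in Ω, D x y * (w y - w x) ∂(m x) = 0 := by
    have hFint : Integrable (fun x => ∫ y in Ω, D x y * (w y - w x) ∂(m x))
        (ν.restrict Ω) := (hIy.sub hIx).congr (hSsplit.mono fun x hx => hx.symm)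
    have hFnn : 0 ≤ᵐ[ν.restrict Ω]
        fun x => ∫ y in Ω, D x y * (w y - w x) ∂(m x) := by
      filter_upwards [ae_restrict_of_ae hmono] with x hx
      refine setIntegral_nonneg_of_ae_restrict ?_
      filter_upwards [ae_restrict_of_ae hx] with y hy
      by_cases hwxy : w y = w x
      · simp [hwxy]
      · have hne : u₁' y - u₁' x ≠ u₂' y - u₂' x := by
          intro hcontra
          apply hwxy
          show u₁' y - u₂' y = u₁' x - u₂' x
          linarith
        have := hy (u₁' y - u₁' x) (u₂' y - u₂' x) hne
        have harr : (a x y (u₁' y - u₁' x) - a x y (u₂' y - u₂' x)) *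
            ((u₁' y - u₁' x) - (u₂' y - u₂' x)) = D x y * (w y - w x) := by
          show _ = (a x y (u₁' y - u₁' x) - a x y (u₂' y - u₂' x)) *
            ((u₁' y - u₂' y) - (u₁' x - u₂' x))
          ring
        rw [harr] at this
        exact this.le
    exact (integral_eq_zero_iff_of_nonneg_ae hFnn hFint).mp hS0
  have hKEY : ∀ᵐ x ∂ν.restrict Ω, ∀ᵐ y ∂(m x).restrict Ω, w y = w x := by
    filter_upwards [houter0, hintDwy, hintDwx, ae_restrict_of_ae hmono] with x h0 hy hx hm
    have hint : Integrable (fun y => D x y * (w y - w x)) ((m x).restrict Ω) :=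
      (hy.sub hx).congr (Filter.Eventually.of_forall fun y => by simp only [Pi.sub_apply]; ring)
    have hnn : 0 ≤ᵐ[(m x).restrict Ω] fun y => D x y * (w y - w x) := by
      filter_upwards [ae_restrict_of_ae hm] with y hmy
      by_cases hwxy : w y = w x
      · simp [hwxy]
      · have hne : u₁' y - u₁' x ≠ u₂' y - u₂' x := by
          intro hcontra
          apply hwxy
          show u₁' y - u₂' y = u₁' x - u₂' x
          linarith
        have := hmy (u₁' y - u₁' x) (u₂' y - u₂' x) hne
        have harr : (a x y (u₁' y - u₁' x) - a x y (u₂' y - u₂' x)) *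
            ((u₁' y - u₁' x) - (u₂' y - u₂' x)) = D x y * (w y - w x) := by
          show _ = (a x y (u₁' y - u₁' x) - a x y (u₂' y - u₂' x)) *
            ((u₁' y - u₂' y) - (u₁' x - u₂' x))
          ring
        rw [harr] at this
        exact this.le
    have hzero := (integral_eq_zero_iff_of_nonneg_ae hnn hint).mp h0
    filter_upwards [hzero, ae_restrict_of_ae hm] with y hz hmy
    by_contra hwxy
    have hne : u₁' y - u₁' x ≠ u₂' y - u₂' x := by
      intro hcontra
      apply hwxy
      show u₁' y - u₂' y = u₁' x - u₂' x
      linarith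
    have hpos := hmy (u₁' y - u₁' x) (u₂' y - u₂' x) hne
    have harr : (a x y (u₁' y - u₁' x) - a x y (u₂' y - u₂' x)) *
        ((u₁' y - u₁' x) - (u₂' y - u₂' x)) = D x y * (w y - w x) := by
      show _ = (a x y (u₁' y - u₁' x) - a x y (u₂' y - u₂' x)) *
        ((u₁' y - u₂' y) - (u₁' x - u₂' x))
      ring
    rw [harr, hz] at hpos
    exact lt_irrefl 0 hpos
  -- dichotomy from m-connectedness
  have hdich : ∀ t : ℚ, ν {x | x ∈ Ω ∧ w x ≤ t} = 0 ∨ ν {x | x ∈ Ω ∧ (t : ℝ) < w x} = 0 := by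
    intro t
    by_contra hcon
    push_neg at hcon
    obtain ⟨hB, hA⟩ := hcon
    set Bt : Set X := {x | x ∈ Ω ∧ w x ≤ t} with hBtdef
    set At : Set X := {x | x ∈ Ω ∧ (t : ℝ) < w x} with hAtdef
    have hBtm : MeasurableSet Bt := hΩ.inter (measurableSet_le hwmeas measurable_const)
    have hAtm : MeasurableSet At := hΩ.inter (measurableSet_lt measurable_const hwmeas)
    have hBsub : Bt ⊆ Ω := fun x hx => hx.1
    have hAsub : At ⊆ Ω := fun x hx => hx.1
    have hunion : At ∪ Bt = Ω := by
      ext x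
      constructor
      · rintro (hx | hx) <;> exact hx.1
      · intro hx
        rcases le_or_gt (w x) t with h | h
        · exact Or.inr ⟨hx, h⟩
        · exact Or.inl ⟨hx, h⟩
    have hpos := hconn At Bt hAtm hBtm hAsub hBsub hA hB hunion
    have hzero : ∫⁻ x in At, m x Bt ∂ν = 0 := by
      have hae' : ∀ᵐ x ∂ν.restrict At, m x Bt = 0 := by
        have hsubKEY := ae_restrict_of_ae_restrict_of_subset hAsub hKEY
        filter_upwards [hsubKEY, ae_restrict_mem hAtm] with x hx hxA
        have hne : ((m x).restrict Ω) {y | ¬ w y = w x} = 0 := ae_iff.mp hx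
        have hmeasne : MeasurableSet {y | ¬ w y = w x} :=
          (measurableSet_eq_fun hwmeas measurable_const).compl
        rw [Measure.restrict_apply hmeasne] at hne
        refine measure_mono_null ?_ hne
        intro y hy
        refine ⟨?_, hy.1⟩
        have : w y ≤ t := hy.2
        have : w y < w x := lt_of_le_of_lt this hxA.2
        exact ne_of_lt this
      calc ∫⁻ x in At, m x Bt ∂ν = ∫⁻ _ in At, 0 ∂ν := lintegral_congr_ae hae'
        _ = 0 := lintegral_zero
    rw [hzero] at hpos
    exact lt_irrefl 0 hpos
  obtain ⟨c, hc⟩ := ae_const_of_dichotomy hdich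
  constructor
  · -- v₁ = v₂ a.e. on Ω
    have hAeq : ∀ᵐ x ∂ν, x ∈ Ω →
        ∫ y in Ω, A₁ x y ∂(m x) = ∫ y in Ω, A₂ x y ∂(m x) := by
      have := (ae_restrict_iff' hΩ).mp hKEY
      filter_upwards [this] with x hx hxΩ
      refine integral_congr_ae ?_
      filter_upwards [hx hxΩ] with y hy
      show a x y (u₁' y - u₁' x) = a x y (u₂' y - u₂' x)
      have : u₁' y - u₁' x = u₂' y - u₂' x := by
        have : u₁' y - u₂' y = u₁' x - u₂' x := hy
        linarith
      rw [this]
    filter_upwards [hsol₁', hsol₂', hAeq, hNae] with x h1x h2x hax hn hxΩ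
    have hx := hNout x hxΩ hn
    rw [hx.2.2.1, hx.2.2.2]
    have e1 := h1x hxΩ
    have e2 := h2x hxΩ
    rw [hax hxΩ] at e1
    linarith
  · -- u₁ - u₂ is a.e. constant on Ω
    refine ⟨c, ?_⟩
    filter_upwards [hc, hNae] with x hcx hn hxΩ
    have hx := hNout x hxΩ hn
    rw [hx.1, hx.2.1]
    exact hcx hxΩ
end

section
/- Almost-everywhere constancy from vanishing nonlocal gradients: Let [X,d,m] be a metric random walk space with reversible measure ν, A, B ⊂ X disjoint ν-measurable sets with B ⊂ ∂_m A, ν(A) > 0, A m-connected, ν(A∪B) < ∞, and ν({x ∈ A∪B : (m_x⌞A) ⊥ (ν⌞A)}) = 0. Let q ≥ 1 and let {u_n} ⊂ L^q(A∪B, ν) be bounded in L¹(A∪B,ν) with ∫_Q |u_n(y)−u_n(x)|^q dm_x(y)dν(x) → 0, where Q = ((A∪B)×(A∪B)) \ (B×B). Then there exists λ ∈ ℝ such that (along a subsequence) u_n(x) → λ for ν-a.e. x ∈ A∪B. -/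
open MeasureTheory Filter
open scoped ENNReal Topology

private lemma aux_tendsto_real {q : ℝ} (hq : 1 ≤ q) {d : ℕ → ℝ}
    (h : Tendsto (fun k => ENNReal.ofReal (|d k| ^ q)) atTop (𝓝 0)) :
    Tendsto d atTop (𝓝 0) := by
  have hq0 : 0 < q := lt_of_lt_of_le one_pos hq
  have h1 : Tendsto (fun k => |d k| ^ q) atTop (𝓝 0) := by
    have := (ENNReal.tendsto_toReal (by simp : (0:ℝ≥0∞) ≠ ⊤)).comp h
    simpa [Function.comp_def,
      ENNReal.toReal_ofReal (Real.rpow_nonneg (abs_nonneg _) q)] using this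
  have h2 : Tendsto (fun k => (|d k| ^ q) ^ q⁻¹) atTop (𝓝 0) := by
    have hc : ContinuousAt (fun s : ℝ => s ^ q⁻¹) 0 :=
      Real.continuousAt_rpow_const 0 q⁻¹ (Or.inr (by positivity))
    have := hc.tendsto.comp h1
    simpa [Function.comp_def, Real.zero_rpow (inv_ne_zero hq0.ne')] using this
  have h3 : Tendsto (fun k => |d k|) atTop (𝓝 0) := by
    have he : ∀ k, (|d k| ^ q) ^ q⁻¹ = |d k| := by
      intro k
      rw [← Real.rpow_mul (abs_nonneg _), mul_inv_cancel₀ hq0.ne', Real.rpow_one]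
    simpa [he] using h2
  exact (tendsto_zero_iff_abs_tendsto_zero d).2 h3


set_option maxHeartbeats 1000000 in
/-- Almost-everywhere constancy from vanishing nonlocal gradients: if `B ⊆ ∂_m A`, `A` is
`m`-connected with `ν(A) > 0`, `ν(A ∪ B) < ∞`, the singular set is ν-null, `{u_n}` is
bounded in `L¹(A∪B,ν)` and the nonlocal `q`-energy over
`Q = ((A∪B)×(A∪B)) \ (B×B) = (A×(A∪B)) ∪ (B×A)` tends to `0`, then along a subsequence
`u_n → λ` ν-a.e. in `A ∪ B` for some constant `λ ∈ ℝ`. -/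
theorem stmt16 {X : Type*} [MeasurableSpace X] (m : X → Measure X)
    (hprob : ∀ x, IsProbabilityMeasure (m x)) (hmeas : Measurable m)
    (ν : Measure X)
    (hrev : ∀ f : X → X → ℝ≥0∞, Measurable (Function.uncurry f) →
      ∫⁻ x, ∫⁻ y, f x y ∂(m x) ∂ν = ∫⁻ x, ∫⁻ y, f y x ∂(m x) ∂ν)
    (A B : Set X) (hA : MeasurableSet A) (hB : MeasurableSet B)
    (hdisj : Disjoint A B)
    (hBbd : B ⊆ {x : X | x ∉ A ∧ 0 < m x A})
    (hA0 : 0 < ν A) (hABfin : ν (A ∪ B) < ⊤)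
    (hconnA : ∀ E F : Set X, MeasurableSet E → MeasurableSet F → E ⊆ A → F ⊆ A →
      ν E ≠ 0 → ν F ≠ 0 → E ∪ F = A → 0 < ∫⁻ x in E, m x F ∂ν)
    (hsing : ν {x : X | x ∈ A ∪ B ∧
      Measure.MutuallySingular ((m x).restrict A) (ν.restrict A)} = 0)
    (q : ℝ) (hq : 1 ≤ q)
    (u : ℕ → X → ℝ)
    (huLq : ∀ n, MemLp (u n) (ENNReal.ofReal q) (ν.restrict (A ∪ B)))
    (hbound : ∃ M : ℝ, ∀ n, ∫ x in A ∪ B, |u n x| ∂ν ≤ M)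
    (henergy : Tendsto (fun n =>
        (∫⁻ x in A, ∫⁻ y in A ∪ B, ENNReal.ofReal (|u n y - u n x| ^ q) ∂(m x) ∂ν) +
        (∫⁻ x in B, ∫⁻ y in A, ENNReal.ofReal (|u n y - u n x| ^ q) ∂(m x) ∂ν))
      atTop (𝓝 0)) :
    ∃ (lam : ℝ) (φ : ℕ → ℕ), StrictMono φ ∧
      ∀ᵐ x ∂ν, x ∈ A ∪ B →
        Tendsto (fun n => u (φ n) x) atTop (𝓝 lam) := by
  classical
  have hq0 : 0 < q := lt_of_lt_of_le one_pos hq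
  have hABmeas : MeasurableSet (A ∪ B) := hA.union hB
  set μAB := ν.restrict (A ∪ B) with hμABdef
  haveI : IsFiniteMeasure μAB := ⟨by rwa [hμABdef, Measure.restrict_apply_univ]⟩
  have hAfin : ν A < ⊤ := lt_of_le_of_lt (measure_mono Set.subset_union_left) hABfin
  -- measurable representatives
  set w : ℕ → X → ℝ := fun n => (huLq n).aestronglyMeasurable.mk (u n) with hwdef
  have hwmeas : ∀ n, Measurable (w n) :=
    fun n => (huLq n).aestronglyMeasurable.stronglyMeasurable_mk.measurable
  have hw_ae : ∀ n, u n =ᵐ[μAB] w n := fun n => (huLq n).aestronglyMeasurable.ae_eq_mk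
  -- null set where u and w differ
  set N0 : Set X := (A ∪ B) ∩ ⋃ n, {x | u n x ≠ w n x} with hN0def
  have hN0 : μAB N0 = 0 := by
    refine measure_mono_null Set.inter_subset_right (measure_iUnion_null fun n => ?_)
    exact ae_iff.1 (hw_ae n)
  set N' : Set X := toMeasurable μAB N0 ∩ (A ∪ B) with hN'def
  have hN'meas : MeasurableSet N' := (measurableSet_toMeasurable _ _).inter hABmeas
  have hN'null : ν N' = 0 := by
    have : μAB (toMeasurable μAB N0) = 0 := by rw [measure_toMeasurable]; exact hN0
    rwa [hμABdef, Measure.restrict_apply' hABmeas] at this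
  have hN0N' : N0 ⊆ N' :=
    Set.subset_inter (subset_toMeasurable _ _) Set.inter_subset_left
  have huw : ∀ x, x ∈ (A ∪ B) \ N' → ∀ n, u n x = w n x := by
    intro x hx n
    by_contra hne
    exact hx.2 (hN0N' ⟨hx.1, Set.mem_iUnion.2 ⟨n, hne⟩⟩)
  -- invariance of ν
  have hinv : ∀ s : Set X, MeasurableSet s → ∫⁻ x, m x s ∂ν = ν s := by
    intro s hs
    have h := hrev (fun x _ => s.indicator 1 x)
      ((measurable_one.indicator hs).comp measurable_fst)
    have h1 : ∀ x : X, ∫⁻ y, s.indicator (1 : X → ℝ≥0∞) x ∂(m x) = s.indicator 1 x := by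
      intro x
      rw [lintegral_const, (hprob x).measure_univ, mul_one]
    have h2 : ∀ x : X, ∫⁻ y, s.indicator (1 : X → ℝ≥0∞) y ∂(m x) = m x s := by
      intro x; exact lintegral_indicator_one hs
    simp only [h1, h2] at h
    rw [← h, lintegral_indicator_one hs]
  have hmN' : ∀ᵐ x ∂ν, m x N' = 0 := by
    have h0 : ∫⁻ x, m x N' ∂ν = 0 := by rw [hinv N' hN'meas, hN'null]
    have hmeasN : Measurable fun x => m x N' :=
      (Measure.measurable_coe hN'meas).comp hmeas
    exact (lintegral_eq_zero_iff hmeasN).1 h0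
  -- energies with w
  set e : ℕ → X → X → ℝ≥0∞ :=
    fun n x y => ENNReal.ofReal (|w n y - w n x| ^ q) with hedef
  have hemeas : ∀ n, Measurable (Function.uncurry (e n)) := by
    intro n
    apply ENNReal.measurable_ofReal.comp
    exact (Real.continuous_rpow_const hq0.le).measurable.comp
      (((hwmeas n).comp measurable_snd).sub ((hwmeas n).comp measurable_fst)).abs
  set Ew : ℕ → ℝ≥0∞ := fun n =>
    (∫⁻ x in A, ∫⁻ y in A ∪ B, e n x y ∂(m x) ∂ν) +
    (∫⁻ x in B, ∫⁻ y in A, e n x y ∂(m x) ∂ν) with hEwdef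
  have henergy' : Tendsto Ew atTop (𝓝 0) := by
    refine henergy.congr fun n => ?_
    have hae : ∀ᵐ x ∂ν, m x N' = 0 ∧ x ∉ N' := by
      filter_upwards [hmN', measure_eq_zero_iff_ae_notMem.1 hN'null] with x h1 h2
      exact ⟨h1, h2⟩
    have hinner : ∀ x, x ∈ A ∪ B → m x N' = 0 → x ∉ N' → ∀ (s : Set X),
        MeasurableSet s → s ⊆ A ∪ B →
        ∫⁻ y in s, ENNReal.ofReal (|u n y - u n x| ^ q) ∂(m x) = ∫⁻ y in s, e n x y ∂(m x) := by
      intro x hxAB hmx hxN s hs hsAB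
      refine lintegral_congr_ae ?_
      have hy : ∀ᵐ y ∂((m x).restrict s), y ∉ N' := by
        refine measure_eq_zero_iff_ae_notMem.1 ?_
        exact le_antisymm (le_trans (Measure.restrict_le_self _) hmx.le) zero_le
      filter_upwards [hy, ae_restrict_mem hs] with y hyN hys
      rw [huw y ⟨hsAB hys, hyN⟩ n, huw x ⟨hxAB, hxN⟩ n]
    have hae' : ∀ᵐ x ∂ν, m x N' = 0 ∧ x ∉ N' := hae
    have h1 : (∫⁻ x in A, ∫⁻ y in A ∪ B,
        ENNReal.ofReal (|u n y - u n x| ^ q) ∂(m x) ∂ν)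
        = ∫⁻ x in A, ∫⁻ y in A ∪ B, e n x y ∂(m x) ∂ν := by
      refine lintegral_congr_ae ?_
      filter_upwards [ae_restrict_of_ae hae', ae_restrict_mem hA] with x hx hxA
      exact hinner x (Or.inl hxA) hx.1 hx.2 (A ∪ B) hABmeas subset_rfl
    have h2 : (∫⁻ x in B, ∫⁻ y in A,
        ENNReal.ofReal (|u n y - u n x| ^ q) ∂(m x) ∂ν)
        = ∫⁻ x in B, ∫⁻ y in A, e n x y ∂(m x) ∂ν := by
      refine lintegral_congr_ae ?_
      filter_upwards [ae_restrict_of_ae hae', ae_restrict_mem hB] with x hx hxB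
      exact hinner x (Or.inr hxB) hx.1 hx.2 A hA Set.subset_union_left
    rw [h1, h2]
  -- extraction of a subsequence with summable energy
  obtain ⟨ψ, hψmono, hψ⟩ := extraction_forall_of_eventually
    (P := fun k n => Ew n < (2⁻¹ : ℝ≥0∞) ^ k)
    (fun k => henergy'.eventually_lt_const
      (ENNReal.pow_pos (ENNReal.inv_pos.2 (by norm_num)) k))
  -- the kernel
  set κ : ProbabilityTheory.Kernel X X := ⟨m, hmeas⟩ with hκdef
  haveI : ProbabilityTheory.IsMarkovKernel κ := ⟨hprob⟩
  have hκapp : ∀ x, κ x = m x := fun _ => rfl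
  set E1 : ℕ → X → ℝ≥0∞ := fun n x => ∫⁻ y in A, e n x y ∂(m x) with hE1def
  have hE1meas : ∀ n, Measurable (E1 n) := by
    intro n
    have := (Measurable.setLIntegral_kernel_prod_right (κ := κ) (hemeas n) hA)
    simpa [hκapp] using this
  have hE1sum : ∀ n, ∫⁻ x in A ∪ B, E1 n x ∂ν ≤ Ew n := by
    intro n
    rw [lintegral_union hB hdisj]
    refine add_le_add (lintegral_mono fun x => ?_) le_rfl
    exact lintegral_mono' (Measure.restrict_mono Set.subset_union_left le_rfl) le_rfl
  set g : X → ℝ≥0∞ := fun x => ∑' k, E1 (ψ k) x with hgdef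
  have hgmeas : Measurable g := Measurable.ennreal_tsum fun k => hE1meas (ψ k)
  have hgint : ∫⁻ x, g x ∂μAB ≠ ⊤ := by
    have h1 : ∫⁻ x, g x ∂μAB = ∑' k, ∫⁻ x, E1 (ψ k) x ∂μAB :=
      lintegral_tsum fun k => (hE1meas (ψ k)).aemeasurable
    have h2 : ∑' k, ∫⁻ x, E1 (ψ k) x ∂μAB ≤ ∑' k : ℕ, (2⁻¹ : ℝ≥0∞) ^ k := by
      refine ENNReal.tsum_le_tsum fun k => ?_
      exact le_trans (hE1sum (ψ k)) (hψ k).le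
    rw [h1]
    refine ne_top_of_le_ne_top ?_ h2
    rw [ENNReal.tsum_geometric, ENNReal.one_sub_inv_two]
    simp
  have hgfin : ∀ᵐ x ∂μAB, g x < ⊤ := ae_lt_top hgmeas hgint
  -- pointwise difference convergence
  have hP : ∀ᵐ x ∂μAB, ∀ᵐ y ∂((m x).restrict A),
      Tendsto (fun k => w (ψ k) y - w (ψ k) x) atTop (𝓝 0) := by
    filter_upwards [hgfin] with x hx
    have hyint : ∫⁻ y in A, ∑' k, e (ψ k) x y ∂(m x) ≠ ⊤ := by
      have hts := lintegral_tsum (μ := (m x).restrict A)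
        (f := fun k y => e (ψ k) x y)
        (fun k => ((hemeas (ψ k)).comp measurable_prodMk_left).aemeasurable)
      rw [hts]
      exact hx.ne
    have hymeas : Measurable fun y => ∑' k, e (ψ k) x y :=
      Measurable.ennreal_tsum fun k => (hemeas (ψ k)).comp measurable_prodMk_left
    filter_upwards [ae_lt_top hymeas hyint] with y hy
    have hterm : Tendsto (fun k => e (ψ k) x y) atTop (𝓝 0) :=
      ENNReal.tendsto_atTop_zero_of_tsum_ne_top hy.ne
    exact aux_tendsto_real hq hterm
  -- non-singularity a.e.
  have hsingae : ∀ᵐ x ∂μAB,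
      ¬ Measure.MutuallySingular ((m x).restrict A) (ν.restrict A) := by
    have h0 : μAB {x : X |
        Measure.MutuallySingular ((m x).restrict A) (ν.restrict A)} = 0 := by
      rw [hμABdef, Measure.restrict_apply' hABmeas]
      refine measure_mono_null ?_ hsing
      intro x hx
      exact ⟨hx.2, hx.1⟩
    exact measure_eq_zero_iff_ae_notMem.1 h0
  -- pick a good point x₀ in A
  have hgood : ∃ x₀, x₀ ∈ A ∧
      (∀ᵐ y ∂((m x₀).restrict A),
        Tendsto (fun k => w (ψ k) y - w (ψ k) x₀) atTop (𝓝 0)) ∧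
      ¬ Measure.MutuallySingular ((m x₀).restrict A) (ν.restrict A) := by
    by_contra hno
    push_neg at hno
    have hZ : μAB {x : X | ¬ ((∀ᵐ y ∂((m x).restrict A),
        Tendsto (fun k => w (ψ k) y - w (ψ k) x) atTop (𝓝 0)) ∧
        ¬ Measure.MutuallySingular ((m x).restrict A) (ν.restrict A))} = 0 :=
      ae_iff.1 (hP.and hsingae)
    have hsub : A ⊆ {x : X | ¬ ((∀ᵐ y ∂((m x).restrict A),
        Tendsto (fun k => w (ψ k) y - w (ψ k) x) atTop (𝓝 0)) ∧
        ¬ Measure.MutuallySingular ((m x).restrict A) (ν.restrict A))} := by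
      intro x hxA hxZ
      exact hxZ.2 (hno x hxA hxZ.1)
    have hle : ν A ≤ μAB {x : X | ¬ ((∀ᵐ y ∂((m x).restrict A),
        Tendsto (fun k => w (ψ k) y - w (ψ k) x) atTop (𝓝 0)) ∧
        ¬ Measure.MutuallySingular ((m x).restrict A) (ν.restrict A))} := by
      rw [hμABdef, Measure.restrict_apply' hABmeas]
      exact measure_mono (Set.subset_inter hsub Set.subset_union_left)
    rw [hZ] at hle
    exact hA0.ne' (le_antisymm hle zero_le)
  obtain ⟨x₀, hx₀A, hPx₀, hSx₀⟩ := hgood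
  set a : ℕ → ℝ := fun k => w (ψ k) x₀ with hadef
  set G : Set X := {x | Tendsto (fun k => w (ψ k) x - a k) atTop (𝓝 0)} with hGdef
  have hGmeas : MeasurableSet G :=
    measurableSet_tendsto (𝓝 0) (fun k => (hwmeas (ψ k)).sub measurable_const)
  -- ν (A ∩ G) ≠ 0
  have hAGpos : ν (A ∩ G) ≠ 0 := by
    intro h0
    apply hSx₀
    refine ⟨Gᶜ, hGmeas.compl, ?_, ?_⟩
    · have h1 := ae_iff.1 hPx₀
      have hseteq : Gᶜ = {y | ¬ Tendsto (fun k => w (ψ k) y - w (ψ k) x₀) atTop (𝓝 0)} := by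
        ext y
        simp only [hGdef, Set.mem_compl_iff, Set.mem_setOf_eq, hadef]
      rw [hseteq]
      exact h1
    · rw [compl_compl, Measure.restrict_apply hGmeas, Set.inter_comm]
      exact h0
  -- ν (A \ G) = 0 by m-connectedness
  have hAG : ν (A \ G) = 0 := by
    by_contra hF
    have hpos := hconnA (A ∩ G) (A \ G) (hA.inter hGmeas) (hA.diff hGmeas)
      Set.inter_subset_left Set.diff_subset hAGpos hF (Set.inter_union_diff A G)
    have hae0 : ∀ᵐ x ∂(ν.restrict (A ∩ G)), m x (A \ G) = 0 := by
      have hPA : ∀ᵐ x ∂(ν.restrict (A ∩ G)), ∀ᵐ y ∂((m x).restrict A),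
          Tendsto (fun k => w (ψ k) y - w (ψ k) x) atTop (𝓝 0) :=
        ae_restrict_of_ae_restrict_of_subset
          (Set.inter_subset_left.trans Set.subset_union_left) hP
      filter_upwards [hPA, ae_restrict_mem (hA.inter hGmeas)] with x hPx hxm
      have hxG : Tendsto (fun k => w (ψ k) x - a k) atTop (𝓝 0) := hxm.2
      have hsub : Gᶜ ⊆ {y | ¬ Tendsto (fun k => w (ψ k) y - w (ψ k) x) atTop (𝓝 0)} := by
        intro y hy
        simp only [Set.mem_setOf_eq]
        intro hQ
        apply hy
        show Tendsto (fun k => w (ψ k) y - a k) atTop (𝓝 0)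
        have h := hQ.add hxG
        rw [add_zero] at h
        exact h.congr fun k => by ring
      have h2 : (m x).restrict A Gᶜ = 0 :=
        measure_mono_null hsub (ae_iff.1 hPx)
      have h3 : m x (A \ G) = (m x).restrict A Gᶜ := by
        rw [Measure.restrict_apply hGmeas.compl, Set.diff_eq, Set.inter_comm]
      rw [h3, h2]
    have hzero : ∫⁻ x in A ∩ G, m x (A \ G) ∂ν = 0 := by
      have heq : (fun x => m x (A \ G)) =ᵐ[ν.restrict (A ∩ G)] 0 := hae0
      rw [lintegral_congr_ae heq]
      simp
    exact absurd hzero hpos.ne'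
  -- ν (B \ G) = 0 by non-singularity
  have hBG : ν (B \ G) = 0 := by
    have haeB : ∀ᵐ x ∂(ν.restrict B), x ∈ G := by
      have hPB : ∀ᵐ x ∂(ν.restrict B), ∀ᵐ y ∂((m x).restrict A),
          Tendsto (fun k => w (ψ k) y - w (ψ k) x) atTop (𝓝 0) :=
        ae_restrict_of_ae_restrict_of_subset Set.subset_union_right hP
      have hSB : ∀ᵐ x ∂(ν.restrict B),
          ¬ Measure.MutuallySingular ((m x).restrict A) (ν.restrict A) :=
        ae_restrict_of_ae_restrict_of_subset Set.subset_union_right hsingae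
      filter_upwards [hPB, hSB] with x hPx hSx
      have hmxG : m x (G ∩ A) ≠ 0 := by
        intro h0
        apply hSx
        refine ⟨G, hGmeas, ?_, ?_⟩
        · rw [Measure.restrict_apply hGmeas]
          exact h0
        · rw [Measure.restrict_apply hGmeas.compl]
          have hseteq : Gᶜ ∩ A = A \ G := by rw [Set.diff_eq, Set.inter_comm]
          rw [hseteq]
          exact hAG
      have hbad : m x ({y | ¬ Tendsto (fun k => w (ψ k) y - w (ψ k) x) atTop (𝓝 0)} ∩ A) = 0 := by
        have h := ae_iff.1 hPx
        rwa [Measure.restrict_apply' hA] at h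
      have hne : m x ((G ∩ A) \
          ({y | ¬ Tendsto (fun k => w (ψ k) y - w (ψ k) x) atTop (𝓝 0)} ∩ A)) ≠ 0 := by
        intro h0
        apply hmxG
        refine le_antisymm ?_ zero_le
        calc m x (G ∩ A)
            ≤ m x (((G ∩ A) \
              ({y | ¬ Tendsto (fun k => w (ψ k) y - w (ψ k) x) atTop (𝓝 0)} ∩ A)) ∪
              ({y | ¬ Tendsto (fun k => w (ψ k) y - w (ψ k) x) atTop (𝓝 0)} ∩ A)) :=
              measure_mono (Set.subset_diff_union _ _)
          _ ≤ _ + _ := measure_union_le _ _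
          _ = 0 := by rw [h0, hbad, add_zero]
      obtain ⟨y, hy⟩ := nonempty_of_measure_ne_zero hne
      have hyG : Tendsto (fun k => w (ψ k) y - a k) atTop (𝓝 0) := hy.1.1
      have hyQ : Tendsto (fun k => w (ψ k) y - w (ψ k) x) atTop (𝓝 0) := by
        by_contra hnq
        exact hy.2 ⟨hnq, hy.1.2⟩
      show Tendsto (fun k => w (ψ k) x - a k) atTop (𝓝 0)
      have h := hyG.sub hyQ
      rw [sub_zero] at h
      exact h.congr fun k => by ring
    have h0 := ae_iff.1 haeB
    rw [Measure.restrict_apply' hB] at h0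
    refine measure_mono_null ?_ h0
    intro x hx
    exact ⟨hx.2, hx.1⟩
  -- boundedness of (a k) for large k
  obtain ⟨M, hM⟩ := hbound
  have hq1 : (1 : ℝ≥0∞) ≤ ENNReal.ofReal q := ENNReal.one_le_ofReal.2 hq
  have hInt : ∀ n, Integrable (w n) μAB := fun n =>
    (memLp_one_iff_integrable.1 ((huLq n).mono_exponent hq1)).congr (hw_ae n)
  have hMw : ∀ n, ∫ x, |w n x| ∂μAB ≤ M := by
    intro n
    have h : ∫ x, |u n x| ∂μAB = ∫ x, |w n x| ∂μAB :=
      integral_congr_ae ((hw_ae n).mono fun x hx => by simp [hx])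
    rw [← h]
    exact hM n
  have hfg : ∀ᵐ x ∂ν, x ∈ A → Tendsto (fun k => w (ψ k) x - a k) atTop (𝓝 0) := by
    rw [ae_iff]
    refine measure_mono_null ?_ hAG
    intro x hx
    simp only [Set.mem_setOf_eq, Classical.not_imp] at hx
    exact ⟨hx.1, hx.2⟩
  set ε : ℝ := (ν A).toReal / 2 with hεdef
  have htRpos : 0 < (ν A).toReal := ENNReal.toReal_pos hA0.ne' hAfin.ne
  have hεpos : 0 < ε := by positivity
  obtain ⟨t, htsub, htmeas, htμ, hunif⟩ :=
    tendstoUniformlyOn_of_ae_tendsto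
      (f := fun k x => w (ψ k) x - a k) (g := fun _ => (0:ℝ)) (μ := ν)
      (fun k => ((hwmeas (ψ k)).sub measurable_const).stronglyMeasurable)
      stronglyMeasurable_const hA hAfin.ne hfg hεpos
  have hνt : ν (A \ t) ≠ 0 := by
    intro h0
    have h1 : ν A ≤ ν t + ν (A \ t) := by
      calc ν A ≤ ν (t ∪ (A \ t)) := by
            refine measure_mono fun x hx => ?_
            by_cases h : x ∈ t
            exacts [Or.inl h, Or.inr ⟨hx, h⟩]
        _ ≤ ν t + ν (A \ t) := measure_union_le _ _
    rw [h0, add_zero] at h1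
    have h2 : ENNReal.ofReal ε < ν A := by
      rw [ENNReal.ofReal_lt_iff_lt_toReal hεpos.le hAfin.ne]
      exact half_lt_self htRpos
    exact absurd (le_trans h1 htμ) (not_le.2 h2)
  have hνtfin : ν (A \ t) ≠ ⊤ := (lt_of_le_of_lt (measure_mono Set.diff_subset) hAfin).ne
  set c : ℝ := (ν (A \ t)).toReal with hcdef
  have hcpos : 0 < c := ENNReal.toReal_pos hνt hνtfin
  rw [Metric.tendstoUniformlyOn_iff] at hunif
  obtain ⟨K, hK⟩ := eventually_atTop.1 (hunif 1 one_pos)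
  have hintconst : ∀ r : ℝ, IntegrableOn (fun _ : X => r) (A \ t) ν :=
    fun r => integrableOn_const (lt_of_le_of_lt (measure_mono Set.diff_subset) hAfin).ne
  have hintw : ∀ n, IntegrableOn (fun x => |w n x|) (A \ t) ν := by
    intro n
    exact MeasureTheory.IntegrableOn.mono_set
      (show IntegrableOn (fun x => |w n x|) (A ∪ B) ν from (hInt n).abs)
      (Set.diff_subset.trans Set.subset_union_left)
  have hak : ∀ k, K ≤ k → |a k| ≤ (c + M) / c := by
    intro k hk
    have h1 : ∀ x ∈ A \ t, |a k| ≤ 1 + |w (ψ k) x| := by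
      intro x hx
      have hd := hK k hk x hx
      rw [Real.dist_eq, zero_sub, abs_neg] at hd
      have habs : |a k| ≤ |w (ψ k) x| + |w (ψ k) x - a k| := by
        have h := abs_add_le (w (ψ k) x - a k) (-(w (ψ k) x))
        have he : (w (ψ k) x - a k) + -(w (ψ k) x) = -(a k) := by ring
        rw [he, abs_neg, abs_neg] at h
        linarith [h]
      linarith [habs, hd.le]
    have hint2 : IntegrableOn (fun x => 1 + |w (ψ k) x|) (A \ t) ν :=
      (hintconst 1).add (hintw (ψ k))
    have hmono := setIntegral_mono_on (hintconst |a k|) hint2 (hA.diff htmeas) h1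
    rw [setIntegral_const] at hmono
    have hsplit : ∫ x in A \ t, (1 + |w (ψ k) x|) ∂ν
        = c + ∫ x in A \ t, |w (ψ k) x| ∂ν := by
      rw [integral_add (hintconst 1) (hintw (ψ k)), setIntegral_const]
      simp [hcdef, Measure.real]
    have hw2 : ∫ x in A \ t, |w (ψ k) x| ∂ν ≤ M := by
      refine le_trans (setIntegral_mono_set ((hInt (ψ k)).abs) ?_ ?_) (hMw (ψ k))
      · exact ae_of_all _ fun x => abs_nonneg _
      · exact HasSubset.Subset.eventuallyLE (Set.diff_subset.trans Set.subset_union_left)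
    have hfinal : c * |a k| ≤ c + M := by
      have : ν.real (A \ t) • |a k| = c * |a k| := by rw [smul_eq_mul, hcdef]; rfl
      rw [this] at hmono
      linarith [hmono, hsplit, hw2]
    rw [le_div_iff₀ hcpos]
    linarith [hfinal]
  set C : ℝ := (c + M) / c with hCdef
  have hmem : ∀ j : ℕ, a (j + K) ∈ Set.Icc (-C) C := by
    intro j
    have h := hak (j + K) le_add_self
    exact Set.mem_Icc.2 (abs_le.1 h)
  obtain ⟨l, -, φ, hφmono, hφtend⟩ :=
    tendsto_subseq_of_bounded (Metric.isBounded_Icc (-C) C) hmem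
  refine ⟨l, fun n => ψ (φ n + K), hψmono.comp (hφmono.add_const K), ?_⟩
  have hbadnull : ν ((A \ G) ∪ ((B \ G) ∪ N')) = 0 :=
    measure_union_null hAG (measure_union_null hBG hN'null)
  rw [ae_iff]
  refine measure_mono_null ?_ hbadnull
  intro x hx
  simp only [Set.mem_setOf_eq, Classical.not_imp] at hx
  by_contra hxmem
  simp only [Set.mem_union, not_or] at hxmem
  have hxAB : x ∈ A ∪ B := hx.1
  have hxG : x ∈ G := by
    rcases hxAB with h | h
    · by_contra hg; exact hxmem.1 ⟨h, hg⟩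
    · by_contra hg; exact hxmem.2.1 ⟨h, hg⟩
  have hxN : x ∉ N' := hxmem.2.2
  apply hx.2
  have hux : ∀ n, u n x = w n x := huw x ⟨hxAB, hxN⟩
  have hidx : Tendsto (fun n => φ n + K) atTop atTop :=
    (tendsto_add_atTop_nat K).comp hφmono.tendsto_atTop
  have h1 : Tendsto (fun n => w (ψ (φ n + K)) x - a (φ n + K)) atTop (𝓝 0) :=
    (show Tendsto (fun k => w (ψ k) x - a k) atTop (𝓝 0) from hxG).comp hidx
  have h2 : Tendsto (fun n => a (φ n + K)) atTop (𝓝 l) := hφtend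
  have h3 := h1.add h2
  rw [zero_add] at h3
  refine h3.congr fun n => ?_
  rw [sub_add_cancel]
  exact (hux (ψ (φ n + K))).symm
end
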